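/- arXiv:2205.14466 — 2 statements merged into one kernel-verified Lean document; each statement's English description precedes it below -/
import Mathlib

section
/- Let ℋ be a finite family of connected finite simple graphs. Then ℋ satisfies (P-insc) if and only if there exists an integer n ≥ 4 such that ℋ ≤ {K_n, S*_n, P_n}. -/
open SimpleGraph

/-- `G` contains an induced subgraph isomorphic to `H`. -/
def HasInducedCopy {V W : Type*} (G : SimpleGraph V) (H : SimpleGraph W) : Prop :=
  ∃ f : W ↪ V, ∀ a b : W, G.Adj (f a) (f b) ↔ H.Adj a b

/-- The star `K_{1,m}` (one center plus `m` leaves). -/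
def starGraph (m : ℕ) : SimpleGraph (Unit ⊕ Fin m) := completeBipartiteGraph Unit (Fin m)

/-- `S` induces in `G` a subgraph isomorphic to a path `P_m` on `m ≥ 1` vertices. -/
def IsInducedPathSet {V : Type*} (G : SimpleGraph V) (S : Set V) : Prop :=
  ∃ m : ℕ, 1 ≤ m ∧ Nonempty ((G.induce S) ≃g pathGraph m)

/-- `S` induces in `G` a subgraph isomorphic to a star `K_{1,m}` with `m ≥ 1`. -/
def IsInducedStarSet {V : Type*} (G : SimpleGraph V) (S : Set V) : Prop :=
  ∃ m : ℕ, 1 ≤ m ∧ Nonempty ((G.induce S) ≃g _root_.starGraph m)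

/-- `S` consists of a single vertex (i.e. induces `K_1`). -/
def IsSingletonSet {V : Type*} (S : Set V) : Prop := ∃ v, S = {v}

/-- `S` is the vertex set of an isometric (shortest) path of `G`. -/
def IsIsometricPathSet {V : Type*} (G : SimpleGraph V) (S : Set V) : Prop :=
  ∃ (u v : V) (p : G.Walk u v), p.IsPath ∧ p.length = G.dist u v ∧
    S = {x | x ∈ p.support}

/-- `P` is a family of sets, all satisfying `pred`, whose union is all of `V`. -/
def IsCoverBy {V : Type*} (P : Finset (Set V)) (pred : Set V → Prop) : Prop :=
  (∀ S ∈ P, pred S) ∧ ∀ v : V, ∃ S ∈ P, v ∈ S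

/-- `P` is a cover by sets satisfying `pred`, whose members are pairwise disjoint. -/
def IsPartitionBy {V : Type*} (P : Finset (Set V)) (pred : Set V → Prop) : Prop :=
  IsCoverBy P pred ∧ ∀ S ∈ P, ∀ T ∈ P, S ≠ T → ∀ v, v ∈ S → v ∉ T

/-- Minimum cardinality of a cover by sets satisfying `pred`. -/
noncomputable def coverNumber {V : Type*} (pred : Set V → Prop) : ℕ :=
  sInf {k | ∃ P : Finset (Set V), P.card = k ∧ IsCoverBy P pred}

/-- Minimum cardinality of a partition into sets satisfying `pred`. -/
noncomputable def partitionNumber {V : Type*} (pred : Set V → Prop) : ℕ :=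
  sInf {k | ∃ P : Finset (Set V), P.card = k ∧ IsPartitionBy P pred}

/-- The induced SP-cover number. -/
noncomputable def inspc {V : Type*} (G : SimpleGraph V) : ℕ :=
  coverNumber (fun S => IsInducedStarSet G S ∨ IsInducedPathSet G S)

/-- The induced SP-partition number. -/
noncomputable def inspp {V : Type*} (G : SimpleGraph V) : ℕ :=
  partitionNumber (fun S => IsInducedStarSet G S ∨ IsInducedPathSet G S)

/-- The induced star cover number. -/
noncomputable def insc {V : Type*} (G : SimpleGraph V) : ℕ :=
  coverNumber (fun S => IsInducedStarSet G S ∨ IsSingletonSet S)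

/-- The induced star partition number. -/
noncomputable def insp {V : Type*} (G : SimpleGraph V) : ℕ :=
  partitionNumber (fun S => IsInducedStarSet G S ∨ IsSingletonSet S)

/-- The induced path cover number. -/
noncomputable def inpc {V : Type*} (G : SimpleGraph V) : ℕ :=
  coverNumber (fun S => IsInducedPathSet G S)

/-- The induced path partition number. -/
noncomputable def inpp {V : Type*} (G : SimpleGraph V) : ℕ :=
  partitionNumber (fun S => IsInducedPathSet G S)

/-- The isometric path cover number. -/
noncomputable def ispc {V : Type*} (G : SimpleGraph V) : ℕ :=
  coverNumber (fun S => IsIsometricPathSet G S)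

/-- The isometric path partition number. -/
noncomputable def ispp {V : Type*} (G : SimpleGraph V) : ℕ :=
  partitionNumber (fun S => IsIsometricPathSet G S)

/-- `S*_n` : center `x = inl ()`, middle vertices `y i = inr (inl i)`,
leaves `z i = inr (inr i)`; edges `x yᵢ` and `yᵢ zᵢ`. -/
def SStar (n : ℕ) : SimpleGraph (Unit ⊕ Fin n ⊕ Fin n) :=
  SimpleGraph.fromRel (fun a b =>
    (∃ i : Fin n, a = Sum.inl () ∧ b = Sum.inr (Sum.inl i)) ∨
    (∃ i : Fin n, a = Sum.inr (Sum.inl i) ∧ b = Sum.inr (Sum.inr i)))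

/-- `S̃_n` : `S*_n` together with the edges `x zᵢ`. -/
def STilde (n : ℕ) : SimpleGraph (Unit ⊕ Fin n ⊕ Fin n) :=
  SimpleGraph.fromRel (fun a b =>
    (∃ i : Fin n, a = Sum.inl () ∧ b = Sum.inr (Sum.inl i)) ∨
    (∃ i : Fin n, a = Sum.inr (Sum.inl i) ∧ b = Sum.inr (Sum.inr i)) ∨
    (∃ i : Fin n, a = Sum.inl () ∧ b = Sum.inr (Sum.inr i)))

/-- `F⁽¹⁾_n` : vertices `x₁ = inl 0`, `x₂ = inl 1`, `yᵢ = inr (inl i)`, `zᵢ = inr (inr i)`;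
edges `x₁x₂`, `x₁y₁`, `x₁z₁`, and two paths `y₁⋯yₙ`, `z₁⋯zₙ`. -/
def F1 (n : ℕ) : SimpleGraph (Fin 2 ⊕ Fin n ⊕ Fin n) :=
  SimpleGraph.fromRel (fun a b =>
    (a = Sum.inl 0 ∧ b = Sum.inl 1) ∨
    (∃ j : Fin n, (j : ℕ) = 0 ∧ a = Sum.inl 0 ∧ b = Sum.inr (Sum.inl j)) ∨
    (∃ j : Fin n, (j : ℕ) = 0 ∧ a = Sum.inl 0 ∧ b = Sum.inr (Sum.inr j)) ∨
    (∃ i j : Fin n, (i : ℕ) + 1 = (j : ℕ) ∧ a = Sum.inr (Sum.inl i) ∧ b = Sum.inr (Sum.inl j)) ∨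
    (∃ i j : Fin n, (i : ℕ) + 1 = (j : ℕ) ∧ a = Sum.inr (Sum.inr i) ∧ b = Sum.inr (Sum.inr j)))

/-- `F⁽²⁾_n` : vertex `x₁ = inl ()`, `yᵢ = inr (inl i)`, `zᵢ = inr (inr i)`;
edges `x₁y₁`, `x₁z₁`, `y₁z₁`, and two paths `y₁⋯yₙ`, `z₁⋯zₙ`. -/
def F2 (n : ℕ) : SimpleGraph (Unit ⊕ Fin n ⊕ Fin n) :=
  SimpleGraph.fromRel (fun a b =>
    (∃ j : Fin n, (j : ℕ) = 0 ∧ a = Sum.inl () ∧ b = Sum.inr (Sum.inl j)) ∨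
    (∃ j : Fin n, (j : ℕ) = 0 ∧ a = Sum.inl () ∧ b = Sum.inr (Sum.inr j)) ∨
    (∃ i j : Fin n, (i : ℕ) = 0 ∧ (j : ℕ) = 0 ∧ a = Sum.inr (Sum.inl i) ∧ b = Sum.inr (Sum.inr j)) ∨
    (∃ i j : Fin n, (i : ℕ) + 1 = (j : ℕ) ∧ a = Sum.inr (Sum.inl i) ∧ b = Sum.inr (Sum.inl j)) ∨
    (∃ i j : Fin n, (i : ℕ) + 1 = (j : ℕ) ∧ a = Sum.inr (Sum.inr i) ∧ b = Sum.inr (Sum.inr j)))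

/-- `F⁽³⁾_n` : vertices `xᵢ = inl i`, `yᵢ = inr (inl i)`, `zᵢ = inr (inr i)`;
edges `xᵢy₁`, `xᵢz₁` for all `i`, and two paths `y₁⋯yₙ`, `z₁⋯zₙ`. -/
def F3 (n : ℕ) : SimpleGraph (Fin n ⊕ Fin n ⊕ Fin n) :=
  SimpleGraph.fromRel (fun a b =>
    (∃ (i j : Fin n), (j : ℕ) = 0 ∧ a = Sum.inl i ∧ b = Sum.inr (Sum.inl j)) ∨
    (∃ (i j : Fin n), (j : ℕ) = 0 ∧ a = Sum.inl i ∧ b = Sum.inr (Sum.inr j)) ∨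
    (∃ i j : Fin n, (i : ℕ) + 1 = (j : ℕ) ∧ a = Sum.inr (Sum.inl i) ∧ b = Sum.inr (Sum.inl j)) ∨
    (∃ i j : Fin n, (i : ℕ) + 1 = (j : ℕ) ∧ a = Sum.inr (Sum.inr i) ∧ b = Sum.inr (Sum.inr j)))

/-- `F⁽⁴⁾_n` : `F⁽³⁾_n` with only `x₁, x₂` kept (no edge `x₁x₂`). -/
def F4 (n : ℕ) : SimpleGraph (Fin 2 ⊕ Fin n ⊕ Fin n) :=
  SimpleGraph.fromRel (fun a b =>
    (∃ (i : Fin 2) (j : Fin n), (j : ℕ) = 0 ∧ a = Sum.inl i ∧ b = Sum.inr (Sum.inl j)) ∨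
    (∃ (i : Fin 2) (j : Fin n), (j : ℕ) = 0 ∧ a = Sum.inl i ∧ b = Sum.inr (Sum.inr j)) ∨
    (∃ i j : Fin n, (i : ℕ) + 1 = (j : ℕ) ∧ a = Sum.inr (Sum.inl i) ∧ b = Sum.inr (Sum.inl j)) ∨
    (∃ i j : Fin n, (i : ℕ) + 1 = (j : ℕ) ∧ a = Sum.inr (Sum.inr i) ∧ b = Sum.inr (Sum.inr j)))

/-- `F⁽⁵⁾_n` : `F⁽⁴⁾_n` plus the edge `x₁x₂`. -/
def F5 (n : ℕ) : SimpleGraph (Fin 2 ⊕ Fin n ⊕ Fin n) :=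
  SimpleGraph.fromRel (fun a b =>
    (a = Sum.inl 0 ∧ b = Sum.inl 1) ∨
    (∃ (i : Fin 2) (j : Fin n), (j : ℕ) = 0 ∧ a = Sum.inl i ∧ b = Sum.inr (Sum.inl j)) ∨
    (∃ (i : Fin 2) (j : Fin n), (j : ℕ) = 0 ∧ a = Sum.inl i ∧ b = Sum.inr (Sum.inr j)) ∨
    (∃ i j : Fin n, (i : ℕ) + 1 = (j : ℕ) ∧ a = Sum.inr (Sum.inl i) ∧ b = Sum.inr (Sum.inl j)) ∨
    (∃ i j : Fin n, (i : ℕ) + 1 = (j : ℕ) ∧ a = Sum.inr (Sum.inr i) ∧ b = Sum.inr (Sum.inr j)))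

/-- The Ramsey number `R(a,b)` : least `R` such that every simple graph on at least `R`
vertices contains a clique of size `a` or an independent set of size `b`. -/
noncomputable def ramseyNumber (a b : ℕ) : ℕ :=
  sInf {R : ℕ | ∀ (m : ℕ) (G : SimpleGraph (Fin m)), R ≤ m →
    (∃ s : Finset (Fin m), s.card = a ∧ ∀ u ∈ s, ∀ v ∈ s, u ≠ v → G.Adj u v) ∨
    (∃ s : Finset (Fin m), s.card = b ∧ ∀ u ∈ s, ∀ v ∈ s, u ≠ v → ¬ G.Adj u v)}

/-- `ξ_{n,i} = ((R(n-1,n)-1)^i - 1)/(R(n-1,n)-2)`. -/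
noncomputable def xi (n i : ℕ) : ℕ :=
  ((ramseyNumber (n - 1) n - 1) ^ i - 1) / (ramseyNumber (n - 1) n - 2)


/-! ### Auxiliary development -/

section Aux

/-- Transitivity of induced copies. -/
theorem HasInducedCopy.trans' {U V W : Type*} {G : SimpleGraph U} {H : SimpleGraph V}
    {K : SimpleGraph W} (h1 : HasInducedCopy G H) (h2 : HasInducedCopy H K) :
    HasInducedCopy G K := by
  obtain ⟨f, hf⟩ := h1
  obtain ⟨g, hg⟩ := h2
  exact ⟨g.trans f, fun a b => (hf (g a) (g b)).trans (hg a b)⟩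

/-- An induced copy inside an induced subgraph gives one in the big graph. -/
theorem HasInducedCopy.of_induce {V W : Type*} {G : SimpleGraph V} (s : Set V)
    {H : SimpleGraph W} (h : HasInducedCopy (G.induce s) H) : HasInducedCopy G H := by
  obtain ⟨f, hf⟩ := h
  refine ⟨f.trans ⟨Subtype.val, Subtype.val_injective⟩, fun a b => ?_⟩
  simpa using hf a b

/-- Build an induced copy of `Kₙ` from a clique function. -/
theorem hasInducedCopy_complete_of {V : Type*} {G : SimpleGraph V} {n : ℕ}
    (f : Fin n → V) (hinj : Function.Injective f)
    (hadj : ∀ i j, i ≠ j → G.Adj (f i) (f j)) :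
    HasInducedCopy G (completeGraph (Fin n)) := by
  refine ⟨⟨f, hinj⟩, fun a b => ?_⟩
  constructor
  · intro h hab; subst hab; exact G.irrefl h
  · intro h; exact hadj a b h

theorem completeGraph_mono {a n : ℕ} (h : a ≤ n) :
    HasInducedCopy (completeGraph (Fin n)) (completeGraph (Fin a)) := by
  refine ⟨⟨Fin.castLE h, Fin.castLE_injective h⟩, fun i j => ?_⟩
  show (Fin.castLE h i ≠ Fin.castLE h j) ↔ i ≠ j
  exact (Fin.castLE_injective h).ne_iff

theorem pathGraph_mono {a n : ℕ} (h : a ≤ n) :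
    HasInducedCopy (pathGraph n) (pathGraph a) := by
  refine ⟨⟨Fin.castLE h, Fin.castLE_injective h⟩, fun i j => ?_⟩
  show (pathGraph n).Adj (Fin.castLE h i) (Fin.castLE h j) ↔ _
  rw [pathGraph_adj, pathGraph_adj]
  simp

/-- Adjacency in `SStar`. -/
theorem sStar_adj {n : ℕ} {a b : Unit ⊕ Fin n ⊕ Fin n} :
    (SStar n).Adj a b ↔
      (∃ i : Fin n, (a = Sum.inl () ∧ b = Sum.inr (Sum.inl i)) ∨
        (b = Sum.inl () ∧ a = Sum.inr (Sum.inl i)) ∨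
        (a = Sum.inr (Sum.inl i) ∧ b = Sum.inr (Sum.inr i)) ∨
        (b = Sum.inr (Sum.inl i) ∧ a = Sum.inr (Sum.inr i))) := by
  rw [SStar, SimpleGraph.fromRel_adj]
  constructor
  · rintro ⟨hne, (⟨i, h1, h2⟩ | ⟨i, h1, h2⟩) | (⟨i, h1, h2⟩ | ⟨i, h1, h2⟩)⟩
    · exact ⟨i, Or.inl ⟨h1, h2⟩⟩
    · exact ⟨i, Or.inr (Or.inr (Or.inl ⟨h1, h2⟩))⟩
    · exact ⟨i, Or.inr (Or.inl ⟨h1, h2⟩)⟩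
    · exact ⟨i, Or.inr (Or.inr (Or.inr ⟨h1, h2⟩))⟩
  · rintro ⟨i, (⟨h1, h2⟩ | ⟨h1, h2⟩ | ⟨h1, h2⟩ | ⟨h1, h2⟩)⟩ <;> subst h1 <;> subst h2
    · exact ⟨by simp, Or.inl (Or.inl ⟨i, rfl, rfl⟩)⟩
    · exact ⟨by simp, Or.inr (Or.inl ⟨i, rfl, rfl⟩)⟩
    · exact ⟨by simp, Or.inl (Or.inr ⟨i, rfl, rfl⟩)⟩
    · exact ⟨by simp, Or.inr (Or.inr ⟨i, rfl, rfl⟩)⟩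

theorem sStar_mono {a n : ℕ} (h : a ≤ n) :
    HasInducedCopy (SStar n) (SStar a) := by
  classical
  have hinj : Function.Injective
      (Sum.map id (Sum.map (Fin.castLE h) (Fin.castLE h)) :
        Unit ⊕ Fin a ⊕ Fin a → Unit ⊕ Fin n ⊕ Fin n) := by
    apply Sum.map_injective.mpr
    exact ⟨fun x y hxy => hxy,
      Sum.map_injective.mpr ⟨Fin.castLE_injective h, Fin.castLE_injective h⟩⟩
  refine ⟨⟨_, hinj⟩, fun x y => ?_⟩
  show (SStar n).Adj (Sum.map id (Sum.map (Fin.castLE h) (Fin.castLE h)) x)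
      (Sum.map id (Sum.map (Fin.castLE h) (Fin.castLE h)) y) ↔ _
  rw [sStar_adj, sStar_adj]
  constructor
  · rintro ⟨i, hc⟩
    rcases x with _ | (x'' | x'') <;> rcases y with _ | (y'' | y'') <;>
      simp_all [Sum.map] <;>
      exact Fin.castLE_injective h (hc.2.trans hc.1.symm)
  · rintro ⟨i, hc⟩
    rcases x with _ | (x'' | x'') <;> rcases y with _ | (y'' | y'') <;>
      simp_all [Sum.map]

/-- Finite Ramsey theorem. -/
theorem myRamsey (a b : ℕ) : ∃ N : ℕ, ∀ (V : Type) (G : SimpleGraph V) (s : Finset V),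
    N ≤ s.card →
    (∃ t ⊆ s, t.card = a ∧ ∀ x ∈ t, ∀ y ∈ t, x ≠ y → G.Adj x y) ∨
    (∃ t ⊆ s, t.card = b ∧ ∀ x ∈ t, ∀ y ∈ t, x ≠ y → ¬G.Adj x y) := by
  induction a generalizing b with
  | zero => exact ⟨0, fun V G s _ => Or.inl ⟨∅, by simp⟩⟩
  | succ a iha =>
    induction b with
    | zero => exact ⟨0, fun V G s _ => Or.inr ⟨∅, by simp⟩⟩
    | succ b ihb =>
      obtain ⟨N1, h1⟩ := iha (b + 1)
      obtain ⟨N2, h2⟩ := ihb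
      refine ⟨N1 + N2 + 1, fun V G s hs => ?_⟩
      classical
      obtain ⟨x, hx⟩ : s.Nonempty := Finset.card_pos.mp (by omega)
      set s1 := (s.erase x).filter (fun y => G.Adj x y) with hs1
      set s2 := (s.erase x).filter (fun y => ¬ G.Adj x y) with hs2
      have hcard : s1.card + s2.card = s.card - 1 := by
        rw [hs1, hs2, Finset.card_filter_add_card_filter_not,
          Finset.card_erase_of_mem hx]
      have hsub1 : s1 ⊆ s.erase x := Finset.filter_subset _ _
      have hsub2 : s2 ⊆ s.erase x := Finset.filter_subset _ _
      rcases le_or_gt N1 s1.card with hc1 | hc1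
      · rcases h1 V G s1 hc1 with ⟨t, hts, htc, htadj⟩ | ⟨t, hts, htc, htadj⟩
        · refine Or.inl ⟨insert x t, ?_, ?_, ?_⟩
          · intro y hy
            rcases Finset.mem_insert.mp hy with rfl | hy
            · exact hx
            · exact Finset.mem_of_mem_erase (hsub1 (hts hy))
          · rw [Finset.card_insert_of_notMem, htc]
            intro hxt
            exact Finset.notMem_erase x s (hsub1 (hts hxt))
          · intro u hu v hv huv
            rcases Finset.mem_insert.mp hu with h1 | h1 <;>
              rcases Finset.mem_insert.mp hv with h2 | h2
            · exact absurd (h1.trans h2.symm) huv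
            · rw [h1]; exact (Finset.mem_filter.mp (hts h2)).2
            · rw [h2]; exact ((Finset.mem_filter.mp (hts h1)).2).symm
            · exact htadj u h1 v h2 huv
        · exact Or.inr ⟨t, fun y hy => Finset.mem_of_mem_erase (hsub1 (hts hy)), htc, htadj⟩
      · have hc2 : N2 ≤ s2.card := by omega
        rcases h2 V G s2 hc2 with ⟨t, hts, htc, htadj⟩ | ⟨t, hts, htc, htadj⟩
        · exact Or.inl ⟨t, fun y hy => Finset.mem_of_mem_erase (hsub2 (hts hy)), htc, htadj⟩
        · refine Or.inr ⟨insert x t, ?_, ?_, ?_⟩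
          · intro y hy
            rcases Finset.mem_insert.mp hy with rfl | hy
            · exact hx
            · exact Finset.mem_of_mem_erase (hsub2 (hts hy))
          · rw [Finset.card_insert_of_notMem, htc]
            intro hxt
            exact Finset.notMem_erase x s (hsub2 (hts hxt))
          · intro u hu v hv huv
            rcases Finset.mem_insert.mp hu with h1 | h1 <;>
              rcases Finset.mem_insert.mp hv with h2 | h2
            · exact absurd (h1.trans h2.symm) huv
            · rw [h1]; exact (Finset.mem_filter.mp (hts h2)).2
            · rw [h2]; exact fun hadj => (Finset.mem_filter.mp (hts h1)).2 hadj.symm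
            · exact htadj u h1 v h2 huv

/-- A geodesic as a function, with distance control. -/
theorem exists_geodesic_fun {V : Type*} {G : SimpleGraph V} (hconn : G.Connected) (u v : V) :
    ∃ f : ℕ → V, f 0 = u ∧ f (G.dist u v) = v ∧
      (∀ i, i < G.dist u v → G.Adj (f i) (f (i + 1))) ∧
      (∀ i, i ≤ G.dist u v → G.dist u (f i) = i) := by
  obtain ⟨p, hp⟩ := hconn.exists_walk_length_eq_dist u v
  have hadj : ∀ i, i < G.dist u v → G.Adj (p.getVert i) (p.getVert (i + 1)) := by
    intro i hi; exact p.adj_getVert_succ (by omega)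
  have hup : ∀ i, i ≤ G.dist u v → G.dist u (p.getVert i) ≤ i := by
    intro i
    induction i with
    | zero => intro _; simp [p.getVert_zero]
    | succ i ih =>
      intro hi
      have h1 : G.dist u (p.getVert i) ≤ i := ih (by omega)
      have h2 : G.dist (p.getVert i) (p.getVert (i + 1)) ≤ 1 := by
        have := SimpleGraph.dist_le (SimpleGraph.Walk.cons (hadj i (by omega))
          SimpleGraph.Walk.nil)
        simpa using this
      calc G.dist u (p.getVert (i + 1)) ≤
          G.dist u (p.getVert i) + G.dist (p.getVert i) (p.getVert (i + 1)) :=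
            hconn.dist_triangle
        _ ≤ i + 1 := by omega
  have hdown : ∀ j, ∀ i, i + j = G.dist u v → G.dist (p.getVert i) v ≤ j := by
    intro j
    induction j with
    | zero =>
      intro i hi
      have : p.getVert i = v := by
        have : i = p.length := by omega
        rw [this, p.getVert_length]
      simp [this]
    | succ j ih =>
      intro i hi
      have h2 : G.dist (p.getVert i) (p.getVert (i + 1)) ≤ 1 := by
        have := SimpleGraph.dist_le (SimpleGraph.Walk.cons (hadj i (by omega))
          SimpleGraph.Walk.nil)
        simpa using this
      have h3 : G.dist (p.getVert (i + 1)) v ≤ j := ih (i + 1) (by omega)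
      calc G.dist (p.getVert i) v ≤
          G.dist (p.getVert i) (p.getVert (i + 1)) + G.dist (p.getVert (i + 1)) v :=
            hconn.dist_triangle
        _ ≤ j + 1 := by omega
  refine ⟨p.getVert, p.getVert_zero, by rw [← hp]; exact p.getVert_length, hadj, ?_⟩
  intro i hi
  have h1 := hup i hi
  have h2 := hdown (G.dist u v - i) i (by omega)
  have h3 : G.dist u v ≤ G.dist u (p.getVert i) + G.dist (p.getVert i) v :=
    hconn.dist_triangle
  omega

/-- In a `Pₙ`-free connected graph all distances are at most `n - 2`. -/
theorem dist_le_of_pathFree {V : Type*} {G : SimpleGraph V} {n : ℕ} (hn : 2 ≤ n)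
    (hconn : G.Connected) (hfree : ¬ HasInducedCopy G (pathGraph n)) (u v : V) :
    G.dist u v ≤ n - 2 := by
  by_contra hlt
  push_neg at hlt
  obtain ⟨f, hf0, hfv, hadj, hdist⟩ := exists_geodesic_fun hconn u v
  have hn1 : n - 1 ≤ G.dist u v := by omega
  apply hfree
  have hinj : Function.Injective (fun i : Fin n => f i) := by
    intro i j hij
    have hij' : f (i : ℕ) = f (j : ℕ) := hij
    have hi := hdist i (by omega)
    have hj := hdist j (by omega)
    apply Fin.ext
    rw [← hi, ← hj, hij']
  refine ⟨⟨fun i : Fin n => f i, hinj⟩, fun i j => ?_⟩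
  show G.Adj (f i) (f j) ↔ (pathGraph n).Adj i j
  rw [pathGraph_adj]
  constructor
  · intro hadj'
    have hij : (i : ℕ) ≠ (j : ℕ) := by
      intro hval
      exact G.irrefl (by rwa [show (i : ℕ) = (j : ℕ) from hval] at hadj')
    have h1 : G.dist u (f j) ≤ G.dist u (f i) + 1 := by
      have : G.dist (f i) (f j) ≤ 1 := by
        have := SimpleGraph.dist_le (SimpleGraph.Walk.cons hadj' SimpleGraph.Walk.nil)
        simpa using this
      calc G.dist u (f j) ≤ G.dist u (f i) + G.dist (f i) (f j) := hconn.dist_triangle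
        _ ≤ G.dist u (f i) + 1 := by omega
    have h2 : G.dist u (f i) ≤ G.dist u (f j) + 1 := by
      have : G.dist (f j) (f i) ≤ 1 := by
        have := SimpleGraph.dist_le (SimpleGraph.Walk.cons hadj'.symm SimpleGraph.Walk.nil)
        simpa using this
      calc G.dist u (f i) ≤ G.dist u (f j) + G.dist (f j) (f i) := hconn.dist_triangle
        _ ≤ G.dist u (f j) + 1 := by omega
    have hi := hdist i (by omega)
    have hj := hdist j (by omega)
    omega
  · rintro (hij | hij)
    · have : (i : ℕ) + 1 < n := by omega
      have := hadj i (by omega)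
      rwa [show (i : ℕ) + 1 = (j : ℕ) from hij] at this
    · have := hadj j (by omega)
      rw [show (j : ℕ) + 1 = (i : ℕ) from hij] at this
      exact this.symm

end Aux

section Dom

theorem exists_injFun_of_card {V : Type*} (t : Finset V) {m : ℕ} (h : t.card = m) :
    ∃ g : Fin m → V, Function.Injective g ∧ ∀ i, g i ∈ t := by
  have he : Fintype.card ↥t = m := by rw [Fintype.card_coe]; exact h
  let e := (Fintype.equivFinOfCardEq he).symm
  exact ⟨fun i => (e i : V), fun i j hij => e.injective (Subtype.ext hij),
    fun i => (e i).2⟩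

theorem hasCopy_of_clique {V : Type*} {G : SimpleGraph V} {m : ℕ} (t : Finset V)
    (htc : t.card = m) (hadj : ∀ x ∈ t, ∀ y ∈ t, x ≠ y → G.Adj x y) :
    HasInducedCopy G (completeGraph (Fin m)) := by
  obtain ⟨g, hginj, hgmem⟩ := exists_injFun_of_card t htc
  exact hasInducedCopy_complete_of g hginj
    (fun i j hij => hadj _ (hgmem i) _ (hgmem j) (fun e => hij (hginj e)))

theorem hasInducedCopy_sStar_of {V : Type*} {G : SimpleGraph V} {n : ℕ} (u : V)
    (y z : Fin n → V)
    (hyne : ∀ i j, i ≠ j → y i ≠ y j) (hzne : ∀ i j, i ≠ j → z i ≠ z j)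
    (huy : ∀ i, G.Adj u (y i)) (hyz : ∀ i, G.Adj (y i) (z i))
    (huz : ∀ i, ¬ G.Adj u (z i)) (huzne : ∀ i, u ≠ z i)
    (hyzne : ∀ i j, y i ≠ z j)
    (hyy : ∀ i j, i ≠ j → ¬ G.Adj (y i) (y j))
    (hzz : ∀ i j, i ≠ j → ¬ G.Adj (z i) (z j))
    (hyzx : ∀ i j, i ≠ j → ¬ G.Adj (y i) (z j)) :
    HasInducedCopy G (SStar n) := by
  classical
  let f : Unit ⊕ Fin n ⊕ Fin n → V := Sum.elim (fun _ => u) (Sum.elim y z)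
  have hinj : Function.Injective f := by
    rintro (⟨⟩ | (i | i)) (⟨⟩ | (j | j)) hab <;> simp only [f, Sum.elim_inl, Sum.elim_inr] at hab
    · rfl
    · exact absurd hab (huy j).ne
    · exact absurd hab (huzne j)
    · exact absurd hab.symm (huy i).ne
    · have : i = j := by by_contra hne; exact hyne i j hne hab
      rw [this]
    · exact absurd hab (hyzne i j)
    · exact absurd hab.symm (huzne i)
    · exact absurd hab.symm (hyzne j i)
    · have : i = j := by by_contra hne; exact hzne i j hne hab
      rw [this]
  refine ⟨⟨f, hinj⟩, ?_⟩
  rintro (⟨⟩ | (i | i)) (⟨⟩ | (j | j)) <;>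
    simp only [Function.Embedding.coeFn_mk] <;>
    rw [sStar_adj] <;>
    simp only [f, Sum.elim_inl, Sum.elim_inr]
  · exact iff_of_false (G.irrefl) (by simp)
  · exact iff_of_true (huy j) (by simp)
  · exact iff_of_false (huz j) (by simp)
  · exact iff_of_true (huy i).symm (by simp)
  · by_cases h : i = j
    · subst h; exact iff_of_false (G.irrefl) (by simp)
    · exact iff_of_false (hyy i j h) (by simp)
  · by_cases h : i = j
    · subst h; exact iff_of_true (hyz i) (by simp)
    · refine iff_of_false (hyzx i j h) ?_
      rintro ⟨i', ⟨h1, h2⟩ | ⟨h1, h2⟩ | ⟨h1, h2⟩ | ⟨h1, h2⟩⟩ <;> simp_all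
  · exact iff_of_false (fun h => huz i h.symm) (by simp)
  · by_cases h : i = j
    · subst h; exact iff_of_true (hyz i).symm (by simp)
    · refine iff_of_false (fun hadj => hyzx j i (Ne.symm h) hadj.symm) ?_
      rintro ⟨i', ⟨h1, h2⟩ | ⟨h1, h2⟩ | ⟨h1, h2⟩ | ⟨h1, h2⟩⟩ <;> simp_all
  · by_cases h : i = j
    · subst h; exact iff_of_false (G.irrefl) (by simp)
    · exact iff_of_false (hzz i j h) (by simp)

noncomputable def ramB2 (n : ℕ) : ℕ := (myRamsey (n - 1) n).choose

theorem ramB2_spec (n : ℕ) : ∀ (V : Type) (G : SimpleGraph V) (s : Finset V),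
    ramB2 n ≤ s.card →
    (∃ t ⊆ s, t.card = n - 1 ∧ ∀ x ∈ t, ∀ y ∈ t, x ≠ y → G.Adj x y) ∨
    (∃ t ⊆ s, t.card = n ∧ ∀ x ∈ t, ∀ y ∈ t, x ≠ y → ¬G.Adj x y) :=
  (myRamsey (n - 1) n).choose_spec

noncomputable def ramB1 (n : ℕ) : ℕ := (myRamsey n (ramB2 n)).choose

theorem ramB1_spec (n : ℕ) : ∀ (V : Type) (G : SimpleGraph V) (s : Finset V),
    ramB1 n ≤ s.card →
    (∃ t ⊆ s, t.card = n ∧ ∀ x ∈ t, ∀ y ∈ t, x ≠ y → G.Adj x y) ∨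
    (∃ t ⊆ s, t.card = ramB2 n ∧ ∀ x ∈ t, ∀ y ∈ t, x ≠ y → ¬G.Adj x y) :=
  (myRamsey n (ramB2 n)).choose_spec

/-- Key lemma: the second sphere around `u` is dominated by few vertices. -/
theorem dom2 {V : Type} [Fintype V] {G : SimpleGraph V} {n : ℕ} (hn : 1 ≤ n)
    (hK : ¬ HasInducedCopy G (completeGraph (Fin n)))
    (hS : ¬ HasInducedCopy G (SStar n)) (u : V) :
    ∃ D : Finset V, D.card ≤ ramB1 n ∧
      ∀ z : V, z ≠ u → ¬ G.Adj u z → (∃ y, G.Adj u y ∧ G.Adj y z) →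
        ∃ d ∈ D, G.Adj d z := by
  classical
  set Cond : V → Prop := fun z => z ≠ u ∧ ¬G.Adj u z ∧ ∃ y, G.Adj u y ∧ G.Adj y z with hCond
  set Hit : Finset V → Prop :=
    fun T => (∀ d ∈ T, G.Adj u d) ∧ ∀ z, Cond z → ∃ y ∈ T, G.Adj y z with hHit
  have h0 : Hit (Finset.univ.filter (fun d => G.Adj u d)) := by
    constructor
    · intro d hd; exact (Finset.mem_filter.mp hd).2
    · rintro z ⟨hz1, hz2, y, hy1, hy2⟩
      exact ⟨y, Finset.mem_filter.mpr ⟨Finset.mem_univ y, hy1⟩, hy2⟩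
  have hSne : {k | ∃ T : Finset V, T.card = k ∧ Hit T}.Nonempty := ⟨_, _, rfl, h0⟩
  obtain ⟨T, hTcard, hThit⟩ := Nat.sInf_mem hSne
  by_cases hbig : T.card ≤ ramB1 n
  · refine ⟨T, hbig, fun z hz1 hz2 hz3 => ?_⟩
    obtain ⟨y, hy1, hy2⟩ := hThit.2 z ⟨hz1, hz2, hz3⟩
    exact ⟨y, hy1, hy2⟩
  -- T is big: derive a contradiction
  exfalso
  push_neg at hbig
  have hpriv : ∀ x ∈ T, ∃ z, Cond z ∧ G.Adj x z ∧ ∀ x' ∈ T, x' ≠ x → ¬ G.Adj x' z := by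
    intro x hx
    by_contra hcon
    push_neg at hcon
    have herase : Hit (T.erase x) := by
      constructor
      · intro d hd; exact hThit.1 d (Finset.mem_of_mem_erase hd)
      · intro z hz
        obtain ⟨y, hyT, hyz⟩ := hThit.2 z hz
        by_cases hyx : y = x
        · subst hyx
          obtain ⟨x', hx'T, hne, hadj⟩ := hcon z hz hyz
          exact ⟨x', Finset.mem_erase.mpr ⟨hne, hx'T⟩, hadj⟩
        · exact ⟨y, Finset.mem_erase.mpr ⟨hyx, hyT⟩, hyz⟩
    have hmem : (T.erase x).card ∈ {k | ∃ T : Finset V, T.card = k ∧ Hit T} :=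
      ⟨_, rfl, herase⟩
    have hle := Nat.sInf_le hmem
    have hec : (T.erase x).card = T.card - 1 := Finset.card_erase_of_mem hx
    have hpos : 0 < T.card := Finset.card_pos.mpr ⟨x, hx⟩
    omega
  have hpriv' : ∀ x : V, ∃ z,
      x ∈ T → (Cond z ∧ G.Adj x z ∧ ∀ x' ∈ T, x' ≠ x → ¬ G.Adj x' z) := by
    intro x
    by_cases hx : x ∈ T
    · obtain ⟨z, h⟩ := hpriv x hx; exact ⟨z, fun _ => h⟩
    · exact ⟨u, fun h => absurd h hx⟩
  choose priv hprivs using hpriv'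
  have hinjOn : Set.InjOn priv ↑T := by
    intro x hx x' hx' heq
    by_contra hne
    have h1 := (hprivs x' hx').2.1
    have h2 := (hprivs x hx).2.2 x' hx' (fun e => hne e.symm)
    rw [heq] at h2
    exact h2 h1
  have hZcard : (T.image priv).card = T.card := Finset.card_image_of_injOn hinjOn
  rcases ramB1_spec n V G (T.image priv) (by omega) with
    ⟨t, hts, htc, htadj⟩ | ⟨Zs, hZsub, hZsc, hZsind⟩
  · exact hK (hasCopy_of_clique t htc htadj)
  · set Ts := T.filter (fun x => priv x ∈ Zs) with hTs
    have hTsim : Ts.image priv = Zs := by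
      apply Finset.Subset.antisymm
      · intro z hz
        obtain ⟨x, hx, rfl⟩ := Finset.mem_image.mp hz
        exact (Finset.mem_filter.mp hx).2
      · intro z hz
        obtain ⟨x, hx, rfl⟩ := Finset.mem_image.mp (hZsub hz)
        exact Finset.mem_image.mpr ⟨x, Finset.mem_filter.mpr ⟨hx, hz⟩, rfl⟩
    have hTscard : ramB2 n ≤ Ts.card := by
      have := Finset.card_image_le (s := Ts) (f := priv)
      rw [hTsim, hZsc] at this
      exact this
    rcases ramB2_spec n V G Ts hTscard with
      ⟨t, hts, htc, htadj⟩ | ⟨Ys, hYsub, hYsc, hYsind⟩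
    · -- clique of size n-1 in N(u): add u
      apply hK
      have hsubT : t ⊆ T := fun x hx => (Finset.mem_filter.mp (hts hx)).1
      have hunotmem : u ∉ t := by
        intro hu
        exact G.irrefl (hThit.1 u (hsubT hu))
      refine hasCopy_of_clique (insert u t) ?_ ?_
      · rw [Finset.card_insert_of_notMem hunotmem, htc]; omega
      · intro x hx y hy hxy
        rcases Finset.mem_insert.mp hx with h1 | h1 <;>
          rcases Finset.mem_insert.mp hy with h2 | h2
        · exact absurd (h1.trans h2.symm) hxy
        · rw [h1]; exact hThit.1 y (hsubT h2)
        · rw [h2]; exact (hThit.1 x (hsubT h1)).symm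
        · exact htadj x h1 y h2 hxy
    · -- independent set of size n in N(u): build SStar n
      apply hS
      obtain ⟨g, hginj, hgmem⟩ := exists_injFun_of_card Ys hYsc
      have hgTs : ∀ i, g i ∈ Ts := fun i => hYsub (hgmem i)
      have hgT : ∀ i, g i ∈ T := fun i => (Finset.mem_filter.mp (hgTs i)).1
      have hgZs : ∀ i, priv (g i) ∈ Zs := fun i => (Finset.mem_filter.mp (hgTs i)).2
      have hCondz : ∀ i, Cond (priv (g i)) := fun i => (hprivs (g i) (hgT i)).1
      have hprivne : ∀ i j, i ≠ j → priv (g i) ≠ priv (g j) := by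
        intro i j hij heq
        exact hij (hginj (hinjOn (hgT i) (hgT j) heq))
      refine hasInducedCopy_sStar_of u g (fun i => priv (g i))
        (fun i j hij => fun e => hij (hginj e)) hprivne
        (fun i => hThit.1 _ (hgT i))
        (fun i => (hprivs (g i) (hgT i)).2.1)
        (fun i => (hCondz i).2.1)
        (fun i => fun e => (hCondz i).1 e.symm)
        ?_ ?_ ?_ ?_
      · intro i j heq
        have h1 : G.Adj u (g i) := hThit.1 _ (hgT i)
        rw [show g i = priv (g j) from heq] at h1
        exact (hCondz j).2.1 h1
      · intro i j hij
        exact hYsind _ (hgmem i) _ (hgmem j) (fun e => hij (hginj e))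
      · intro i j hij
        exact hZsind _ (hgZs i) _ (hgZs j) (hprivne i j hij)
      · intro i j hij
        exact (hprivs (g j) (hgT j)).2.2 (g i) (hgT i) (fun e => hij (hginj e))

end Dom

section BigDom

theorem dom_ball {V : Type} [Fintype V] {G : SimpleGraph V} {n : ℕ} (hn : 1 ≤ n)
    (hconn : G.Connected)
    (hK : ¬ HasInducedCopy G (completeGraph (Fin n)))
    (hS : ¬ HasInducedCopy G (SStar n)) (r : V) :
    ∀ i : ℕ, ∃ D : Finset V, D.card ≤ (ramB1 n + 1) ^ i ∧
      ∀ v : V, G.dist r v ≤ i + 1 → ∃ d ∈ D, d = v ∨ G.Adj d v := by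
  classical
  intro i
  induction i with
  | zero =>
    refine ⟨{r}, by simp, fun v hv => ?_⟩
    rcases Nat.le_one_iff_eq_zero_or_eq_one.mp hv with h0 | h1
    · exact ⟨r, Finset.mem_singleton_self r, Or.inl (hconn.dist_eq_zero_iff.mp h0)⟩
    · exact ⟨r, Finset.mem_singleton_self r,
        Or.inr (SimpleGraph.dist_eq_one_iff_adj.mp h1)⟩
  | succ i ih =>
    obtain ⟨D, hDcard, hDdom⟩ := ih
    choose D2 hD2card hD2dom using fun d : V => dom2 hn hK hS d
    refine ⟨D ∪ D.biUnion D2, ?_, ?_⟩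
    · have h1 : (D.biUnion D2).card ≤ D.card * ramB1 n := by
        calc (D.biUnion D2).card ≤ ∑ d ∈ D, (D2 d).card := Finset.card_biUnion_le
          _ ≤ ∑ _d ∈ D, ramB1 n := Finset.sum_le_sum (fun d _ => hD2card d)
          _ = D.card * ramB1 n := by rw [Finset.sum_const, smul_eq_mul]
      have h2 : (D ∪ D.biUnion D2).card ≤ D.card + D.card * ramB1 n :=
        le_trans (Finset.card_union_le _ _) (by omega)
      have h3 : D.card + D.card * ramB1 n ≤ (ramB1 n + 1) ^ i * (ramB1 n + 1) := by
        have : D.card * (ramB1 n + 1) ≤ (ramB1 n + 1) ^ i * (ramB1 n + 1) :=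
          Nat.mul_le_mul_right _ hDcard
        nlinarith [hDcard]
      calc (D ∪ D.biUnion D2).card ≤ D.card + D.card * ramB1 n := h2
        _ ≤ (ramB1 n + 1) ^ i * (ramB1 n + 1) := h3
        _ = (ramB1 n + 1) ^ (i + 1) := by rw [pow_succ]
    · intro v hv
      by_cases hv1 : G.dist r v ≤ i + 1
      · obtain ⟨d, hd, hdd⟩ := hDdom v hv1
        exact ⟨d, Finset.mem_union_left _ hd, hdd⟩
      · have hdist : G.dist r v = i + 2 := by omega
        obtain ⟨f, hf0, hfv, hadj, hdists⟩ := exists_geodesic_fun hconn r v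
        have hwdist : G.dist r (f (i + 1)) = i + 1 := hdists (i + 1) (by omega)
        have hwv : G.Adj (f (i + 1)) v := by
          have h := hadj (i + 1) (by omega)
          have h2 : f (i + 1 + 1) = v := by rw [show i + 1 + 1 = G.dist r v from by omega, hfv]
          rwa [h2] at h
        obtain ⟨d, hd, hdd⟩ := hDdom (f (i + 1)) (le_of_eq hwdist)
        rcases hdd with heq | hdadj
        · exact ⟨d, Finset.mem_union_left _ hd, Or.inr (heq ▸ hwv)⟩
        · by_cases hvd : v = d
          · exact ⟨d, Finset.mem_union_left _ hd, Or.inl hvd.symm⟩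
          by_cases hadj2 : G.Adj d v
          · exact ⟨d, Finset.mem_union_left _ hd, Or.inr hadj2⟩
          · obtain ⟨y, hy, hyadj⟩ := hD2dom d v hvd hadj2 ⟨f (i + 1), hdadj, hwv⟩
            exact ⟨y, Finset.mem_union_right _ (Finset.mem_biUnion.mpr ⟨d, hd, hy⟩),
              Or.inr hyadj⟩

theorem exists_dominating {V : Type} [Fintype V] {G : SimpleGraph V} {n : ℕ} (hn : 4 ≤ n)
    (hconn : G.Connected)
    (hK : ¬ HasInducedCopy G (completeGraph (Fin n)))
    (hS : ¬ HasInducedCopy G (SStar n))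
    (hP : ¬ HasInducedCopy G (pathGraph n)) :
    ∃ D : Finset V, D.card ≤ (ramB1 n + 1) ^ n ∧
      ∀ v : V, ∃ d ∈ D, d = v ∨ G.Adj d v := by
  obtain ⟨r⟩ := hconn.nonempty
  obtain ⟨D, h1, h2⟩ := dom_ball (by omega) hconn hK hS r n
  refine ⟨D, h1, fun v => h2 v ?_⟩
  have := dist_le_of_pathFree (by omega) hconn hP r v
  omega

end BigDom

section Color

theorem hasInducedCopy_K1 {V : Type*} {G : SimpleGraph V} (v : V) :
    HasInducedCopy G (completeGraph (Fin 1)) := by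
  refine ⟨⟨fun _ => v, fun a b _ => Subsingleton.elim a b⟩, fun a b => ?_⟩
  exact iff_of_false (G.irrefl) (fun h => h (Subsingleton.elim a b))

theorem cliquefree_nbhd {V : Type*} {G : SimpleGraph V} {w : ℕ}
    (hK : ¬ HasInducedCopy G (completeGraph (Fin (w + 1)))) (d : V) :
    ¬ HasInducedCopy (G.induce {x | G.Adj d x}) (completeGraph (Fin w)) := by
  classical
  rintro ⟨f, hf⟩
  apply hK
  have hmem : ∀ i, G.Adj d ((f i : V)) := fun i => (f i).2
  have hadj : ∀ i j : Fin w, i ≠ j → G.Adj ((f i : V)) ((f j : V)) := by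
    intro i j hij
    have := (hf i j).mpr hij
    simpa using this
  refine hasCopy_of_clique (insert d ((Finset.univ : Finset (Fin w)).image
    (fun i => ((f i : V))))) ?_ ?_
  · rw [Finset.card_insert_of_notMem, Finset.card_image_of_injective _
      (fun i j hij => f.injective (Subtype.ext hij)), Finset.card_univ, Fintype.card_fin]
    intro hd
    obtain ⟨i, _, hi⟩ := Finset.mem_image.mp hd
    exact G.irrefl (hi ▸ hmem i)
  · intro x hx y hy hxy
    rcases Finset.mem_insert.mp hx with h1 | h1 <;>
      rcases Finset.mem_insert.mp hy with h2 | h2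
    · exact absurd (h1.trans h2.symm) hxy
    · obtain ⟨j, _, hj⟩ := Finset.mem_image.mp h2
      rw [h1, ← hj]; exact hmem j
    · obtain ⟨i, _, hi⟩ := Finset.mem_image.mp h1
      rw [h2, ← hi]; exact (hmem i).symm
    · obtain ⟨i, _, hi⟩ := Finset.mem_image.mp h1
      obtain ⟨j, _, hj⟩ := Finset.mem_image.mp h2
      subst hi; subst hj
      refine hadj i j (fun e => hxy ?_)
      rw [e]

/-- Recursive colour bound. -/
noncomputable def colBound (n : ℕ) : ℕ → ℕ
  | 0 => 1
  | (w + 1) => ((ramB1 n + 1) ^ n) * (colBound n w + 1)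

theorem colBound_pos (n : ℕ) : ∀ w, 0 < colBound n w := by
  intro w
  induction w with
  | zero => simp [colBound]
  | succ w _ =>
    have h1 : 0 < (ramB1 n + 1) ^ n := by positivity
    simp only [colBound]
    exact Nat.mul_pos h1 (by omega)

theorem colorable_rec (n : ℕ) (hn : 4 ≤ n) :
    ∀ w : ℕ, w + 1 ≤ n → ∀ (V : Type) [Fintype V] (G : SimpleGraph V),
      ¬ HasInducedCopy G (completeGraph (Fin (w + 1))) →
      ¬ HasInducedCopy G (SStar n) → ¬ HasInducedCopy G (pathGraph n) →
      G.Colorable (colBound n w) := by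
  intro w
  induction w with
  | zero =>
    intro _ V _ G hK _ _
    refine ⟨SimpleGraph.Coloring.mk (fun _ => ⟨0, by simp [colBound]⟩) ?_⟩
    intro v w hvw
    exact absurd (hasInducedCopy_K1 v) hK
  | succ w ihw =>
    intro hwn
    have hwn' : w + 1 ≤ n := by omega
    suffices H : ∀ (m : ℕ) (V : Type) [Fintype V] (G : SimpleGraph V), Fintype.card V ≤ m →
        ¬ HasInducedCopy G (completeGraph (Fin (w + 2))) →
        ¬ HasInducedCopy G (SStar n) → ¬ HasInducedCopy G (pathGraph n) →
        G.Colorable (colBound n (w + 1)) by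
      intro V _ G hK hS hP
      exact H (Fintype.card V) V G le_rfl hK hS hP
    intro m
    induction m with
    | zero =>
      intro V _ G hcard _ _ _
      have : IsEmpty V := Fintype.card_eq_zero_iff.mp (by omega)
      exact ⟨SimpleGraph.Coloring.mk (fun v => isEmptyElim v) (fun {v} _ _ => isEmptyElim v)⟩
    | succ m ihm =>
      intro V _ G hcard hK hS hP
      classical
      by_cases hconn : G.Connected
      · -- connected case
        have hKn : ¬ HasInducedCopy G (completeGraph (Fin n)) :=
          fun h => hK (h.trans' (completeGraph_mono hwn))
        obtain ⟨D, hDcard, hDdom⟩ := exists_dominating hn hconn hKn hS hP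
        choose fd hfd1 hfd2 using hDdom
        have hcol : ∀ d : V, (G.induce {x | G.Adj d x}).Colorable (colBound n w) := by
          intro d
          refine ihw hwn' _ _ (cliquefree_nbhd hK d) ?_ ?_
          · exact fun h => hS (HasInducedCopy.of_induce _ h)
          · exact fun h => hP (HasInducedCopy.of_induce _ h)
        have hcol' : ∀ d : V, (G.induce {x | G.Adj d x}).Coloring
            (Fin (colBound n w)) := fun d => (hcol d).some
        set Γ := (ramB1 n + 1) ^ n with hΓ
        have hDc : Fintype.card ↥D = D.card := Fintype.card_coe D
        let e0 : ↥D ≃ Fin D.card := Fintype.equivFinOfCardEq hDc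
        let ι : ↥D → Fin Γ := fun d => Fin.castLE hDcard (e0 d)
        have hι : Function.Injective ι := fun a b hab =>
          e0.injective (Fin.castLE_injective hDcard hab)
        have hpos : 0 < colBound n w := colBound_pos n w
        let colF : V → V → Fin (colBound n w) := fun d x =>
          if h : G.Adj d x then (hcol' d) ⟨x, h⟩ else ⟨0, hpos⟩
        let C : V → Fin Γ × Option (Fin (colBound n w)) := fun v =>
          (ι ⟨fd v, hfd1 v⟩, if v = fd v then none else some (colF (fd v) v))
        have hvalid : ∀ {v w' : V}, G.Adj v w' → C v ≠ C w' := by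
          intro v v' hadj heq
          have h1 : fd v = fd v' := by
            have hfst : ι ⟨fd v, hfd1 v⟩ = ι ⟨fd v', hfd1 v'⟩ := congrArg Prod.fst heq
            exact congrArg Subtype.val (hι hfst)
          have h2 : (if v = fd v then none else some (colF (fd v) v)) =
              (if v' = fd v' then none else some (colF (fd v') v')) :=
            congrArg Prod.snd heq
          by_cases hv : v = fd v <;> by_cases hv' : v' = fd v'
          · apply G.ne_of_adj hadj
            rw [hv, hv', ← h1]
          · rw [if_pos hv, if_neg hv'] at h2
            exact Option.some_ne_none _ h2.symm
          · rw [if_neg hv, if_pos hv'] at h2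
            exact Option.some_ne_none _ h2
          · rw [if_neg hv, if_neg hv', ← h1] at h2
            have hsome := Option.some_injective _ h2
            have ha : G.Adj (fd v) v := (hfd2 v).resolve_left (fun e => hv e.symm)
            have hb : G.Adj (fd v) v' := by
              have hb0 : G.Adj (fd v') v' := (hfd2 v').resolve_left (fun e => hv' e.symm)
              rwa [← h1] at hb0
            have hsome' : (hcol' (fd v)) ⟨v, ha⟩ = (hcol' (fd v)) ⟨v', hb⟩ := by
              have : colF (fd v) v = colF (fd v) v' := hsome
              simp only [colF] at this
              rwa [dif_pos ha, dif_pos hb] at this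
            exact (hcol' (fd v)).valid (by simpa using hadj) hsome'
        have hcolorable := (SimpleGraph.Coloring.mk C hvalid).colorable
        have hcardeq : Fintype.card (Fin Γ × Option (Fin (colBound n w))) =
            Γ * (colBound n w + 1) := by simp
        rw [hcardeq] at hcolorable
        exact hcolorable.mono (le_of_eq rfl)
      · -- disconnected case
        rcases isEmpty_or_nonempty V with hemp | hne
        · exact ⟨SimpleGraph.Coloring.mk (fun v => isEmptyElim v)
            (fun {v} _ _ => isEmptyElim v)⟩
        have hnpre : ¬ G.Preconnected := fun h => hconn ⟨h⟩
        obtain ⟨v₀⟩ := hne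
        set s : Set V := {x | G.Reachable v₀ x} with hs
        have hclosed : ∀ {x y : V}, G.Adj x y → (x ∈ s ↔ y ∈ s) := by
          intro x y hxy
          constructor
          · intro hx; exact hx.trans hxy.reachable
          · intro hy; exact hy.trans hxy.symm.reachable
        have hv₀ : v₀ ∈ s := SimpleGraph.Reachable.refl v₀
        have hcompl : ∃ x, x ∉ s := by
          by_contra hall
          push_neg at hall
          apply hnpre
          intro a b
          exact (hall a).symm.trans (hall b)
        obtain ⟨x₀, hx₀⟩ := hcompl
        have hcards : Fintype.card ↥s ≤ m ∧ Fintype.card ↥(sᶜ) ≤ m := by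
          have hcompl : Fintype.card ↥(sᶜ) = Fintype.card V - Fintype.card ↥s := by
            have he : Fintype.card ↥(sᶜ) = Fintype.card {x // ¬ x ∈ s} :=
              Fintype.card_congr (Equiv.subtypeEquivRight (fun x => Set.mem_compl_iff s x))
            rw [he, Fintype.card_subtype_compl]
          have hle : Fintype.card ↥s ≤ Fintype.card V := Fintype.card_subtype_le _
          have h2 : 0 < Fintype.card ↥s := Fintype.card_pos_iff.mpr ⟨⟨v₀, hv₀⟩⟩
          have h3 : 0 < Fintype.card ↥(sᶜ) := Fintype.card_pos_iff.mpr ⟨⟨x₀, hx₀⟩⟩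
          omega
        have c1 : (G.induce s).Colorable (colBound n (w + 1)) := by
          refine ihm ↥s (G.induce s) hcards.1 ?_ ?_ ?_
          · exact fun h => hK (HasInducedCopy.of_induce _ h)
          · exact fun h => hS (HasInducedCopy.of_induce _ h)
          · exact fun h => hP (HasInducedCopy.of_induce _ h)
        have c2 : (G.induce (sᶜ)).Colorable (colBound n (w + 1)) := by
          refine ihm ↥(sᶜ) (G.induce (sᶜ)) hcards.2 ?_ ?_ ?_
          · exact fun h => hK (HasInducedCopy.of_induce _ h)
          · exact fun h => hS (HasInducedCopy.of_induce _ h)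
          · exact fun h => hP (HasInducedCopy.of_induce _ h)
        obtain ⟨C1⟩ := c1
        obtain ⟨C2⟩ := c2
        refine ⟨SimpleGraph.Coloring.mk
          (fun v => if h : v ∈ s then C1 ⟨v, h⟩ else C2 ⟨v, h⟩) ?_⟩
        intro v v' hadj
        show (if h : v ∈ s then C1 ⟨v, h⟩ else C2 ⟨v, h⟩) ≠
          (if h : v' ∈ s then C1 ⟨v', h⟩ else C2 ⟨v', h⟩)
        by_cases h : v ∈ s
        · have h' : v' ∈ s := (hclosed hadj).mp h
          rw [dif_pos h, dif_pos h']
          exact C1.valid (by simpa using hadj)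
        · have h' : v' ∉ s := fun hh => h ((hclosed hadj).mpr hh)
          rw [dif_neg h, dif_neg h']
          exact C2.valid (by simpa using hadj)

end Color

section Assemble

theorem coverNumber_le {V : Type*} {pred : Set V → Prop} (P : Finset (Set V))
    (h : IsCoverBy P pred) : coverNumber pred ≤ P.card :=
  Nat.sInf_le ⟨P, rfl, h⟩

/-- Main lemma of the hard direction. -/
theorem insc_le_of_free {V : Type} [Fintype V] {G : SimpleGraph V} {n : ℕ} (hn : 4 ≤ n)
    (hconn : G.Connected)
    (hK : ¬HasInducedCopy G (completeGraph (Fin n)))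
    (hS : ¬HasInducedCopy G (SStar n))
    (hP : ¬HasInducedCopy G (pathGraph n)) :
    insc G ≤ (ramB1 n + 1) ^ n * (colBound n (n - 1) + 1) := by
  classical
  obtain ⟨D, hDcard, hDdom⟩ := exists_dominating hn hconn hK hS hP
  have hK' : ¬ HasInducedCopy G (completeGraph (Fin (n - 1 + 1))) := by
    rw [show n - 1 + 1 = n from by omega]; exact hK
  have hcolorable : G.Colorable (colBound n (n - 1)) :=
    colorable_rec n hn (n - 1) (by omega) V G hK' hS hP
  set X := colBound n (n - 1) with hX
  obtain ⟨C⟩ := hcolorable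
  choose fd hfd1 hfd2 using hDdom
  -- star sets
  let L : V → Fin X → Set V := fun d j => {x | fd x = d ∧ x ≠ d ∧ C x = j}
  let SetS : V → Fin X → Set V := fun d j => insert d (L d j)
  have hLadj : ∀ d j, ∀ x ∈ L d j, G.Adj d x := by
    rintro d j x ⟨h1, h2, _⟩
    rcases hfd2 x with h | h
    · rw [h1] at h; exact absurd h.symm h2
    · rwa [h1] at h
  have hLind : ∀ d j, ∀ x ∈ L d j, ∀ x' ∈ L d j, x ≠ x' → ¬ G.Adj x x' := by
    rintro d j x ⟨_, _, h3⟩ x' ⟨_, _, h3'⟩ _ hadj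
    exact C.valid hadj (h3.trans h3'.symm)
  have hstar : ∀ d j, IsInducedStarSet G (SetS d j) ∨ IsSingletonSet (SetS d j) := by
    intro d j
    rcases Set.eq_empty_or_nonempty (L d j) with hLe | hLne
    · right
      exact ⟨d, by simp [SetS, hLe]⟩
    · left
      haveI : Fintype ↥(L d j) := Fintype.ofFinite _
      set m := Fintype.card ↥(L d j) with hm
      have hm1 : 1 ≤ m := Fintype.card_pos_iff.mpr (hLne.to_subtype)
      let eL : ↥(L d j) ≃ Fin m := Fintype.equivFinOfCardEq rfl
      have hdL : d ∉ L d j := fun hd => hd.2.1 rfl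
      let ψ : Unit ⊕ Fin m → ↥(SetS d j) := Sum.elim
        (fun _ => ⟨d, Set.mem_insert _ _⟩)
        (fun k => ⟨(eL.symm k : V), Set.mem_insert_of_mem _ (eL.symm k).2⟩)
      have hbij : Function.Bijective ψ := by
        constructor
        · rintro (⟨⟩ | k) (⟨⟩ | k') hab <;>
            simp only [ψ, Sum.elim_inl, Sum.elim_inr, Subtype.mk.injEq] at hab
          · rfl
          · exact absurd hab (Ne.symm (eL.symm k').2.2.1)
          · exact absurd hab ((eL.symm k).2.2.1)
          · rw [eL.symm.injective (Subtype.ext hab)]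
        · rintro ⟨x, hx⟩
          rcases hx with rfl | hx
          · exact ⟨Sum.inl (), rfl⟩
          · refine ⟨Sum.inr (eL ⟨x, hx⟩), ?_⟩
            simp only [ψ, Sum.elim_inr, Equiv.symm_apply_apply]
      refine ⟨m, hm1, ⟨?_⟩⟩
      refine (RelIso.mk (Equiv.ofBijective ψ hbij) ?_).symm
      rintro (⟨⟩ | k) (⟨⟩ | k') <;>
        simp only [Equiv.ofBijective_apply, ψ, Sum.elim_inl, Sum.elim_inr]
      · constructor
        · intro h
          exact absurd (show G.Adj d d by simpa using h) (G.irrefl)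
        · intro h
          exact absurd h (by simp [_root_.starGraph])
      · constructor
        · intro _; simp [_root_.starGraph]
        · intro _
          simpa using hLadj d j _ (eL.symm k').2
      · constructor
        · intro _; simp [_root_.starGraph]
        · intro _
          simpa using (hLadj d j _ (eL.symm k).2).symm
      · constructor
        · intro h
          exfalso
          have h' : G.Adj (eL.symm k : V) (eL.symm k' : V) := by simpa using h
          by_cases hkk : k = k'
          · subst hkk; exact G.irrefl h'
          · exact hLind d j _ (eL.symm k).2 _ (eL.symm k').2
              (fun e => hkk (eL.symm.injective (Subtype.ext e))) h'
        · intro h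
          exact absurd h (by simp [_root_.starGraph])
  -- the cover
  let P : Finset (Set V) :=
    ((D ×ˢ (Finset.univ : Finset (Fin X))).image (fun p => SetS p.1 p.2)) ∪
      (D.image (fun d => ({d} : Set V)))
  have hcover : IsCoverBy P (fun S => IsInducedStarSet G S ∨ IsSingletonSet S) := by
    constructor
    · intro S hs
      rcases Finset.mem_union.mp hs with h | h
      · obtain ⟨⟨d, j⟩, _, rfl⟩ := Finset.mem_image.mp h
        exact hstar d j
      · obtain ⟨d, _, rfl⟩ := Finset.mem_image.mp h
        exact Or.inr ⟨d, rfl⟩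
    · intro v
      by_cases hv : fd v = v
      · refine ⟨{v}, Finset.mem_union_right _ ?_, rfl⟩
        exact Finset.mem_image.mpr ⟨v, hv ▸ hfd1 v, rfl⟩
      · refine ⟨SetS (fd v) (C v), Finset.mem_union_left _ ?_, ?_⟩
        · exact Finset.mem_image.mpr ⟨(fd v, C v),
            Finset.mem_product.mpr ⟨hfd1 v, Finset.mem_univ _⟩, rfl⟩
        · exact Set.mem_insert_of_mem _ ⟨rfl, fun e => hv e.symm, rfl⟩
  have hcard : P.card ≤ (ramB1 n + 1) ^ n * X + (ramB1 n + 1) ^ n := by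
    have h1 : ((D ×ˢ (Finset.univ : Finset (Fin X))).image
        (fun p => SetS p.1 p.2)).card ≤ D.card * X := by
      calc _ ≤ (D ×ˢ (Finset.univ : Finset (Fin X))).card := Finset.card_image_le
        _ = D.card * X := by rw [Finset.card_product, Finset.card_univ, Fintype.card_fin]
    have h2 : (D.image (fun d => ({d} : Set V))).card ≤ D.card := Finset.card_image_le
    calc P.card ≤ _ + _ := Finset.card_union_le _ _
      _ ≤ D.card * X + D.card := by omega
      _ ≤ (ramB1 n + 1) ^ n * X + (ramB1 n + 1) ^ n := by
          have := Nat.mul_le_mul_right X hDcard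
          omega
  calc insc G ≤ P.card := coverNumber_le P hcover
    _ ≤ (ramB1 n + 1) ^ n * X + (ramB1 n + 1) ^ n := hcard
    _ = (ramB1 n + 1) ^ n * (X + 1) := by ring

end Assemble

section Easy

theorem exists_min_cover {V : Type} [Fintype V] (G : SimpleGraph V) :
    ∃ P : Finset (Set V), P.card = insc G ∧
      IsCoverBy P (fun S => IsInducedStarSet G S ∨ IsSingletonSet S) := by
  classical
  have hcov : IsCoverBy ((Finset.univ : Finset V).image (fun v => ({v} : Set V)))
      (fun S => IsInducedStarSet G S ∨ IsSingletonSet S) := by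
    constructor
    · intro S hS
      obtain ⟨v, _, rfl⟩ := Finset.mem_image.mp hS
      exact Or.inr ⟨v, rfl⟩
    · intro v
      exact ⟨{v}, Finset.mem_image.mpr ⟨v, Finset.mem_univ v, rfl⟩, rfl⟩
  obtain ⟨P, h1, h2⟩ := Nat.sInf_mem (⟨_, _, rfl, hcov⟩ :
    {k | ∃ P : Finset (Set V), P.card = k ∧ IsCoverBy P
      (fun S => IsInducedStarSet G S ∨ IsSingletonSet S)}.Nonempty)
  exact ⟨P, h1, h2⟩

theorem card_le_of_cover {V : Type} [Fintype V] {P : Finset (Set V)}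
    (hcov : ∀ v : V, ∃ S ∈ P, v ∈ S) {b : ℕ}
    (hb : ∀ S ∈ P, ∀ (_ : Fintype ↥S), Fintype.card ↥S ≤ b) :
    Fintype.card V ≤ P.card * b := by
  classical
  have hsub : (Finset.univ : Finset V) ⊆ P.biUnion (fun S => S.toFinset) := by
    intro v _
    obtain ⟨S, hS, hv⟩ := hcov v
    exact Finset.mem_biUnion.mpr ⟨S, hS, Set.mem_toFinset.mpr hv⟩
  calc Fintype.card V = (Finset.univ : Finset V).card := (Finset.card_univ).symm
    _ ≤ (P.biUnion (fun S => S.toFinset)).card := Finset.card_le_card hsub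
    _ ≤ ∑ S ∈ P, S.toFinset.card := Finset.card_biUnion_le
    _ ≤ ∑ _S ∈ P, b := Finset.sum_le_sum (fun S hS => by
        rw [Set.toFinset_card]; exact hb S hS _)
    _ = P.card * b := by rw [Finset.sum_const, smul_eq_mul]

theorem card_of_starSet {V : Type*} {G : SimpleGraph V} {S : Set V} [Fintype ↥S]
    {m : ℕ} (φ : (G.induce S) ≃g _root_.starGraph m) : Fintype.card ↥S = m + 1 := by
  have h := Fintype.card_congr φ.toEquiv
  rw [h]
  simp [add_comm]

theorem starSet_card_le_complete {W : Type} {S : Set W} [Fintype ↥S]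
    (h : IsInducedStarSet (completeGraph W) S ∨ IsSingletonSet S) :
    Fintype.card ↥S ≤ 2 := by
  rcases h with ⟨m, _, ⟨φ⟩⟩ | ⟨v, rfl⟩
  · have hcard := card_of_starSet φ
    suffices hm : m ≤ 1 by omega
    by_contra hm2
    push_neg at hm2
    set a := φ.symm (Sum.inr ⟨0, by omega⟩) with ha
    set b := φ.symm (Sum.inr ⟨1, by omega⟩) with hb
    have hne : a ≠ b := by
      intro e
      have := φ.symm.toEquiv.injective e
      simp only [Sum.inr.injEq, Fin.mk.injEq] at this
      omega
    have hnadj : ¬ ((completeGraph W).induce S).Adj a b := by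
      rw [φ.symm.map_rel_iff]
      simp [_root_.starGraph]
    apply hnadj
    have : (a : W) ≠ (b : W) := fun e => hne (Subtype.ext e)
    simpa using hne
  · refine le_of_eq ?_ |>.trans (by omega : (1:ℕ) ≤ 2)
    exact Fintype.card_eq_one_iff.mpr ⟨⟨v, rfl⟩, fun y => Subtype.ext y.2⟩

theorem starSet_card_le_path {M : ℕ} {S : Set (Fin M)} [Fintype ↥S]
    (h : IsInducedStarSet (pathGraph M) S ∨ IsSingletonSet S) :
    Fintype.card ↥S ≤ 3 := by
  rcases h with ⟨m, _, ⟨φ⟩⟩ | ⟨v, rfl⟩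
  · have hcard := card_of_starSet φ
    suffices hm : m ≤ 2 by omega
    by_contra hm2
    push_neg at hm2
    set x := φ.symm (Sum.inl ()) with hx
    have hl : ∀ k : Fin m, (pathGraph M).Adj (x : Fin M) ((φ.symm (Sum.inr k) : Fin M)) := by
      intro k
      have : ((pathGraph M).induce S).Adj x (φ.symm (Sum.inr k)) := by
        rw [φ.symm.map_rel_iff]
        simp [_root_.starGraph]
      simpa using this
    have hinj : ∀ k k' : Fin m, k ≠ k' →
        ((φ.symm (Sum.inr k) : Fin M) : ℕ) ≠ ((φ.symm (Sum.inr k') : Fin M) : ℕ) := by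
      intro k k' hkk e
      apply hkk
      have : φ.symm (Sum.inr k) = φ.symm (Sum.inr k') := Subtype.ext (Fin.ext e)
      simpa using φ.symm.toEquiv.injective this
    have h0 := hl ⟨0, by omega⟩
    have h1 := hl ⟨1, by omega⟩
    have h2 := hl ⟨2, by omega⟩
    rw [pathGraph_adj] at h0 h1 h2
    have d01 := hinj ⟨0, by omega⟩ ⟨1, by omega⟩ (by simp)
    have d02 := hinj ⟨0, by omega⟩ ⟨2, by omega⟩ (by simp)
    have d12 := hinj ⟨1, by omega⟩ ⟨2, by omega⟩ (by simp)
    omega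
  · refine le_of_eq ?_ |>.trans (by omega : (1:ℕ) ≤ 3)
    exact Fintype.card_eq_one_iff.mpr ⟨⟨v, rfl⟩, fun y => Subtype.ext y.2⟩

theorem sstar_zz_not_adj {m : ℕ} (p q : Fin m) :
    ¬ (SStar m).Adj (Sum.inr (Sum.inr p)) (Sum.inr (Sum.inr q)) := by
  rw [sStar_adj]
  rintro ⟨i', ⟨h1, h2⟩ | ⟨h1, h2⟩ | ⟨h1, h2⟩ | ⟨h1, h2⟩⟩ <;> simp_all

theorem sstar_z_nbr {m : ℕ} (w : Unit ⊕ Fin m ⊕ Fin m) (p : Fin m)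
    (h : (SStar m).Adj w (Sum.inr (Sum.inr p))) : w = Sum.inr (Sum.inl p) := by
  rw [sStar_adj] at h
  obtain ⟨i', ⟨h1, h2⟩ | ⟨h1, h2⟩ | ⟨h1, h2⟩ | ⟨h1, h2⟩⟩ := h <;> simp_all

theorem sstar_no_two_z {m : ℕ} {S : Set (Unit ⊕ Fin m ⊕ Fin m)}
    (h : IsInducedStarSet (SStar m) S ∨ IsSingletonSet S) (i j : Fin m) (hij : i ≠ j)
    (hi : Sum.inr (Sum.inr i) ∈ S) (hj : Sum.inr (Sum.inr j) ∈ S) : False := by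
  have hzne : (Sum.inr (Sum.inr i) : Unit ⊕ Fin m ⊕ Fin m) ≠ Sum.inr (Sum.inr j) := by
    simp [hij]
  rcases h with ⟨ms, _, ⟨φ⟩⟩ | ⟨v, hv⟩
  · set zi : ↥S := ⟨Sum.inr (Sum.inr i), hi⟩ with hzi
    set zj : ↥S := ⟨Sum.inr (Sum.inr j), hj⟩ with hzj
    have hzzne : zi ≠ zj := fun e => hzne (congrArg Subtype.val e)
    have hkey : ∀ (u u' : ↥S), (_root_.starGraph ms).Adj (φ u) (φ u') → (SStar m).Adj u.val u'.val := by
      intro u u' hadj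
      rw [φ.map_rel_iff] at hadj
      simpa using hadj
    rcases hφi : φ zi with ⟨⟩ | k <;> rcases hφj : φ zj with ⟨⟩ | k'
    · exact hzzne (φ.toEquiv.injective (hφi.trans hφj.symm))
    · refine sstar_zz_not_adj i j (hkey zi zj ?_)
      rw [hφi, hφj]; simp [_root_.starGraph]
    · refine sstar_zz_not_adj j i (hkey zj zi ?_)
      rw [hφi, hφj]; simp [_root_.starGraph]
    · have hkk : k ≠ k' := by
        intro e
        have heq : φ zi = φ zj := by rw [hφi, hφj, e]
        exact hzzne (φ.toEquiv.injective heq)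
      set w : ↥S := φ.symm (Sum.inl ()) with hw
      have hwi : (SStar m).Adj w.val zi.val := by
        apply hkey
        rw [hφi]
        have : φ w = Sum.inl () := by rw [hw]; exact φ.apply_symm_apply _
        rw [this]; simp [_root_.starGraph]
      have hwj : (SStar m).Adj w.val zj.val := by
        apply hkey
        rw [hφj]
        have : φ w = Sum.inl () := by rw [hw]; exact φ.apply_symm_apply _
        rw [this]; simp [_root_.starGraph]
      have e1 := sstar_z_nbr _ _ hwi
      have e2 := sstar_z_nbr _ _ hwj
      rw [e1] at e2
      simp only [Sum.inr.injEq, Sum.inl.injEq] at e2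
      exact hij e2
  · apply hzne
    rw [hv] at hi hj
    rw [hi, hj]

theorem sStar_connected (m : ℕ) : (SStar m).Connected := by
  have hx : ∀ a : Unit ⊕ Fin m ⊕ Fin m, (SStar m).Reachable a (Sum.inl ()) := by
    rintro (⟨⟩ | (i | i))
    · exact SimpleGraph.Reachable.refl _
    · exact (SimpleGraph.Adj.reachable
        (sStar_adj.mpr ⟨i, Or.inl ⟨rfl, rfl⟩⟩)).symm
    · have h1 : (SStar m).Adj (Sum.inr (Sum.inl i)) (Sum.inr (Sum.inr i)) :=
        sStar_adj.mpr ⟨i, Or.inr (Or.inr (Or.inl ⟨rfl, rfl⟩))⟩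
      have h2 : (SStar m).Adj (Sum.inl ()) (Sum.inr (Sum.inl i)) :=
        sStar_adj.mpr ⟨i, Or.inl ⟨rfl, rfl⟩⟩
      exact (h1.reachable.symm).trans h2.reachable.symm
  constructor
  intro a b
  exact (hx a).trans (hx b).symm

theorem insc_complete_lb (c : ℕ) : ¬ (insc (completeGraph (Fin (2 * c + 2))) ≤ c) := by
  classical
  intro hle
  obtain ⟨P, hPc, hPcov⟩ := exists_min_cover (completeGraph (Fin (2 * c + 2)))
  have hcount := card_le_of_cover hPcov.2 (b := 2)
    (fun S hS inst => @starSet_card_le_complete _ S inst (hPcov.1 S hS))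
  rw [Fintype.card_fin] at hcount
  omega

theorem insc_path_lb (c : ℕ) : ¬ (insc (pathGraph (3 * c + 3)) ≤ c) := by
  classical
  intro hle
  obtain ⟨P, hPc, hPcov⟩ := exists_min_cover (pathGraph (3 * c + 3))
  have hcount := card_le_of_cover hPcov.2 (b := 3)
    (fun S hS inst => @starSet_card_le_path _ S inst (hPcov.1 S hS))
  rw [Fintype.card_fin] at hcount
  omega

theorem insc_sstar_lb (c : ℕ) : ¬ (insc (SStar (c + 1)) ≤ c) := by
  classical
  intro hle
  obtain ⟨P, hPc, hPcov⟩ := exists_min_cover (SStar (c + 1))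
  choose F hF1 hF2 using fun i : Fin (c + 1) => hPcov.2 (Sum.inr (Sum.inr i))
  have hinj : Function.Injective (fun i => (⟨F i, hF1 i⟩ : {S // S ∈ P})) := by
    intro i j hFij
    by_contra hne
    have hFij' : F i = F j := congrArg Subtype.val hFij
    have hji : Sum.inr (Sum.inr j) ∈ F i := by rw [hFij']; exact hF2 j
    exact sstar_no_two_z (hPcov.1 (F i) (hF1 i)) i j hne (hF2 i) hji
  have := Fintype.card_le_of_injective _ hinj
  rw [Fintype.card_fin, Fintype.card_coe] at this
  omega

end Easy
theorem statement_11 (N : ℕ) (k : Fin N → ℕ) (ℋ : ∀ i : Fin N, SimpleGraph (Fin (k i)))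
    (hconn : ∀ i, (ℋ i).Connected) :
    (∃ c : ℕ, ∀ (V : Type) [Fintype V] (G : SimpleGraph V),
        G.Connected → (∀ i, ¬ HasInducedCopy G (ℋ i)) → insc G ≤ c) ↔
      ∃ n : ℕ, 4 ≤ n ∧
        (∃ i, HasInducedCopy (completeGraph (Fin n)) (ℋ i)) ∧
        (∃ i, HasInducedCopy (SStar n) (ℋ i)) ∧
        (∃ i, HasInducedCopy (pathGraph n) (ℋ i)) := by
  constructor
  · -- forward direction
    rintro ⟨c, hc⟩
    by_cases hA : ∃ M, ∃ i, HasInducedCopy (completeGraph (Fin M)) (ℋ i)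
    · by_cases hB : ∃ M, ∃ i, HasInducedCopy (SStar M) (ℋ i)
      · by_cases hC : ∃ M, ∃ i, HasInducedCopy (pathGraph M) (ℋ i)
        · obtain ⟨a, ia, hKa⟩ := hA
          obtain ⟨b, ib, hSb⟩ := hB
          obtain ⟨p, ip, hPp⟩ := hC
          exact ⟨a + b + p + 4, by omega,
            ⟨ia, (completeGraph_mono (by omega)).trans' hKa⟩,
            ⟨ib, (sStar_mono (by omega)).trans' hSb⟩,
            ⟨ip, (pathGraph_mono (by omega)).trans' hPp⟩⟩
        · exfalso
          push_neg at hC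
          have hconn' : (pathGraph (3 * c + 3)).Connected := by
            have h := SimpleGraph.pathGraph_connected (3 * c + 2)
            have heq : 3 * c + 2 + 1 = 3 * c + 3 := by omega
            rwa [heq] at h
          exact insc_path_lb c (hc _ _ hconn' (fun i => hC _ i))
      · exfalso
        push_neg at hB
        exact insc_sstar_lb c (hc _ (SStar (c + 1)) (sStar_connected (c + 1))
          (fun i => hB _ i))
    · exfalso
      push_neg at hA
      have hconn' : (completeGraph (Fin (2 * c + 2))).Connected := by
        rw [completeGraph_eq_top]
        exact connected_top
      exact insc_complete_lb c (hc _ _ hconn' (fun i => hA _ i))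
  · -- backward direction
    rintro ⟨n, hn4, ⟨i1, hK⟩, ⟨i2, hS⟩, ⟨i3, hP⟩⟩
    refine ⟨(ramB1 n + 1) ^ n * (colBound n (n - 1) + 1), ?_⟩
    intro V _ G hGconn hfree
    refine insc_le_of_free hn4 hGconn ?_ ?_ ?_
    · exact fun h => hfree i1 (h.trans' hK)
    · exact fun h => hfree i2 (h.trans' hS)
    · exact fun h => hfree i3 (h.trans' hP)
end

section
/- Let ℋ be a finite family of connected finite simple graphs. Then ℋ satisfies (P-insp) if and only if there exists an integer n ≥ 4 such that ℋ ≤ {K_n, S*_n, S̃_n, P_n}. -/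
open SimpleGraph

section Part1

variable {V : Type*}

/-- `s` is a clique. -/
def CliqueF (G : SimpleGraph V) (s : Finset V) : Prop :=
  ∀ u ∈ s, ∀ v ∈ s, u ≠ v → G.Adj u v

/-- `s` is independent. -/
def IndepF (G : SimpleGraph V) (s : Finset V) : Prop :=
  ∀ u ∈ s, ∀ v ∈ s, ¬ G.Adj u v

theorem hasInducedCopy_trans {V₁ V₂ V₃ : Type*} {G : SimpleGraph V₁} {H : SimpleGraph V₂}
    {K : SimpleGraph V₃} (h1 : HasInducedCopy G H) (h2 : HasInducedCopy H K) :
    HasInducedCopy G K := by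
  obtain ⟨f, hf⟩ := h1
  obtain ⟨g, hg⟩ := h2
  exact ⟨g.trans f, fun a b => (hf (g a) (g b)).trans (hg a b)⟩

/-- Ramsey numbers. -/
def myRam : ℕ → ℕ → ℕ
  | 0, _ => 0
  | _ + 1, 0 => 0
  | a + 1, b + 1 => myRam a (b + 1) + myRam (a + 1) b + 1

theorem myRam_spec (a : ℕ) : ∀ (b : ℕ) {V : Type*} (G : SimpleGraph V) (s : Finset V),
    myRam a b ≤ s.card →
    (∃ t ⊆ s, t.card = a ∧ CliqueF G t) ∨ (∃ t ⊆ s, t.card = b ∧ IndepF G t) := by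
  induction a with
  | zero =>
    intro b V G s _
    exact Or.inl ⟨∅, Finset.empty_subset s, Finset.card_empty, fun u hu => absurd hu (by simp)⟩
  | succ a iha =>
    intro b
    induction b with
    | zero =>
      intro V G s _
      exact Or.inr ⟨∅, Finset.empty_subset s, Finset.card_empty, fun u hu => absurd hu (by simp)⟩
    | succ b ihb =>
      intro V G s hcard
      classical
      have hpos : 0 < s.card := by
        have : 0 < myRam (a + 1) (b + 1) := by simp [myRam]
        omega
      obtain ⟨v, hv⟩ := Finset.card_pos.mp hpos
      set A := (s.erase v).filter (fun w => G.Adj v w) with hA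
      set B := (s.erase v).filter (fun w => ¬ G.Adj v w) with hB
      have hAB : A.card + B.card = s.card - 1 := by
        rw [hA, hB, Finset.card_filter_add_card_filter_not, Finset.card_erase_of_mem hv]
      have hram : myRam (a + 1) (b + 1) = myRam a (b + 1) + myRam (a + 1) b + 1 := by
        simp [myRam]
      have hcase : myRam a (b + 1) ≤ A.card ∨ myRam (a + 1) b ≤ B.card := by omega
      rcases hcase with h | h
      · rcases iha (b + 1) G A h with ⟨t, hts, htc, htq⟩ | ⟨t, hts, htc, hti⟩
        · left
          refine ⟨insert v t, ?_, ?_, ?_⟩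
          · intro x hx
            rcases Finset.mem_insert.mp hx with rfl | hx
            · exact hv
            · exact (Finset.mem_erase.mp (Finset.mem_filter.mp (hts hx)).1).2
          · have hvt : v ∉ t := by
              intro hvt
              exact (Finset.mem_erase.mp (Finset.mem_filter.mp (hts hvt)).1).1 rfl
            rw [Finset.card_insert_of_notMem hvt, htc]
          · intro x hx y hy hxy
            rcases Finset.mem_insert.mp hx with hx' | hx' <;>
              rcases Finset.mem_insert.mp hy with hy' | hy'
            · exact absurd (hx'.trans hy'.symm) hxy
            · subst hx'
              exact (Finset.mem_filter.mp (hts hy')).2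
            · subst hy'
              exact ((Finset.mem_filter.mp (hts hx')).2).symm
            · exact htq x hx' y hy' hxy
        · right
          refine ⟨t, fun x hx => (Finset.mem_erase.mp (Finset.mem_filter.mp (hts hx)).1).2, htc, hti⟩
      · rcases ihb G B h with ⟨t, hts, htc, htq⟩ | ⟨t, hts, htc, hti⟩
        · left
          refine ⟨t, fun x hx => (Finset.mem_erase.mp (Finset.mem_filter.mp (hts hx)).1).2, htc, htq⟩
        · right
          refine ⟨insert v t, ?_, ?_, ?_⟩
          · intro x hx
            rcases Finset.mem_insert.mp hx with rfl | hx
            · exact hv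
            · exact (Finset.mem_erase.mp (Finset.mem_filter.mp (hts hx)).1).2
          · have hvt : v ∉ t := by
              intro hvt
              exact (Finset.mem_erase.mp (Finset.mem_filter.mp (hts hvt)).1).1 rfl
            rw [Finset.card_insert_of_notMem hvt, htc]
          · intro x hx y hy
            rcases Finset.mem_insert.mp hx with hx' | hx' <;>
              rcases Finset.mem_insert.mp hy with hy' | hy'
            · subst hx'; subst hy'; exact G.loopless.irrefl _
            · subst hx'
              exact (Finset.mem_filter.mp (hts hy')).2
            · subst hy'
              intro hadj
              exact (Finset.mem_filter.mp (hts hx')).2 hadj.symm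
            · exact hti x hx' y hy'

theorem copy_of_clique {n : ℕ} (G : SimpleGraph V) (t : Finset V) (ht : t.card = n)
    (hc : CliqueF G t) : HasInducedCopy G (completeGraph (Fin n)) := by
  classical
  have e : Fin n ≃ {x // x ∈ t} := (Fintype.equivFinOfCardEq (by simp [ht])).symm
  refine ⟨⟨fun i => (e i : V), ?_⟩, ?_⟩
  · intro i j hij
    exact e.injective (Subtype.ext hij)
  · intro i j
    simp only [completeGraph, top_adj]
    constructor
    · intro h hij
      subst hij
      exact G.loopless.irrefl _ h
    · intro hij
      refine hc _ (e i).2 _ (e j).2 ?_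
      intro hcon
      exact hij (e.injective (Subtype.ext hcon))

end Part1

section Part2

variable {V : Type*}

theorem SStar_adj {n : ℕ} (a b : Unit ⊕ Fin n ⊕ Fin n) : (SStar n).Adj a b ↔
    (∃ i, a = Sum.inl () ∧ b = Sum.inr (Sum.inl i)) ∨
    (∃ i, b = Sum.inl () ∧ a = Sum.inr (Sum.inl i)) ∨
    (∃ i, a = Sum.inr (Sum.inl i) ∧ b = Sum.inr (Sum.inr i)) ∨
    (∃ i, b = Sum.inr (Sum.inl i) ∧ a = Sum.inr (Sum.inr i)) := by
  rw [SStar, SimpleGraph.fromRel_adj]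
  constructor
  · rintro ⟨hne, (⟨i, rfl, rfl⟩ | ⟨i, rfl, rfl⟩) | (⟨i, rfl, rfl⟩ | ⟨i, rfl, rfl⟩)⟩
    · exact Or.inl ⟨i, rfl, rfl⟩
    · exact Or.inr (Or.inr (Or.inl ⟨i, rfl, rfl⟩))
    · exact Or.inr (Or.inl ⟨i, rfl, rfl⟩)
    · exact Or.inr (Or.inr (Or.inr ⟨i, rfl, rfl⟩))
  · rintro (⟨i, rfl, rfl⟩ | ⟨i, rfl, rfl⟩ | ⟨i, rfl, rfl⟩ | ⟨i, rfl, rfl⟩)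
    · exact ⟨by simp, Or.inl (Or.inl ⟨i, rfl, rfl⟩)⟩
    · exact ⟨by simp, Or.inr (Or.inl ⟨i, rfl, rfl⟩)⟩
    · exact ⟨by simp, Or.inl (Or.inr ⟨i, rfl, rfl⟩)⟩
    · exact ⟨by simp, Or.inr (Or.inr ⟨i, rfl, rfl⟩)⟩

theorem STilde_adj {n : ℕ} (a b : Unit ⊕ Fin n ⊕ Fin n) : (STilde n).Adj a b ↔
    (∃ i, a = Sum.inl () ∧ b = Sum.inr (Sum.inl i)) ∨
    (∃ i, b = Sum.inl () ∧ a = Sum.inr (Sum.inl i)) ∨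
    (∃ i, a = Sum.inr (Sum.inl i) ∧ b = Sum.inr (Sum.inr i)) ∨
    (∃ i, b = Sum.inr (Sum.inl i) ∧ a = Sum.inr (Sum.inr i)) ∨
    (∃ i, a = Sum.inl () ∧ b = Sum.inr (Sum.inr i)) ∨
    (∃ i, b = Sum.inl () ∧ a = Sum.inr (Sum.inr i)) := by
  rw [STilde, SimpleGraph.fromRel_adj]
  constructor
  · rintro ⟨hne, (⟨i, rfl, rfl⟩ | ⟨i, rfl, rfl⟩ | ⟨i, rfl, rfl⟩) |
      (⟨i, rfl, rfl⟩ | ⟨i, rfl, rfl⟩ | ⟨i, rfl, rfl⟩)⟩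
    · exact Or.inl ⟨i, rfl, rfl⟩
    · exact Or.inr (Or.inr (Or.inl ⟨i, rfl, rfl⟩))
    · exact Or.inr (Or.inr (Or.inr (Or.inr (Or.inl ⟨i, rfl, rfl⟩))))
    · exact Or.inr (Or.inl ⟨i, rfl, rfl⟩)
    · exact Or.inr (Or.inr (Or.inr (Or.inl ⟨i, rfl, rfl⟩)))
    · exact Or.inr (Or.inr (Or.inr (Or.inr (Or.inr ⟨i, rfl, rfl⟩))))
  · rintro (⟨i, rfl, rfl⟩ | ⟨i, rfl, rfl⟩ | ⟨i, rfl, rfl⟩ | ⟨i, rfl, rfl⟩ | ⟨i, rfl, rfl⟩ |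
      ⟨i, rfl, rfl⟩)
    · exact ⟨by simp, Or.inl (Or.inl ⟨i, rfl, rfl⟩)⟩
    · exact ⟨by simp, Or.inr (Or.inl ⟨i, rfl, rfl⟩)⟩
    · exact ⟨by simp, Or.inl (Or.inr (Or.inl ⟨i, rfl, rfl⟩))⟩
    · exact ⟨by simp, Or.inr (Or.inr (Or.inl ⟨i, rfl, rfl⟩))⟩
    · exact ⟨by simp, Or.inl (Or.inr (Or.inr ⟨i, rfl, rfl⟩))⟩
    · exact ⟨by simp, Or.inr (Or.inr (Or.inr ⟨i, rfl, rfl⟩))⟩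

theorem copy_SStar {n : ℕ} (G : SimpleGraph V) (c : V) (y z : Fin n → V)
    (hcy : ∀ i, G.Adj c (y i)) (hcz : ∀ i, ¬ G.Adj c (z i)) (hcz' : ∀ i, c ≠ z i)
    (hyz : ∀ i, G.Adj (y i) (z i)) (hyz' : ∀ i j, i ≠ j → ¬ G.Adj (y i) (z j))
    (hyy : ∀ i j, ¬ G.Adj (y i) (y j)) (hzz : ∀ i j, ¬ G.Adj (z i) (z j))
    (hzI : Function.Injective z) :
    HasInducedCopy G (SStar n) := by
  have hyI : Function.Injective y := by
    intro i j hij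
    by_contra hne
    exact hyz' i j hne (hij ▸ hyz j)
  have hyzne : ∀ i j, y i ≠ z j := by
    intro i j h
    by_cases hij : i = j
    · subst hij; exact G.loopless.irrefl _ (h ▸ hyz i)
    · exact hcz j (h ▸ hcy i)
  have hcy' : ∀ i, c ≠ y i := fun i => (hcy i).ne
  refine ⟨⟨Sum.elim (fun _ => c) (Sum.elim y z), ?_⟩, ?_⟩
  · rintro (⟨⟩ | i | i) (⟨⟩ | j | j) h <;> simp only [Sum.elim_inl, Sum.elim_inr] at h
    · rfl
    · exact absurd h (hcy' j)
    · exact absurd h (hcz' j)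
    · exact absurd h.symm (hcy' i)
    · rw [hyI h]
    · exact absurd h (hyzne i j)
    · exact absurd h.symm (hcz' i)
    · exact absurd h.symm (hyzne j i)
    · rw [hzI h]
  · rintro (⟨⟩ | i | i) (⟨⟩ | j | j) <;>
      (erw [Function.Embedding.coeFn_mk]; simp only [Sum.elim_inl, Sum.elim_inr])
    · simpa [SStar_adj] using G.loopless.irrefl c
    · simpa [SStar_adj] using hcy j
    · simpa [SStar_adj] using hcz j
    · simpa [SStar_adj] using (hcy i).symm
    · simpa [SStar_adj] using hyy i j
    · rw [SStar_adj]
      constructor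
      · intro h
        by_cases hij : i = j
        · subst hij
          exact Or.inr (Or.inr (Or.inl ⟨i, rfl, rfl⟩))
        · exact absurd h (hyz' i j hij)
      · rintro (⟨k, h1, h2⟩ | ⟨k, h1, h2⟩ | ⟨k, h1, h2⟩ | ⟨k, h1, h2⟩) <;>
          simp only [Sum.inl.injEq, Sum.inr.injEq, reduceCtorEq] at h1 h2
        subst h1; subst h2; exact hyz _
    · simpa [SStar_adj] using fun h => hcz i h.symm
    · rw [SStar_adj]
      constructor
      · intro h
        by_cases hij : j = i
        · subst hij
          exact Or.inr (Or.inr (Or.inr ⟨j, rfl, rfl⟩))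
        · exact absurd h.symm (hyz' j i hij)
      · rintro (⟨k, h1, h2⟩ | ⟨k, h1, h2⟩ | ⟨k, h1, h2⟩ | ⟨k, h1, h2⟩) <;>
          simp only [Sum.inl.injEq, Sum.inr.injEq, reduceCtorEq] at h1 h2
        subst h1; subst h2; exact (hyz _).symm
    · simpa [SStar_adj] using hzz i j

theorem copy_STilde {n : ℕ} (G : SimpleGraph V) (c : V) (y z : Fin n → V)
    (hcy : ∀ i, G.Adj c (y i)) (hcz : ∀ i, G.Adj c (z i))
    (hyz : ∀ i, G.Adj (y i) (z i)) (hyz' : ∀ i j, i ≠ j → ¬ G.Adj (y i) (z j))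
    (hyy : ∀ i j, ¬ G.Adj (y i) (y j)) (hzz : ∀ i j, ¬ G.Adj (z i) (z j))
    (hzI : Function.Injective z) :
    HasInducedCopy G (STilde n) := by
  have hyI : Function.Injective y := by
    intro i j hij
    by_contra hne
    exact hyz' i j hne (hij ▸ hyz j)
  have hyzne : ∀ i j, y i ≠ z j := by
    intro i j h
    by_cases hij : i = j
    · subst hij; exact G.loopless.irrefl _ (h ▸ hyz i)
    · have := hyz j
      rw [← h] at this
      exact hyy j i this
  have hcy' : ∀ i, c ≠ y i := fun i => (hcy i).ne
  have hcz' : ∀ i, c ≠ z i := fun i => (hcz i).ne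
  refine ⟨⟨Sum.elim (fun _ => c) (Sum.elim y z), ?_⟩, ?_⟩
  · rintro (⟨⟩ | i | i) (⟨⟩ | j | j) h <;> simp only [Sum.elim_inl, Sum.elim_inr] at h
    · rfl
    · exact absurd h (hcy' j)
    · exact absurd h (hcz' j)
    · exact absurd h.symm (hcy' i)
    · rw [hyI h]
    · exact absurd h (hyzne i j)
    · exact absurd h.symm (hcz' i)
    · exact absurd h.symm (hyzne j i)
    · rw [hzI h]
  · rintro (⟨⟩ | i | i) (⟨⟩ | j | j) <;>
      (erw [Function.Embedding.coeFn_mk]; simp only [Sum.elim_inl, Sum.elim_inr])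
    · simpa [STilde_adj] using G.loopless.irrefl c
    · simpa [STilde_adj] using hcy j
    · simpa [STilde_adj] using hcz j
    · simpa [STilde_adj] using (hcy i).symm
    · simpa [STilde_adj] using hyy i j
    · rw [STilde_adj]
      constructor
      · intro h
        by_cases hij : i = j
        · subst hij
          exact Or.inr (Or.inr (Or.inl ⟨i, rfl, rfl⟩))
        · exact absurd h (hyz' i j hij)
      · rintro (⟨k, h1, h2⟩ | ⟨k, h1, h2⟩ | ⟨k, h1, h2⟩ | ⟨k, h1, h2⟩ | ⟨k, h1, h2⟩ |
          ⟨k, h1, h2⟩) <;>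
          simp only [Sum.inl.injEq, Sum.inr.injEq, reduceCtorEq] at h1 h2
        subst h1; subst h2; exact hyz _
    · simpa [STilde_adj] using (hcz i).symm
    · rw [STilde_adj]
      constructor
      · intro h
        by_cases hij : j = i
        · subst hij
          exact Or.inr (Or.inr (Or.inr (Or.inl ⟨j, rfl, rfl⟩)))
        · exact absurd h.symm (hyz' j i hij)
      · rintro (⟨k, h1, h2⟩ | ⟨k, h1, h2⟩ | ⟨k, h1, h2⟩ | ⟨k, h1, h2⟩ | ⟨k, h1, h2⟩ |
          ⟨k, h1, h2⟩) <;>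
          simp only [Sum.inl.injEq, Sum.inr.injEq, reduceCtorEq] at h1 h2
        subst h1; subst h2; exact (hyz _).symm
    · simpa [STilde_adj] using hzz i j

end Part2

section Part3

variable {V : Type*}

theorem copy_path {n : ℕ} (G : SimpleGraph V) (w : ℕ → V)
    (hadj : ∀ i, i + 1 < n → G.Adj (w i) (w (i + 1)))
    (hnadj : ∀ i j, j < n → i + 2 ≤ j → ¬ G.Adj (w i) (w j))
    (hinj : ∀ i j, i < j → j < n → w i ≠ w j) :
    HasInducedCopy G (pathGraph n) := by
  refine ⟨⟨fun i => w i.val, ?_⟩, ?_⟩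
  · intro i j h
    by_contra hne
    rcases lt_trichotomy i.val j.val with hlt | heq | hlt
    · exact hinj _ _ hlt j.isLt h
    · exact hne (Fin.ext heq)
    · exact hinj _ _ hlt i.isLt h.symm
  · intro i j
    erw [Function.Embedding.coeFn_mk]
    rw [pathGraph_adj]
    constructor
    · intro h
      by_contra hc
      push_neg at hc
      rcases lt_trichotomy i.val j.val with hlt | heq | hlt
      · exact hnadj i.val j.val j.isLt (by omega) h
      · exact G.loopless.irrefl _ ((Fin.ext heq : i = j) ▸ h)
      · exact hnadj j.val i.val i.isLt (by omega) h.symm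
    · rintro (h | h)
      · rw [← h]
        exact hadj i.val (by omega)
      · rw [← h]
        exact (hadj j.val (by omega)).symm

theorem lift_complete {m n : ℕ} (h : m ≤ n) :
    HasInducedCopy (completeGraph (Fin n)) (completeGraph (Fin m)) := by
  refine ⟨Fin.castLEEmb h, ?_⟩
  intro a b
  simp only [completeGraph, top_adj, ne_eq, Fin.castLEEmb_apply]
  rw [not_iff_not]
  exact ⟨fun hh => Fin.castLE_injective h hh, fun hh => by rw [hh]⟩

theorem lift_path {m n : ℕ} (h : m ≤ n) :
    HasInducedCopy (pathGraph n) (pathGraph m) := by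
  refine ⟨Fin.castLEEmb h, ?_⟩
  intro a b
  rw [pathGraph_adj, pathGraph_adj]
  simp

theorem lift_SStar {m n : ℕ} (h : m ≤ n) : HasInducedCopy (SStar n) (SStar m) := by
  refine ⟨⟨Sum.map id (Sum.map (Fin.castLE h) (Fin.castLE h)), ?_⟩, ?_⟩
  · exact Sum.map_injective.mpr ⟨fun a b hh => hh,
      Sum.map_injective.mpr ⟨Fin.castLE_injective h, Fin.castLE_injective h⟩⟩
  · rintro (⟨⟩ | i | i) (⟨⟩ | j | j) <;>
      simp [SStar_adj]

theorem lift_STilde {m n : ℕ} (h : m ≤ n) : HasInducedCopy (STilde n) (STilde m) := by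
  refine ⟨⟨Sum.map id (Sum.map (Fin.castLE h) (Fin.castLE h)), ?_⟩, ?_⟩
  · exact Sum.map_injective.mpr ⟨fun a b hh => hh,
      Sum.map_injective.mpr ⟨Fin.castLE_injective h, Fin.castLE_injective h⟩⟩
  · rintro (⟨⟩ | i | i) (⟨⟩ | j | j) <;>
      simp [STilde_adj]

theorem complete_connected {n : ℕ} (h : 0 < n) : (completeGraph (Fin n)).Connected := by
  rw [connected_iff]
  refine ⟨fun a b => ?_, ⟨⟨0, h⟩⟩⟩
  by_cases hab : a = b
  · exact hab ▸ Reachable.refl a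
  · exact SimpleGraph.Adj.reachable (by simp [hab])

theorem path_connected {n : ℕ} (h : 0 < n) : (pathGraph n).Connected := by
  obtain ⟨m, rfl⟩ : ∃ m, n = m + 1 := ⟨n - 1, by omega⟩
  exact pathGraph_connected m

theorem SStar_connected (n : ℕ) : (SStar n).Connected := by
  rw [connected_iff]
  refine ⟨fun a b => ?_, ⟨Sum.inl ()⟩⟩
  have hub : ∀ a, (SStar n).Reachable (Sum.inl ()) a := by
    rintro (⟨⟩ | i | i)
    · exact Reachable.refl _
    · exact SimpleGraph.Adj.reachable ((SStar_adj _ _).mpr (Or.inl ⟨i, rfl, rfl⟩))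
    · refine Reachable.trans (SimpleGraph.Adj.reachable ((SStar_adj _ _).mpr
        (Or.inl ⟨i, rfl, rfl⟩))) (SimpleGraph.Adj.reachable ((SStar_adj _ _).mpr
        (Or.inr (Or.inr (Or.inl ⟨i, rfl, rfl⟩)))))
  exact (hub a).symm.trans (hub b)

theorem STilde_connected (n : ℕ) : (STilde n).Connected := by
  rw [connected_iff]
  refine ⟨fun a b => ?_, ⟨Sum.inl ()⟩⟩
  have hub : ∀ a, (STilde n).Reachable (Sum.inl ()) a := by
    rintro (⟨⟩ | i | i)
    · exact Reachable.refl _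
    · exact SimpleGraph.Adj.reachable ((STilde_adj _ _).mpr (Or.inl ⟨i, rfl, rfl⟩))
    · exact SimpleGraph.Adj.reachable ((STilde_adj _ _).mpr
        (Or.inr (Or.inr (Or.inr (Or.inr (Or.inl ⟨i, rfl, rfl⟩))))))
  exact (hub a).symm.trans (hub b)

end Part3

section Part4

variable {V : Type*}

theorem insp_le [Fintype V] (G : SimpleGraph V) (P : Finset (Set V))
    (h : IsPartitionBy P (fun S => IsInducedStarSet G S ∨ IsSingletonSet S)) :
    insp G ≤ P.card :=
  Nat.sInf_le ⟨P, rfl, h⟩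

theorem exists_insp_partition [Fintype V] (G : SimpleGraph V) :
    ∃ P : Finset (Set V),
      IsPartitionBy P (fun S => IsInducedStarSet G S ∨ IsSingletonSet S) ∧ P.card = insp G := by
  classical
  set pred : Set V → Prop := fun S => IsInducedStarSet G S ∨ IsSingletonSet S with hpred
  have h0 : IsPartitionBy (Finset.univ.image (fun v => ({v} : Set V))) pred := by
    refine ⟨⟨?_, ?_⟩, ?_⟩
    · intro S hS
      obtain ⟨v, _, rfl⟩ := Finset.mem_image.mp hS
      exact Or.inr ⟨v, rfl⟩
    · intro v
      exact ⟨{v}, Finset.mem_image.mpr ⟨v, Finset.mem_univ v, rfl⟩, rfl⟩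
    · intro S hS T hT hST v hvS hvT
      obtain ⟨a, _, rfl⟩ := Finset.mem_image.mp hS
      obtain ⟨b, _, rfl⟩ := Finset.mem_image.mp hT
      rw [Set.mem_singleton_iff] at hvS hvT
      exact hST (by rw [← hvS, ← hvT])
  have hmem : insp G ∈ {k | ∃ P : Finset (Set V), P.card = k ∧ IsPartitionBy P pred} := by
    apply Nat.sInf_mem
    exact ⟨_, _, rfl, h0⟩
  obtain ⟨P, hcard, hP⟩ := hmem
  exact ⟨P, hP, hcard⟩

/-- In a star (or singleton) part, there are no two disjoint edges. -/
theorem star_part_no_matching (G : SimpleGraph V) {S : Set V}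
    (h : IsInducedStarSet G S ∨ IsSingletonSet S) {a b a' b' : V}
    (ha : a ∈ S) (hb : b ∈ S) (ha' : a' ∈ S) (hb' : b' ∈ S)
    (hab : a ≠ a') (hab2 : a ≠ b') (hba : b ≠ a') (hbb : b ≠ b')
    (e1 : G.Adj a b) (e2 : G.Adj a' b') : False := by
  rcases h with ⟨m, _, ⟨e⟩⟩ | ⟨v, rfl⟩
  · have key : ∀ (x y : V) (hx : x ∈ S) (hy : y ∈ S), G.Adj x y →
        e ⟨x, hx⟩ = Sum.inl () ∨ e ⟨y, hy⟩ = Sum.inl () := by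
      intro x y hx hy hxy
      have : (_root_.starGraph m).Adj (e ⟨x, hx⟩) (e ⟨y, hy⟩) := e.map_rel_iff.mpr hxy
      rcases hA : e ⟨x, hx⟩ with u | u <;> rcases hB : e ⟨y, hy⟩ with w | w
      · exact Or.inl (by rfl)
      · exact Or.inl (by rfl)
      · exact Or.inr (by rfl)
      · rw [hA, hB] at this
        simp [_root_.starGraph, completeBipartiteGraph] at this
    have inj : ∀ (x y : V) (hx : x ∈ S) (hy : y ∈ S), x ≠ y →
        e ⟨x, hx⟩ ≠ e ⟨y, hy⟩ := by
      intro x y hx hy hxy hcon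
      exact hxy (Subtype.mk_eq_mk.mp (e.toEquiv.injective hcon))
    rcases key a b ha hb e1 with h1 | h1 <;> rcases key a' b' ha' hb' e2 with h2 | h2
    · exact inj a a' ha ha' hab (h1.trans h2.symm)
    · exact inj a b' ha hb' hab2 (h1.trans h2.symm)
    · exact inj b a' hb ha' hba (h1.trans h2.symm)
    · exact inj b b' hb hb' hbb (h1.trans h2.symm)
  · rw [Set.mem_singleton_iff] at ha hb
    rw [ha, hb] at e1
    exact G.loopless.irrefl v e1

/-- In a star (or singleton) part, two distinct nonadjacent vertices have a common
neighbour inside the part. -/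
theorem star_part_common (G : SimpleGraph V) {S : Set V}
    (h : IsInducedStarSet G S ∨ IsSingletonSet S) {a b : V}
    (ha : a ∈ S) (hb : b ∈ S) (hab : a ≠ b) (hnadj : ¬ G.Adj a b) :
    ∃ w ∈ S, G.Adj a w ∧ G.Adj b w := by
  rcases h with ⟨m, _, ⟨e⟩⟩ | ⟨v, rfl⟩
  · have hAB : e ⟨a, ha⟩ ≠ e ⟨b, hb⟩ := by
      intro hcon
      exact hab (Subtype.mk_eq_mk.mp (e.toEquiv.injective hcon))
    have hnadj' : ¬ (_root_.starGraph m).Adj (e ⟨a, ha⟩) (e ⟨b, hb⟩) := by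
      intro hcon
      exact hnadj (e.map_rel_iff.mp hcon)
    rcases hA : e ⟨a, ha⟩ with u | u
    · rcases hB : e ⟨b, hb⟩ with w | w
      · rw [hA, hB] at hAB
        exact (hAB (by cases u; cases w; rfl)).elim
      · rw [hA, hB] at hnadj'
        exact absurd (by simp [_root_.starGraph, completeBipartiteGraph]) hnadj'
    · rcases hB : e ⟨b, hb⟩ with w | w
      · rw [hA, hB] at hnadj'
        exact absurd (by simp [_root_.starGraph, completeBipartiteGraph]) hnadj'
      · refine ⟨(e.symm (Sum.inl ())).1, (e.symm (Sum.inl ())).2, ?_, ?_⟩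
        · have : (_root_.starGraph m).Adj (e ⟨a, ha⟩) (e (e.symm (Sum.inl ()))) := by
            rw [hA, e.apply_symm_apply]
            simp [_root_.starGraph, completeBipartiteGraph]
          exact e.map_rel_iff.mp this
        · have : (_root_.starGraph m).Adj (e ⟨b, hb⟩) (e (e.symm (Sum.inl ()))) := by
            rw [hB, e.apply_symm_apply]
            simp [_root_.starGraph, completeBipartiteGraph]
          exact e.map_rel_iff.mp this
  · rw [Set.mem_singleton_iff] at ha hb
    exact absurd (ha.trans hb.symm) hab

/-- Star parts contain no triangle. -/
theorem star_part_no_triangle (G : SimpleGraph V) {S : Set V}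
    (h : IsInducedStarSet G S ∨ IsSingletonSet S) {a b c : V}
    (ha : a ∈ S) (hb : b ∈ S) (hc : c ∈ S)
    (hab : a ≠ b) (hac : a ≠ c) (hbc : b ≠ c)
    (e1 : G.Adj a b) (e2 : G.Adj b c) (e3 : G.Adj a c) : False := by
  rcases h with ⟨m, _, ⟨e⟩⟩ | ⟨v, rfl⟩
  · have key : ∀ (x y : V) (hx : x ∈ S) (hy : y ∈ S), G.Adj x y →
        e ⟨x, hx⟩ = Sum.inl () ∨ e ⟨y, hy⟩ = Sum.inl () := by
      intro x y hx hy hxy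
      have : (_root_.starGraph m).Adj (e ⟨x, hx⟩) (e ⟨y, hy⟩) := e.map_rel_iff.mpr hxy
      rcases hA : e ⟨x, hx⟩ with u | u <;> rcases hB : e ⟨y, hy⟩ with w | w
      · exact Or.inl (by rfl)
      · exact Or.inl (by rfl)
      · exact Or.inr (by rfl)
      · rw [hA, hB] at this
        simp [_root_.starGraph, completeBipartiteGraph] at this
    have inj : ∀ (x y : V) (hx : x ∈ S) (hy : y ∈ S), x ≠ y →
        e ⟨x, hx⟩ ≠ e ⟨y, hy⟩ := by
      intro x y hx hy hxy hcon
      exact hxy (Subtype.mk_eq_mk.mp (e.toEquiv.injective hcon))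
    rcases key a b ha hb e1 with h1 | h1
    · rcases key b c hb hc e2 with h2 | h2
      · exact inj a b ha hb hab (h1.trans h2.symm)
      · exact inj a c ha hc hac (h1.trans h2.symm)
    · rcases key a c ha hc e3 with h2 | h2
      · exact inj b a hb ha (Ne.symm hab) (h1.trans h2.symm)
      · exact inj b c hb hc hbc (h1.trans h2.symm)
  · rw [Set.mem_singleton_iff] at ha hb
    exact hab (ha.trans hb.symm)

theorem count_bound [Fintype V] [DecidableEq (Set V)] {pred : Set V → Prop}
    (P : Finset (Set V)) (hP : IsPartitionBy P pred) (W : Finset V) (b : Set V → ℕ)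
    (hb : ∀ S ∈ P, ∀ F : Finset V, F ⊆ W → (∀ v ∈ F, v ∈ S) → F.card ≤ b S) :
    W.card ≤ ∑ S ∈ P, b S := by
  classical
  have hex : ∀ v : V, ∃ S, S ∈ P ∧ v ∈ S := by
    intro v
    obtain ⟨S, hS, hv⟩ := hP.1.2 v
    exact ⟨S, hS, hv⟩
  choose f hfP hfv using hex
  rw [Finset.card_eq_sum_card_fiberwise (f := f) (fun x _ => hfP x)]
  refine Finset.sum_le_sum ?_
  intro S hS
  refine hb S hS _ (Finset.filter_subset _ _) ?_
  intro v hv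
  obtain ⟨hvW, hfS⟩ := Finset.mem_filter.mp hv
  exact hfS ▸ hfv v

end Part4

section Part5

theorem lb_complete {M : ℕ} (P : Finset (Set (Fin M)))
    (hP : IsPartitionBy P (fun S => IsInducedStarSet (completeGraph (Fin M)) S ∨ IsSingletonSet S)) :
    M ≤ 2 * P.card := by
  classical
  have hcb := count_bound P hP Finset.univ (fun _ => 2) ?_
  · calc M = (Finset.univ : Finset (Fin M)).card := by simp
    _ ≤ ∑ _S ∈ P, 2 := hcb
    _ = 2 * P.card := by rw [Finset.sum_const, smul_eq_mul, mul_comm]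
  · intro S hS F _ hFS
    show F.card ≤ 2
    by_contra hcon
    have h3 : 2 < F.card := by omega
    obtain ⟨a, b, c, haF, hbF, hcF, hab, hac, hbc⟩ := Finset.two_lt_card_iff.mp h3
    exact star_part_no_triangle _ (hP.1.1 S hS) (hFS a haF) (hFS b hbF) (hFS c hcF) hab hac hbc
      (by simp [completeGraph, hab]) (by simp [completeGraph, hbc]) (by simp [completeGraph, hac])

theorem lb_path {M : ℕ} (P : Finset (Set (Fin M)))
    (hP : IsPartitionBy P (fun S => IsInducedStarSet (pathGraph M) S ∨ IsSingletonSet S)) :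
    M ≤ 3 * P.card := by
  classical
  have hcb := count_bound P hP Finset.univ (fun _ => 3) ?_
  · calc M = (Finset.univ : Finset (Fin M)).card := by simp
    _ ≤ ∑ _S ∈ P, 3 := hcb
    _ = 3 * P.card := by rw [Finset.sum_const, smul_eq_mul, mul_comm]
  · intro S hS F _ hFS
    show F.card ≤ 3
    rcases F.eq_empty_or_nonempty with rfl | hne
    · simp
    · set a := F.min' hne with ha
      have key : ∀ v ∈ F, (a : ℕ) ≤ v ∧ (v : ℕ) ≤ (a : ℕ) + 2 := by
        intro v hv
        have h1 : (a : ℕ) ≤ (v : ℕ) := F.min'_le v hv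
        refine ⟨h1, ?_⟩
        by_cases hav : a = v
        · omega
        · by_cases hadj : (pathGraph M).Adj a v
          · rw [pathGraph_adj] at hadj
            omega
          · obtain ⟨w, _, hw1, hw2⟩ := star_part_common _ (hP.1.1 S hS)
              (hFS a (F.min'_mem hne)) (hFS v hv) hav hadj
            rw [pathGraph_adj] at hw1 hw2
            omega
      have himg : F.image Fin.val ⊆ Finset.Icc (a : ℕ) ((a : ℕ) + 2) := by
        intro x hx
        obtain ⟨v, hv, rfl⟩ := Finset.mem_image.mp hx
        exact Finset.mem_Icc.mpr ⟨(key v hv).1, (key v hv).2⟩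
      calc F.card = (F.image Fin.val).card :=
            (Finset.card_image_of_injective F Fin.val_injective).symm
        _ ≤ (Finset.Icc (a : ℕ) ((a : ℕ) + 2)).card := Finset.card_le_card himg
        _ = 3 := by rw [Nat.card_Icc]; omega

theorem SStar_nbr_z {M : ℕ} {w : Unit ⊕ Fin M ⊕ Fin M} {i : Fin M}
    (h : (SStar M).Adj (Sum.inr (Sum.inr i)) w) : w = Sum.inr (Sum.inl i) := by
  rw [SStar_adj] at h
  rcases h with ⟨k, h1, h2⟩ | ⟨k, h1, h2⟩ | ⟨k, h1, h2⟩ | ⟨k, h1, h2⟩ <;>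
    simp only [Sum.inl.injEq, Sum.inr.injEq, reduceCtorEq] at h1 h2 <;> simp_all

theorem SStar_zz {M : ℕ} {i j : Fin M} :
    ¬ (SStar M).Adj (Sum.inr (Sum.inr i)) (Sum.inr (Sum.inr j)) := by
  simp [SStar_adj]

theorem STilde_nbr_y {M : ℕ} {w : Unit ⊕ Fin M ⊕ Fin M} {i : Fin M}
    (h : (STilde M).Adj (Sum.inr (Sum.inl i)) w) : w = Sum.inl () ∨ w = Sum.inr (Sum.inr i) := by
  rw [STilde_adj] at h
  rcases h with ⟨k, h1, h2⟩ | ⟨k, h1, h2⟩ | ⟨k, h1, h2⟩ | ⟨k, h1, h2⟩ | ⟨k, h1, h2⟩ |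
    ⟨k, h1, h2⟩ <;>
    simp only [Sum.inl.injEq, Sum.inr.injEq, reduceCtorEq] at h1 h2 <;> simp_all

theorem STilde_nbr_z {M : ℕ} {w : Unit ⊕ Fin M ⊕ Fin M} {i : Fin M}
    (h : (STilde M).Adj (Sum.inr (Sum.inr i)) w) : w = Sum.inl () ∨ w = Sum.inr (Sum.inl i) := by
  rw [STilde_adj] at h
  rcases h with ⟨k, h1, h2⟩ | ⟨k, h1, h2⟩ | ⟨k, h1, h2⟩ | ⟨k, h1, h2⟩ | ⟨k, h1, h2⟩ |
    ⟨k, h1, h2⟩ <;>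
    simp only [Sum.inl.injEq, Sum.inr.injEq, reduceCtorEq] at h1 h2 <;> simp_all

theorem STilde_yy {M : ℕ} {i j : Fin M} :
    ¬ (STilde M).Adj (Sum.inr (Sum.inl i)) (Sum.inr (Sum.inl j)) := by
  simp [STilde_adj]

theorem STilde_zz {M : ℕ} {i j : Fin M} :
    ¬ (STilde M).Adj (Sum.inr (Sum.inr i)) (Sum.inr (Sum.inr j)) := by
  simp [STilde_adj]

theorem STilde_yz {M : ℕ} (i : Fin M) :
    (STilde M).Adj (Sum.inr (Sum.inl i)) (Sum.inr (Sum.inr i)) :=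
  (STilde_adj _ _).mpr (Or.inr (Or.inr (Or.inl ⟨i, rfl, rfl⟩)))

theorem lb_SStar {M : ℕ} (P : Finset (Set (Unit ⊕ Fin M ⊕ Fin M)))
    (hP : IsPartitionBy P (fun S => IsInducedStarSet (SStar M) S ∨ IsSingletonSet S)) :
    M ≤ P.card := by
  classical
  set W : Finset (Unit ⊕ Fin M ⊕ Fin M) :=
    Finset.univ.image (fun i : Fin M => Sum.inr (Sum.inr i)) with hW
  have hWcard : W.card = M := by
    rw [hW, Finset.card_image_of_injective _ (fun a b hab => by simpa using hab)]
    simp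
  have hcb := count_bound P hP W (fun _ => 1) ?_
  · calc M = W.card := hWcard.symm
    _ ≤ ∑ _S ∈ P, 1 := hcb
    _ = P.card := by simp
  · intro S hS F hFW hFS
    show F.card ≤ 1
    by_contra hcon
    have h2 : 1 < F.card := by omega
    obtain ⟨x, y, hxF, hyF, hxy⟩ := Finset.one_lt_card_iff.mp h2
    obtain ⟨i, _, rfl⟩ := Finset.mem_image.mp (hFW hxF)
    obtain ⟨j, _, rfl⟩ := Finset.mem_image.mp (hFW hyF)
    obtain ⟨w, hwS, hw1, hw2⟩ := star_part_common _ (hP.1.1 S hS) (hFS _ hxF) (hFS _ hyF)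
      hxy SStar_zz
    have e1 := SStar_nbr_z hw1
    have e2 := SStar_nbr_z hw2
    rw [e1] at e2
    have : i = j := by simpa using e2
    exact hxy (by rw [this])

theorem lb_STilde {M : ℕ} (hM : 1 ≤ M) (P : Finset (Set (Unit ⊕ Fin M ⊕ Fin M)))
    (hP : IsPartitionBy P (fun S => IsInducedStarSet (STilde M) S ∨ IsSingletonSet S)) :
    M + 1 ≤ 2 * P.card := by
  classical
  set yv : Fin M → Unit ⊕ Fin M ⊕ Fin M := fun i => Sum.inr (Sum.inl i) with hyv
  set zv : Fin M → Unit ⊕ Fin M ⊕ Fin M := fun i => Sum.inr (Sum.inr i) with hzv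
  have hyinj : Function.Injective yv := fun a b hab => by simpa [hyv] using hab
  have hzinj : Function.Injective zv := fun a b hab => by simpa [hzv] using hab
  set W : Finset (Unit ⊕ Fin M ⊕ Fin M) :=
    Finset.univ.image yv ∪ Finset.univ.image zv with hW
  have hdisj : Disjoint (Finset.univ.image yv) (Finset.univ.image zv) := by
    rw [Finset.disjoint_left]
    intro x hx hx'
    obtain ⟨i, _, rfl⟩ := Finset.mem_image.mp hx
    obtain ⟨j, _, hj⟩ := Finset.mem_image.mp hx'
    simp [hyv, hzv] at hj
  have hWcard : W.card = 2 * M := by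
    rw [hW, Finset.card_union_of_disjoint hdisj,
      Finset.card_image_of_injective _ hyinj, Finset.card_image_of_injective _ hzinj]
    simp
    omega
  have hcb := count_bound P hP W
    (fun S => if Sum.inl () ∈ S then M + 1 else 2) ?_
  · have hsum : ∑ S ∈ P, (if Sum.inl () ∈ S then M + 1 else 2) ≤ 2 * P.card + (M - 1) := by
      have hone : (P.filter (fun S => Sum.inl () ∈ S)).card ≤ 1 := by
        by_contra hcon
        have h2 : 1 < (P.filter (fun S => Sum.inl () ∈ S)).card := by omega
        obtain ⟨S, T, hSf, hTf, hST⟩ := Finset.one_lt_card_iff.mp h2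
        obtain ⟨hSP, hSx⟩ := Finset.mem_filter.mp hSf
        obtain ⟨hTP, hTx⟩ := Finset.mem_filter.mp hTf
        exact hP.2 S hSP T hTP hST _ hSx hTx
      calc ∑ S ∈ P, (if Sum.inl () ∈ S then M + 1 else 2)
          ≤ ∑ S ∈ P, (2 + if Sum.inl () ∈ S then M - 1 else 0) := by
            refine Finset.sum_le_sum ?_
            intro S _
            by_cases hx : Sum.inl () ∈ S <;> simp [hx] <;> omega
        _ = 2 * P.card + ∑ S ∈ P, (if Sum.inl () ∈ S then M - 1 else 0) := by
            rw [Finset.sum_add_distrib, Finset.sum_const, smul_eq_mul, mul_comm]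
        _ ≤ 2 * P.card + (M - 1) := by
            have heq : ∑ S ∈ P, (if Sum.inl () ∈ S then M - 1 else 0) =
                ∑ _S ∈ P.filter (fun S => Sum.inl () ∈ S), (M - 1) := by
              rw [Finset.sum_filter]
            rw [heq, Finset.sum_const, smul_eq_mul]
            have h2 : (P.filter (fun S => Sum.inl () ∈ S)).card * (M - 1) ≤ 1 * (M - 1) :=
              Nat.mul_le_mul_right _ hone
            omega
    have h1 : 2 * M ≤ 2 * P.card + (M - 1) := by
      rw [← hWcard]
      exact le_trans hcb hsum
    omega
  · intro S hS F hFW hFS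
    show F.card ≤ if Sum.inl () ∈ S then M + 1 else 2
    set IY : Finset (Fin M) := Finset.univ.filter (fun i => yv i ∈ F) with hIY
    set IZ : Finset (Fin M) := Finset.univ.filter (fun i => zv i ∈ F) with hIZ
    have hFeq : F = IY.image yv ∪ IZ.image zv := by
      apply Finset.Subset.antisymm
      · intro x hx
        rcases Finset.mem_union.mp (hFW hx) with hx' | hx'
        · obtain ⟨i, _, rfl⟩ := Finset.mem_image.mp hx'
          exact Finset.mem_union_left _ (Finset.mem_image.mpr
            ⟨i, Finset.mem_filter.mpr ⟨Finset.mem_univ i, hx⟩, rfl⟩)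
        · obtain ⟨i, _, rfl⟩ := Finset.mem_image.mp hx'
          exact Finset.mem_union_right _ (Finset.mem_image.mpr
            ⟨i, Finset.mem_filter.mpr ⟨Finset.mem_univ i, hx⟩, rfl⟩)
      · intro x hx
        rcases Finset.mem_union.mp hx with hx' | hx'
        · obtain ⟨i, hi, rfl⟩ := Finset.mem_image.mp hx'
          exact (Finset.mem_filter.mp hi).2
        · obtain ⟨i, hi, rfl⟩ := Finset.mem_image.mp hx'
          exact (Finset.mem_filter.mp hi).2
    have hcardF : F.card = IY.card + IZ.card := by
      rw [hFeq, Finset.card_union_of_disjoint, Finset.card_image_of_injective _ hyinj,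
        Finset.card_image_of_injective _ hzinj]
      rw [Finset.disjoint_left]
      intro x hx hx'
      obtain ⟨i, _, rfl⟩ := Finset.mem_image.mp hx
      obtain ⟨j, _, hj⟩ := Finset.mem_image.mp hx'
      simp [hyv, hzv] at hj
    by_cases hx : Sum.inl () ∈ S
    · rw [if_pos hx]
      have hinter : (IY ∩ IZ).card ≤ 1 := by
        by_contra hcon
        have h2 : 1 < (IY ∩ IZ).card := by omega
        obtain ⟨i, j, hiF, hjF, hij⟩ := Finset.one_lt_card_iff.mp h2
        have hi := Finset.mem_inter.mp hiF
        have hj := Finset.mem_inter.mp hjF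
        refine star_part_no_matching _ (hP.1.1 S hS)
          (hFS _ (Finset.mem_filter.mp hi.1).2) (hFS _ (Finset.mem_filter.mp hi.2).2)
          (hFS _ (Finset.mem_filter.mp hj.1).2) (hFS _ (Finset.mem_filter.mp hj.2).2)
          ?_ ?_ ?_ ?_ (STilde_yz i) (STilde_yz j) <;>
          simp [hyv, hzv, hij]
      have := Finset.card_union_add_card_inter IY IZ
      have hsub : (IY ∪ IZ).card ≤ M := by
        calc (IY ∪ IZ).card ≤ (Finset.univ : Finset (Fin M)).card :=
              Finset.card_le_card (Finset.subset_univ _)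
          _ = M := by simp
      omega
    · rw [if_neg hx]
      have hY1 : IY.card ≤ 1 := by
        by_contra hcon
        have h2 : 1 < IY.card := by omega
        obtain ⟨i, j, hiF, hjF, hij⟩ := Finset.one_lt_card_iff.mp h2
        have hi := (Finset.mem_filter.mp hiF).2
        have hj := (Finset.mem_filter.mp hjF).2
        obtain ⟨w, hwS, hw1, hw2⟩ := star_part_common _ (hP.1.1 S hS) (hFS _ hi) (hFS _ hj)
          (fun hc => hij (hyinj hc)) STilde_yy
        rcases STilde_nbr_y hw1 with rfl | rfl
        · exact hx hwS
        · rcases STilde_nbr_y hw2 with h' | h'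
          · simp at h'
          · have : j = i := by simpa using h'.symm
            exact hij this.symm
      have hZ1 : IZ.card ≤ 1 := by
        by_contra hcon
        have h2 : 1 < IZ.card := by omega
        obtain ⟨i, j, hiF, hjF, hij⟩ := Finset.one_lt_card_iff.mp h2
        have hi := (Finset.mem_filter.mp hiF).2
        have hj := (Finset.mem_filter.mp hjF).2
        obtain ⟨w, hwS, hw1, hw2⟩ := star_part_common _ (hP.1.1 S hS) (hFS _ hi) (hFS _ hj)
          (fun hc => hij (hzinj hc)) STilde_zz
        rcases STilde_nbr_z hw1 with rfl | rfl
        · exact hx hwS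
        · rcases STilde_nbr_z hw2 with h' | h'
          · simp at h'
          · have : j = i := by simpa using h'.symm
            exact hij this.symm
      omega

end Part5

section Part7

variable {V : Type*}

theorem dom_lemma [Fintype V] {n : ℕ} (G : SimpleGraph V)
    (hKfree : ¬ HasInducedCopy G (completeGraph (Fin n)))
    (hSfree : ¬ HasInducedCopy G (SStar n))
    (hTfree : ¬ HasInducedCopy G (STilde n))
    (c : V) (I W : Finset V)
    (hIc : ∀ v ∈ I, G.Adj c v) (hIind : IndepF G I)
    (hcW : c ∉ W)
    (hdom : ∀ w ∈ W, ∃ u ∈ I, G.Adj u w) :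
    ∃ U ⊆ I, U.card ≤ 2 * myRam n n ∧ ∀ w ∈ W, ∃ u ∈ U, G.Adj u w := by
  classical
  set D : Finset (Finset V) := I.powerset.filter (fun U => ∀ w ∈ W, ∃ u ∈ U, G.Adj u w)
    with hD
  have hDne : D.Nonempty := by
    refine ⟨I, Finset.mem_filter.mpr ⟨Finset.mem_powerset.mpr (Finset.Subset.refl I), hdom⟩⟩
  obtain ⟨U, hUD, hUmin⟩ := Finset.exists_min_image D Finset.card hDne
  have hUI : U ⊆ I := Finset.mem_powerset.mp (Finset.mem_filter.mp hUD).1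
  have hUdom : ∀ w ∈ W, ∃ u ∈ U, G.Adj u w := (Finset.mem_filter.mp hUD).2
  refine ⟨U, hUI, ?_, hUdom⟩
  by_contra hbig
  push_neg at hbig
  have hpriv : ∀ u : V, ∃ w : V, u ∈ U →
      w ∈ W ∧ G.Adj u w ∧ ∀ u' ∈ U, u' ≠ u → ¬ G.Adj u' w := by
    intro u
    by_cases hu : u ∈ U
    · by_contra hcon
      push_neg at hcon
      have hcon' : ∀ w ∈ W, G.Adj u w → ∃ u' ∈ U, u' ≠ u ∧ G.Adj u' w := by
        intro w hw hadj
        exact (hcon w).2 hw hadj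
      have hmem : U.erase u ∈ D := by
        refine Finset.mem_filter.mpr ⟨Finset.mem_powerset.mpr
          (Finset.Subset.trans (Finset.erase_subset u U) hUI), ?_⟩
        intro w hw
        obtain ⟨u0, hu0, hadj⟩ := hUdom w hw
        by_cases h0 : u0 = u
        · obtain ⟨u', hu', hne, hadj'⟩ := hcon' w hw (h0 ▸ hadj)
          exact ⟨u', Finset.mem_erase.mpr ⟨hne, hu'⟩, hadj'⟩
        · exact ⟨u0, Finset.mem_erase.mpr ⟨h0, hu0⟩, hadj⟩
      have hle := hUmin _ hmem
      rw [Finset.card_erase_of_mem hu] at hle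
      have hUpos : 0 < U.card := Finset.card_pos.mpr ⟨u, hu⟩
      omega
    · exact ⟨c, fun h => absurd h hu⟩
  choose pw hpw using hpriv
  have pwinj : ∀ u₁ ∈ U, ∀ u₂ ∈ U, pw u₁ = pw u₂ → u₁ = u₂ := by
    intro u₁ h₁ u₂ h₂ heq
    by_contra hne
    exact (hpw u₂ h₂).2.2 u₁ h₁ hne (heq ▸ (hpw u₁ h₁).2.1)
  set U1 := U.filter (fun u => G.Adj c (pw u)) with hU1
  set U2 := U.filter (fun u => ¬ G.Adj c (pw u)) with hU2
  have hsplit : U1.card + U2.card = U.card := by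
    rw [hU1, hU2, Finset.card_filter_add_card_filter_not]
  have hR : myRam n n ≤ U1.card ∨ myRam n n ≤ U2.card := by omega
  have main : ∀ (T : Finset V), T ⊆ U → myRam n n ≤ T.card →
      (∃ t ⊆ T.image pw, t.card = n ∧ IndepF G t) := by
    intro T hTU hTR
    have hinj : Set.InjOn pw T := fun a ha b hb heq => pwinj a (hTU ha) b (hTU hb) heq
    have hcard : (T.image pw).card = T.card := Finset.card_image_of_injOn hinj
    rcases myRam_spec n n G (T.image pw) (by omega) with ⟨t, hts, htc, htq⟩ | h
    · exact absurd (copy_of_clique G t htc htq) hKfree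
    · exact h
  have gety : ∀ (T : Finset V), T ⊆ U → ∀ (t : Finset V), t ⊆ T.image pw →
      ∀ x ∈ t, ∃ u ∈ T, pw u = x := by
    intro T _ t hts x hx
    obtain ⟨u, hu, rfl⟩ := Finset.mem_image.mp (hts hx)
    exact ⟨u, hu, rfl⟩
  rcases hR with hR | hR
  · -- STilde case
    obtain ⟨t, hts, htc, hti⟩ := main U1 (Finset.filter_subset _ _) hR
    have e : Fin n ≃ {x // x ∈ t} := (Fintype.equivFinOfCardEq (by simp [htc])).symm
    set z : Fin n → V := fun i => (e i).1 with hz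
    have hzt : ∀ i, z i ∈ t := fun i => (e i).2
    have hzinj : Function.Injective z := by
      intro i j hij
      exact e.injective (Subtype.ext hij)
    have hy : ∀ i : Fin n, ∃ u ∈ U1, pw u = z i := by
      intro i
      exact gety U1 (Finset.filter_subset _ _) t hts (z i) (hzt i)
    choose y hyU1 hypw using hy
    have hyU : ∀ i, y i ∈ U := fun i => Finset.mem_of_mem_filter _ (hyU1 i)
    refine hTfree (copy_STilde G c y z ?_ ?_ ?_ ?_ ?_ ?_ hzinj)
    · exact fun i => hIc _ (hUI (hyU i))
    · intro i
      have := (Finset.mem_filter.mp (hyU1 i)).2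
      exact (hypw i) ▸ this
    · intro i
      have := (hpw (y i) (hyU i)).2.1
      exact (hypw i) ▸ this
    · intro i j hij
      have hyne : y j ≠ y i := by
        intro hcon
        exact hij (hzinj ((hypw i) ▸ (hypw j) ▸ congrArg pw hcon.symm))
      have := (hpw (y j) (hyU j)).2.2 (y i) (hyU i) (by exact fun h => hyne h.symm)
      exact (hypw j) ▸ this
    · exact fun i j => hIind _ (hUI (hyU i)) _ (hUI (hyU j))
    · exact fun i j => hti _ (hzt i) _ (hzt j)
  · -- SStar case
    obtain ⟨t, hts, htc, hti⟩ := main U2 (Finset.filter_subset _ _) hR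
    have e : Fin n ≃ {x // x ∈ t} := (Fintype.equivFinOfCardEq (by simp [htc])).symm
    set z : Fin n → V := fun i => (e i).1 with hz
    have hzt : ∀ i, z i ∈ t := fun i => (e i).2
    have hzinj : Function.Injective z := by
      intro i j hij
      exact e.injective (Subtype.ext hij)
    have hy : ∀ i : Fin n, ∃ u ∈ U2, pw u = z i := by
      intro i
      exact gety U2 (Finset.filter_subset _ _) t hts (z i) (hzt i)
    choose y hyU2 hypw using hy
    have hyU : ∀ i, y i ∈ U := fun i => Finset.mem_of_mem_filter _ (hyU2 i)
    have hzW : ∀ i, z i ∈ W := by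
      intro i
      have := (hpw (y i) (hyU i)).1
      exact (hypw i) ▸ this
    refine hSfree (copy_SStar G c y z ?_ ?_ ?_ ?_ ?_ ?_ ?_ hzinj)
    · exact fun i => hIc _ (hUI (hyU i))
    · intro i
      have := (Finset.mem_filter.mp (hyU2 i)).2
      exact (hypw i) ▸ this
    · intro i hcon
      exact hcW (hcon ▸ hzW i)
    · intro i
      have := (hpw (y i) (hyU i)).2.1
      exact (hypw i) ▸ this
    · intro i j hij
      have hyne : y j ≠ y i := by
        intro hcon
        exact hij (hzinj ((hypw i) ▸ (hypw j) ▸ congrArg pw hcon.symm))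
      have := (hpw (y j) (hyU j)).2.2 (y i) (hyU i) (by exact fun h => hyne h.symm)
      exact (hypw j) ▸ this
    · exact fun i j => hIind _ (hUI (hyU i)) _ (hUI (hyU j))
    · exact fun i j => hti _ (hzt i) _ (hzt j)

end Part7

section Part8

variable {V : Type*} {G : SimpleGraph V}

theorem walk_getVert_front {u v : V} (p : G.Walk u v) :
    ∀ i : ℕ, ∃ q : G.Walk u (p.getVert i), q.length ≤ i := by
  induction p with
  | nil =>
    intro i
    exact ⟨SimpleGraph.Walk.nil, by simp⟩
  | cons h q ih =>
    intro i
    cases i with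
    | zero =>
      exact ⟨SimpleGraph.Walk.nil, Nat.le_of_eq rfl⟩
    | succ i =>
      obtain ⟨q', hq'⟩ := ih i
      rw [SimpleGraph.Walk.getVert_cons_succ]
      exact ⟨SimpleGraph.Walk.cons h q', by simp; omega⟩

theorem walk_getVert_back {u v : V} (p : G.Walk u v) :
    ∀ i : ℕ, ∃ q : G.Walk (p.getVert i) v, q.length ≤ p.length - i := by
  induction p with
  | nil =>
    intro i
    exact ⟨SimpleGraph.Walk.nil, by simp⟩
  | cons h q ih =>
    intro i
    cases i with
    | zero =>
      refine ⟨SimpleGraph.Walk.cons h q, ?_⟩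
      simp [SimpleGraph.Walk.getVert_zero]
      exact Nat.le_of_eq rfl
    | succ i =>
      obtain ⟨q', hq'⟩ := ih i
      rw [SimpleGraph.Walk.getVert_cons_succ]
      refine ⟨q', ?_⟩
      simp only [SimpleGraph.Walk.length_cons]
      omega

theorem dist_small (hconn : G.Connected) {n : ℕ}
    (hPfree : ¬ HasInducedCopy G (pathGraph n)) (hn : 1 ≤ n) (u v : V) :
    G.dist u v + 2 ≤ n := by
  by_contra hcon
  push_neg at hcon
  obtain ⟨p, hp⟩ := hconn.exists_walk_length_eq_dist u v
  set d := p.length with hd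
  have hdd : G.dist u v = d := hp.symm
  set w : ℕ → V := fun i => p.getVert i with hw
  have hdle : ∀ i, G.dist u (w i) ≤ i := by
    intro i
    obtain ⟨q, hq⟩ := walk_getVert_front p i
    exact le_trans (SimpleGraph.dist_le q) hq
  have hdge : ∀ i, G.dist (w i) v ≤ d - i := by
    intro i
    obtain ⟨q, hq⟩ := walk_getVert_back p i
    exact le_trans (SimpleGraph.dist_le q) hq
  have hde : ∀ i, i ≤ d → G.dist u (w i) = i := by
    intro i hi
    have htri := hconn.dist_triangle (u := u) (v := w i) (w := v)
    have h1 := hdle i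
    have h2 := hdge i
    omega
  have hadj : ∀ i, i < d → G.Adj (w i) (w (i + 1)) := by
    intro i hi
    exact p.adj_getVert_succ hi
  have hnadj : ∀ i j, j ≤ d → i + 2 ≤ j → ¬ G.Adj (w i) (w j) := by
    intro i j hj hij hadj'
    obtain ⟨q1, hq1⟩ := walk_getVert_front p i
    obtain ⟨q2, hq2⟩ := walk_getVert_back p j
    have := SimpleGraph.dist_le (q1.append (SimpleGraph.Walk.cons hadj' q2))
    rw [SimpleGraph.Walk.length_append, SimpleGraph.Walk.length_cons] at this
    omega
  have hinj : ∀ i j, i < j → j < n → w i ≠ w j := by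
    intro i j hij hj hcon'
    have h1 := hde i (by omega)
    have h2 := hde j (by omega)
    rw [hcon'] at h1
    omega
  refine hPfree (copy_path G w ?_ ?_ hinj)
  · intro i hi
    exact hadj i (by omega)
  · intro i j hj hij
    exact hnadj i j (by omega) hij

theorem step_back (hconn : G.Connected) {r v : V} {i : ℕ} (hd : G.dist r v = i + 1) :
    ∃ u, G.Adj u v ∧ G.dist r u = i := by
  obtain ⟨p, hp⟩ := hconn.exists_walk_length_eq_dist r v
  rw [hd] at hp
  refine ⟨p.getVert i, ?_, ?_⟩
  · have := p.adj_getVert_succ (i := i) (by omega)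
    rw [show i + 1 = p.length by omega, SimpleGraph.Walk.getVert_length] at this
    exact this
  · have h1 : G.dist r (p.getVert i) ≤ i := by
      obtain ⟨q, hq⟩ := walk_getVert_front p i
      exact le_trans (SimpleGraph.dist_le q) hq
    have h2 : G.dist (p.getVert i) v ≤ 1 := by
      obtain ⟨q, hq⟩ := walk_getVert_back p i
      refine le_trans (SimpleGraph.dist_le q) ?_
      omega
    have htri := hconn.dist_triangle (u := r) (v := p.getVert i) (w := v)
    omega

def GoodStar (G : SimpleGraph V) (c : V) (I : Finset V) : Prop :=
  (∀ v ∈ I, G.Adj c v) ∧ IndepF G I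

def covB (n : ℕ) : ℕ → ℕ
  | 0 => 0
  | j + 1 => 1 + (2 * myRam n n) * covB n j

theorem exists_max_indep [Fintype V] (G : SimpleGraph V) (S : Finset V) :
    ∃ I ⊆ S, IndepF G I ∧ ∀ w ∈ S, w ∉ I → ∃ u ∈ I, G.Adj u w := by
  classical
  have hne : (S.powerset.filter (fun t => IndepF G t)).Nonempty :=
    ⟨∅, Finset.mem_filter.mpr ⟨Finset.empty_mem_powerset S, fun u hu => absurd hu (by simp)⟩⟩
  obtain ⟨I, hID, hImax⟩ := Finset.exists_max_image _ Finset.card hne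
  obtain ⟨hIS, hIind⟩ := Finset.mem_filter.mp hID
  refine ⟨I, Finset.mem_powerset.mp hIS, hIind, ?_⟩
  intro w hwS hwI
  by_contra hno
  push_neg at hno
  have hmem : insert w I ∈ S.powerset.filter (fun t => IndepF G t) := by
    refine Finset.mem_filter.mpr ⟨Finset.mem_powerset.mpr ?_, ?_⟩
    · intro x hx
      rcases Finset.mem_insert.mp hx with rfl | hx
      · exact hwS
      · exact Finset.mem_powerset.mp hIS hx
    · intro x hx y hy
      rcases Finset.mem_insert.mp hx with hx' | hx' <;>
        rcases Finset.mem_insert.mp hy with hy' | hy'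
      · subst hx'; subst hy'; exact G.loopless.irrefl _
      · subst hx'
        intro hadj
        exact hno y hy' hadj.symm
      · subst hy'
        intro hadj
        exact hno x hx' hadj
      · exact hIind x hx' y hy'
  have hcard := hImax _ hmem
  rw [Finset.card_insert_of_notMem hwI] at hcard
  omega

theorem cover_rec [Fintype V] {n : ℕ} (G : SimpleGraph V)
    (hKfree : ¬ HasInducedCopy G (completeGraph (Fin n)))
    (hSfree : ¬ HasInducedCopy G (SStar n))
    (hTfree : ¬ HasInducedCopy G (STilde n)) :
    ∀ (j : ℕ) (K S : Finset V), K.Nonempty → CliqueF G K →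
      n ≤ K.card + j + 1 → (∀ s ∈ S, ∀ k ∈ K, G.Adj k s) →
      ∃ F : Finset (V × Finset V), F.card ≤ covB n j ∧
        (∀ p ∈ F, GoodStar G p.1 p.2 ∧ (p.1 ∈ S ∨ p.1 ∈ K) ∧ p.2 ⊆ S) ∧
        (∀ v ∈ S, ∃ p ∈ F, v = p.1 ∨ v ∈ p.2) := by
  intro j
  induction j with
  | zero =>
    intro K S hKne hKcl hcard hSK
    classical
    refine ⟨∅, by simp [covB], by simp, ?_⟩
    intro v hv
    exfalso
    have hvK : v ∉ K := fun hvK => G.loopless.irrefl v (hSK v hv v hvK)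
    have hclq : CliqueF G (insert v K) := by
      intro a ha b hb hab
      rcases Finset.mem_insert.mp ha with ha' | ha' <;>
        rcases Finset.mem_insert.mp hb with hb' | hb'
      · exact absurd (ha'.trans hb'.symm) hab
      · subst ha'
        exact (hSK a hv b hb').symm
      · subst hb'
        exact hSK b hv a ha'
      · exact hKcl a ha' b hb' hab
    have hcard' : n ≤ (insert v K).card := by
      rw [Finset.card_insert_of_notMem hvK]
      omega
    obtain ⟨t, hts, htc⟩ := Finset.exists_subset_card_eq hcard'
    exact hKfree (copy_of_clique G t htc (fun a ha b hb hab => hclq a (hts ha) b (hts hb) hab))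
  | succ j ih =>
    intro K S hKne hKcl hcard hSK
    classical
    obtain ⟨c, hc⟩ := hKne
    obtain ⟨I, hIS, hIind, hImax⟩ := exists_max_indep G S
    have hIc : ∀ v ∈ I, G.Adj c v := fun v hv => hSK v (hIS hv) c hc
    have hcS : c ∉ S := fun hcS => G.loopless.irrefl c (hSK c hcS c hc)
    set W := S.filter (fun w => w ∉ I) with hW
    have hWdom : ∀ w ∈ W, ∃ u ∈ I, G.Adj u w := by
      intro w hw
      obtain ⟨hw1, hw2⟩ := Finset.mem_filter.mp hw
      exact hImax w hw1 hw2
    obtain ⟨U, hUI, hUcard, hUdom⟩ := dom_lemma G hKfree hSfree hTfree c I W hIc hIind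
      (fun hcW => hcS (Finset.mem_filter.mp hcW).1) hWdom
    have hrec : ∀ u : V, u ∈ U → ∃ F : Finset (V × Finset V), F.card ≤ covB n j ∧
        (∀ p ∈ F, GoodStar G p.1 p.2 ∧
          (p.1 ∈ (W.filter (fun x => G.Adj u x)) ∨ p.1 ∈ insert u K) ∧
          p.2 ⊆ W.filter (fun x => G.Adj u x)) ∧
        (∀ v ∈ W.filter (fun x => G.Adj u x), ∃ p ∈ F, v = p.1 ∨ v ∈ p.2) := by
      intro u hu
      have huS : u ∈ S := hIS (hUI hu)
      have huK : u ∉ K := fun huK => G.loopless.irrefl u (hSK u huS u huK)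
      refine ih (insert u K) (W.filter (fun x => G.Adj u x))
        ⟨u, Finset.mem_insert_self u K⟩ ?_ ?_ ?_
      · intro a ha b hb hab
        rcases Finset.mem_insert.mp ha with ha' | ha' <;>
          rcases Finset.mem_insert.mp hb with hb' | hb'
        · exact absurd (ha'.trans hb'.symm) hab
        · subst ha'
          exact (hSK a huS b hb').symm
        · subst hb'
          exact hSK b huS a ha'
        · exact hKcl a ha' b hb' hab
      · rw [Finset.card_insert_of_notMem huK]
        omega
      · intro s hs k hk
        obtain ⟨hsW, hsadj⟩ := Finset.mem_filter.mp hs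
        rcases Finset.mem_insert.mp hk with hk' | hk'
        · subst hk'
          exact hsadj
        · exact hSK s (Finset.mem_filter.mp hsW).1 k hk'
    choose Φ hΦcard hΦgood hΦcov using hrec
    refine ⟨insert (c, I) (U.attach.biUnion (fun u => Φ u.1 u.2)), ?_, ?_, ?_⟩
    · calc (insert (c, I) (U.attach.biUnion (fun u => Φ u.1 u.2))).card
          ≤ (U.attach.biUnion (fun u => Φ u.1 u.2)).card + 1 := Finset.card_insert_le _ _
      _ ≤ (∑ u ∈ U.attach, (Φ u.1 u.2).card) + 1 :=
          Nat.add_le_add_right (Finset.card_biUnion_le) 1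
      _ ≤ (∑ _u ∈ U.attach, covB n j) + 1 :=
          Nat.add_le_add_right (Finset.sum_le_sum (fun u _ => hΦcard u.1 u.2)) 1
      _ = U.card * covB n j + 1 := by
          rw [Finset.sum_const, Finset.card_attach, smul_eq_mul]
      _ ≤ (2 * myRam n n) * covB n j + 1 :=
          Nat.add_le_add_right (Nat.mul_le_mul_right _ hUcard) 1
      _ = covB n (j + 1) := by rw [covB]; omega
    · intro p hp
      rcases Finset.mem_insert.mp hp with hp' | hp'
      · subst hp'
        exact ⟨⟨hIc, hIind⟩, Or.inr hc, hIS⟩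
      · obtain ⟨u, _, hpu⟩ := Finset.mem_biUnion.mp hp'
        obtain ⟨hg, hloc, hsub⟩ := hΦgood u.1 u.2 p hpu
        refine ⟨hg, ?_, ?_⟩
        · rcases hloc with h' | h'
          · exact Or.inl (Finset.mem_filter.mp (Finset.mem_filter.mp h').1).1
          · rcases Finset.mem_insert.mp h' with h'' | h''
            · exact Or.inl (h'' ▸ hIS (hUI u.2))
            · exact Or.inr h''
        · intro x hx
          have := hsub hx
          exact (Finset.mem_filter.mp (Finset.mem_filter.mp this).1).1
    · intro v hv
      by_cases hvI : v ∈ I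
      · exact ⟨(c, I), Finset.mem_insert_self _ _, Or.inr hvI⟩
      · have hvW : v ∈ W := Finset.mem_filter.mpr ⟨hv, hvI⟩
        obtain ⟨u, hu, hadj⟩ := hUdom v hvW
        obtain ⟨p, hp, hvp⟩ := hΦcov u hu v (Finset.mem_filter.mpr ⟨hvW, hadj⟩)
        exact ⟨p, Finset.mem_insert_of_mem (Finset.mem_biUnion.mpr
          ⟨⟨u, hu⟩, Finset.mem_attach _ _, hp⟩), hvp⟩

end Part8

section Part9

variable {V : Type*}

def covC (n : ℕ) : ℕ → ℕ
  | 0 => 1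
  | i + 1 => covC n i + covC n i * ((1 + 2 * myRam n n) * covB n n)

theorem cover_univ [Fintype V] (G : SimpleGraph V) (hconn : G.Connected) {n : ℕ} (hn : 4 ≤ n)
    (hKfree : ¬ HasInducedCopy G (completeGraph (Fin n)))
    (hSfree : ¬ HasInducedCopy G (SStar n))
    (hTfree : ¬ HasInducedCopy G (STilde n))
    (hPfree : ¬ HasInducedCopy G (pathGraph n)) :
    ∃ F : Finset (V × Finset V), F.card ≤ covC n n ∧
      (∀ p ∈ F, GoodStar G p.1 p.2) ∧ (∀ v : V, ∃ p ∈ F, v = p.1 ∨ v ∈ p.2) := by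
  classical
  obtain ⟨r⟩ := hconn.nonempty
  have claim : ∀ i : ℕ, ∃ F : Finset (V × Finset V), F.card ≤ covC n i ∧
      (∀ p ∈ F, GoodStar G p.1 p.2 ∧ G.dist r p.1 ≤ i ∧ ∀ x ∈ p.2, G.dist r x ≤ i) ∧
      (∀ v : V, G.dist r v ≤ i → ∃ p ∈ F, v = p.1 ∨ v ∈ p.2) := by
    intro i
    induction i with
    | zero =>
      refine ⟨{(r, ∅)}, by simp [covC], ?_, ?_⟩
      · intro p hp
        rw [Finset.mem_singleton] at hp
        subst hp
        refine ⟨⟨by simp, fun u hu => absurd hu (by simp)⟩, by simp, by simp⟩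
      · intro v hv
        have hv0 : G.dist r v = 0 := by omega
        have : r = v := (hconn.dist_eq_zero_iff).mp hv0
        exact ⟨(r, ∅), Finset.mem_singleton_self _, Or.inl this.symm⟩
    | succ i ih =>
      obtain ⟨F, hFcard, hFgood, hFcov⟩ := ih
      have key : ∀ p : V × Finset V, p ∈ F → ∃ Fp : Finset (V × Finset V),
          Fp.card ≤ (1 + 2 * myRam n n) * covB n n ∧
          (∀ q ∈ Fp, GoodStar G q.1 q.2 ∧ G.dist r q.1 ≤ i + 1 ∧
            ∀ x ∈ q.2, G.dist r x ≤ i + 1) ∧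
          (∀ v : V, G.dist r v = i + 1 → (G.Adj p.1 v ∨ ∃ u ∈ p.2, G.Adj u v) →
            ∃ q ∈ Fp, v = q.1 ∨ v ∈ q.2) := by
        intro p hp
        obtain ⟨⟨hpadj, hpind⟩, hpd1, hpd2⟩ := hFgood p hp
        set A : Finset V := Finset.univ.filter
          (fun v => G.dist r v = i + 1 ∧ G.Adj p.1 v) with hA
        set B : Finset V := Finset.univ.filter
          (fun v => G.dist r v = i + 1 ∧ ¬ G.Adj p.1 v ∧ ∃ u ∈ p.2, G.Adj u v) with hB
        obtain ⟨FA, hFA1, hFA2, hFA3⟩ := cover_rec G hKfree hSfree hTfree n {p.1} A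
          (Finset.singleton_nonempty _)
          (fun a ha b hb hab => absurd ((Finset.mem_singleton.mp ha).trans
            (Finset.mem_singleton.mp hb).symm) hab)
          (by simp; omega)
          (fun s hs k hk => by
            rw [Finset.mem_singleton] at hk
            subst hk
            exact (Finset.mem_filter.mp hs).2.2)
        have hBdom : ∀ w ∈ B, ∃ u ∈ p.2, G.Adj u w :=
          fun w hw => (Finset.mem_filter.mp hw).2.2.2
        have hp1B : p.1 ∉ B := by
          intro hmem
          have := (Finset.mem_filter.mp hmem).2.1
          omega
        obtain ⟨U, hUI, hUcard, hUdom⟩ := dom_lemma G hKfree hSfree hTfree p.1 p.2 B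
          hpadj hpind hp1B hBdom
        have hrec : ∀ u : V, u ∈ U → ∃ Fu : Finset (V × Finset V), Fu.card ≤ covB n n ∧
            (∀ q ∈ Fu, GoodStar G q.1 q.2 ∧
              (q.1 ∈ B.filter (fun x => G.Adj u x) ∨ q.1 ∈ ({u} : Finset V)) ∧
              q.2 ⊆ B.filter (fun x => G.Adj u x)) ∧
            (∀ v ∈ B.filter (fun x => G.Adj u x), ∃ q ∈ Fu, v = q.1 ∨ v ∈ q.2) := by
          intro u hu
          refine cover_rec G hKfree hSfree hTfree n {u} (B.filter (fun x => G.Adj u x))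
            (Finset.singleton_nonempty _)
            (fun a ha b hb hab => absurd ((Finset.mem_singleton.mp ha).trans
              (Finset.mem_singleton.mp hb).symm) hab)
            (by simp; omega)
            (fun s hs k hk => by
              rw [Finset.mem_singleton] at hk
              subst hk
              exact (Finset.mem_filter.mp hs).2)
        choose ΦU hU1 hU2 hU3 using hrec
        refine ⟨FA ∪ U.attach.biUnion (fun u => ΦU u.1 u.2), ?_, ?_, ?_⟩
        · calc (FA ∪ U.attach.biUnion (fun u => ΦU u.1 u.2)).card
              ≤ FA.card + (U.attach.biUnion (fun u => ΦU u.1 u.2)).card :=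
                Finset.card_union_le _ _
          _ ≤ covB n n + ∑ u ∈ U.attach, (ΦU u.1 u.2).card :=
                Nat.add_le_add hFA1 Finset.card_biUnion_le
          _ ≤ covB n n + ∑ _u ∈ U.attach, covB n n :=
                Nat.add_le_add_left (Finset.sum_le_sum (fun u _ => hU1 u.1 u.2)) _
          _ = covB n n + U.card * covB n n := by
                rw [Finset.sum_const, Finset.card_attach, smul_eq_mul]
          _ ≤ covB n n + (2 * myRam n n) * covB n n :=
                Nat.add_le_add_left (Nat.mul_le_mul_right _ hUcard) _
          _ = (1 + 2 * myRam n n) * covB n n := by ring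
        · intro q hq
          rcases Finset.mem_union.mp hq with hq' | hq'
          · obtain ⟨hg, hloc, hsub⟩ := hFA2 q hq'
            refine ⟨hg, ?_, ?_⟩
            · rcases hloc with h' | h'
              · have := (Finset.mem_filter.mp h').2.1
                omega
              · rw [Finset.mem_singleton.mp h']
                omega
            · intro x hx
              have := (Finset.mem_filter.mp (hsub hx)).2.1
              omega
          · obtain ⟨u, _, hqu⟩ := Finset.mem_biUnion.mp hq'
            obtain ⟨hg, hloc, hsub⟩ := hU2 u.1 u.2 q hqu
            refine ⟨hg, ?_, ?_⟩
            · rcases hloc with h' | h'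
              · have := (Finset.mem_filter.mp (Finset.mem_filter.mp h').1).2.1
                omega
              · rw [Finset.mem_singleton.mp h']
                have : G.dist r u.1 ≤ i := hpd2 u.1 (hUI u.2)
                omega
            · intro x hx
              have := (Finset.mem_filter.mp (Finset.mem_filter.mp (hsub hx)).1).2.1
              omega
        · intro v hvd hvadj
          rcases hvadj with hvadj | hvadj
          · have hvA : v ∈ A := Finset.mem_filter.mpr ⟨Finset.mem_univ v, hvd, hvadj⟩
            obtain ⟨q, hq, hvq⟩ := hFA3 v hvA
            exact ⟨q, Finset.mem_union_left _ hq, hvq⟩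
          · by_cases hadj1 : G.Adj p.1 v
            · have hvA : v ∈ A := Finset.mem_filter.mpr ⟨Finset.mem_univ v, hvd, hadj1⟩
              obtain ⟨q, hq, hvq⟩ := hFA3 v hvA
              exact ⟨q, Finset.mem_union_left _ hq, hvq⟩
            · have hvB : v ∈ B := Finset.mem_filter.mpr ⟨Finset.mem_univ v, hvd, hadj1, hvadj⟩
              obtain ⟨u, hu, huadj⟩ := hUdom v hvB
              obtain ⟨q, hq, hvq⟩ := hU3 u hu v (Finset.mem_filter.mpr ⟨hvB, huadj⟩)
              exact ⟨q, Finset.mem_union_right _ (Finset.mem_biUnion.mpr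
                ⟨⟨u, hu⟩, Finset.mem_attach _ _, hq⟩), hvq⟩
      choose Φ hc1 hc2 hc3 using key
      refine ⟨F ∪ F.attach.biUnion (fun p => Φ p.1 p.2), ?_, ?_, ?_⟩
      · calc (F ∪ F.attach.biUnion (fun p => Φ p.1 p.2)).card
            ≤ F.card + (F.attach.biUnion (fun p => Φ p.1 p.2)).card :=
              Finset.card_union_le _ _
        _ ≤ covC n i + ∑ p ∈ F.attach, (Φ p.1 p.2).card :=
              Nat.add_le_add hFcard Finset.card_biUnion_le
        _ ≤ covC n i + ∑ _p ∈ F.attach, (1 + 2 * myRam n n) * covB n n :=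
              Nat.add_le_add_left (Finset.sum_le_sum (fun p _ => hc1 p.1 p.2)) _
        _ = covC n i + F.card * ((1 + 2 * myRam n n) * covB n n) := by
              rw [Finset.sum_const, Finset.card_attach, smul_eq_mul]
        _ ≤ covC n i + covC n i * ((1 + 2 * myRam n n) * covB n n) :=
              Nat.add_le_add_left (Nat.mul_le_mul_right _ hFcard) _
        _ = covC n (i + 1) := by rw [covC]
      · intro p hp
        rcases Finset.mem_union.mp hp with hp' | hp'
        · obtain ⟨hg, h1, h2⟩ := hFgood p hp'
          exact ⟨hg, by omega, fun x hx => by have := h2 x hx; omega⟩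
        · obtain ⟨q, _, hpq⟩ := Finset.mem_biUnion.mp hp'
          exact hc2 q.1 q.2 p hpq
      · intro v hv
        rcases Nat.lt_or_ge (G.dist r v) (i + 1) with hlt | hge
        · obtain ⟨p, hp, hvp⟩ := hFcov v (by omega)
          exact ⟨p, Finset.mem_union_left _ hp, hvp⟩
        · have hveq : G.dist r v = i + 1 := by omega
          obtain ⟨u, huadj, hud⟩ := step_back hconn hveq
          obtain ⟨p, hp, hup⟩ := hFcov u (by omega)
          have hcond : G.Adj p.1 v ∨ ∃ w ∈ p.2, G.Adj w v := by
            rcases hup with rfl | hup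
            · exact Or.inl huadj
            · exact Or.inr ⟨u, hup, huadj⟩
          obtain ⟨q, hq, hvq⟩ := hc3 p hp v hveq hcond
          exact ⟨q, Finset.mem_union_right _ (Finset.mem_biUnion.mpr
            ⟨⟨p, hp⟩, Finset.mem_attach _ _, hq⟩), hvq⟩
  obtain ⟨F, h1, h2, h3⟩ := claim n
  refine ⟨F, h1, fun p hp => (h2 p hp).1, ?_⟩
  intro v
  have := dist_small hconn hPfree (by omega) r v
  exact h3 v (by omega)

end Part9

section Part10a

variable {V : Type*}

theorem star_set_of_finset [DecidableEq V] (G : SimpleGraph V) (c : V) (L : Finset V)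
    (hL : L.Nonempty) (hcL : c ∉ L) (hadj : ∀ v ∈ L, G.Adj c v) (hind : ∀ u ∈ L, ∀ v ∈ L, ¬ G.Adj u v) :
    IsInducedStarSet G (↑(insert c L) : Set V) := by
  classical
  set m := L.card with hm
  have hm1 : 1 ≤ m := Finset.card_pos.mpr hL
  have eL : {x // x ∈ L} ≃ Fin m := Fintype.equivFinOfCardEq (by simp [hm])
  have hmem : ∀ x : (↑(insert c L) : Set V), x.1 ≠ c → x.1 ∈ L := by
    intro x hx
    have h2 : x.1 ∈ insert c L := Finset.mem_coe.mp x.2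
    rcases Finset.mem_insert.mp h2 with h | h
    · exact absurd h hx
    · exact h
  refine ⟨m, hm1, ⟨?_⟩⟩
  refine ⟨⟨fun x => if h : x.1 = c then Sum.inl () else Sum.inr (eL ⟨x.1, hmem x h⟩),
    fun y => Sum.elim (fun _ => ⟨c, by simp⟩) (fun j => ⟨(eL.symm j).1, by
      rw [Finset.coe_insert, Set.mem_insert_iff]
      exact Or.inr (eL.symm j).2⟩) y, ?_, ?_⟩, ?_⟩
  · intro x
    by_cases h : x.1 = c
    · simp only [h, dif_pos]
      exact Subtype.ext h.symm
    · simp only [h, dif_neg, Sum.elim_inr]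
      apply Subtype.ext
      show ((eL.symm (eL ⟨x.1, hmem x h⟩)).1 : V) = x.1
      rw [Equiv.symm_apply_apply]
  · intro y
    rcases y with u | j
    · simp
    · simp only [Sum.elim_inr]
      have hne : (eL.symm j).1 ≠ c := fun h => hcL (h ▸ (eL.symm j).2)
      erw [dif_neg hne]
      congr 1
      have hZ : ∀ (Z : {x // x ∈ L}), Z.1 = (eL.symm j).1 → eL Z = j := by
        intro Z hZeq
        have : Z = eL.symm j := Subtype.ext hZeq
        rw [this, Equiv.apply_symm_apply]
      exact hZ _ rfl
  · intro a b
    simp only [Equiv.coe_fn_mk]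
    by_cases ha : a.1 = c <;> by_cases hb : b.1 = c
    · simp only [ha, hb, dif_pos]
      constructor
      · intro h
        exact absurd h (by simp [_root_.starGraph, completeBipartiteGraph])
      · intro h
        have : G.Adj a.1 b.1 := h
        rw [ha, hb] at this
        exact absurd this (G.loopless.irrefl c)
    · simp only [ha, hb, dif_pos, dif_neg]
      constructor
      · intro _
        show G.Adj a.1 b.1
        rw [ha]
        exact hadj b.1 (hmem b hb)
      · intro _
        simp [_root_.starGraph, completeBipartiteGraph]
    · simp only [ha, hb, dif_pos, dif_neg]
      constructor
      · intro _
        show G.Adj a.1 b.1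
        rw [hb]
        exact (hadj a.1 (hmem a ha)).symm
      · intro _
        simp [_root_.starGraph, completeBipartiteGraph]
    · simp only [ha, hb, dif_neg]
      constructor
      · intro h
        exact absurd h (by simp [_root_.starGraph, completeBipartiteGraph])
      · intro h
        have : G.Adj a.1 b.1 := h
        exact absurd this (hind a.1 (hmem a ha) b.1 (hmem b hb))

end Part10a

section Part11

variable {V : Type*}

/-- Realizing a group of independent sets hanging on a common centre `c` as disjoint stars. -/
theorem star_group [Fintype V] [DecidableEq V] {n : ℕ} (G : SimpleGraph V)
    (hKfree : ¬ HasInducedCopy G (completeGraph (Fin n)))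
    (hSfree : ¬ HasInducedCopy G (SStar n))
    (hTfree : ¬ HasInducedCopy G (STilde n))
    (c : V) (Ls : Finset (Finset V))
    (h1 : ∀ L ∈ Ls, (∀ v ∈ L, G.Adj c v) ∧ IndepF G L)
    (h2 : ∀ L ∈ Ls, ∀ L' ∈ Ls, L ≠ L' → ∀ v ∈ L, v ∉ L') :
    ∃ Q : Finset (Finset V),
      Q.card ≤ 1 + Ls.card * (2 * myRam n n + 1) ∧
      (∀ A ∈ Q, A.Nonempty ∧ ((∃ v, A = {v}) ∨ ∃ (c' : V) (L : Finset V), A = insert c' L ∧ L.Nonempty ∧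
        c' ∉ L ∧ (∀ v ∈ L, G.Adj c' v) ∧ IndepF G L)) ∧
      (∀ A ∈ Q, ∀ B ∈ Q, A ≠ B → ∀ v ∈ A, v ∉ B) ∧
      (∀ A ∈ Q, ∀ v ∈ A, v = c ∨ ∃ L ∈ Ls, v ∈ L) ∧
      (∀ v : V, (v = c ∨ ∃ L ∈ Ls, v ∈ L) → ∃ A ∈ Q, v ∈ A) := by
  classical
  suffices h : ∃ Q : Finset (Finset V),
      Q.card ≤ 1 + Ls.card * (2 * myRam n n + 1) ∧
      (∀ A ∈ Q, A.Nonempty ∧ ((∃ v, A = {v}) ∨ ∃ (c' : V) (L : Finset V), A = insert c' L ∧ L.Nonempty ∧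
        c' ∉ L ∧ (∀ v ∈ L, G.Adj c' v) ∧ IndepF G L)) ∧
      (∀ A ∈ Q, ∀ B ∈ Q, A ≠ B → ∀ v ∈ A, v ∉ B) ∧
      (∀ A ∈ Q, ∀ v ∈ A, v = c ∨ ∃ L ∈ Ls, v ∈ L) ∧
      (∀ v : V, (v = c ∨ ∃ L ∈ Ls, v ∈ L) → ∃ A ∈ Q, v ∈ A) ∧
      (∃ L₀ : Finset V, insert c L₀ ∈ Q ∧ (∀ v ∈ L₀, G.Adj c v) ∧ IndepF G L₀ ∧ c ∉ L₀ ∧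
        (∀ v ∈ L₀, ∃ L ∈ Ls, v ∈ L) ∧ (∀ A ∈ Q, A ≠ insert c L₀ → c ∉ A)) by
    obtain ⟨Q, hq1, hq2, hq3, hq4, hq5, _⟩ := h
    exact ⟨Q, hq1, hq2, hq3, hq4, hq5⟩
  induction Ls using Finset.induction_on with
  | empty =>
    refine ⟨{{c}}, by simp, ?_, ?_, ?_, ?_, ?_⟩
    · intro A hA
      rw [Finset.mem_singleton] at hA
      subst hA
      exact ⟨⟨c, Finset.mem_singleton_self c⟩, Or.inl ⟨c, rfl⟩⟩
    · intro A hA B hB hAB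
      rw [Finset.mem_singleton] at hA hB
      exact absurd (hA.trans hB.symm) hAB
    · intro A hA v hv
      rw [Finset.mem_singleton] at hA
      subst hA
      exact Or.inl (Finset.mem_singleton.mp hv)
    · intro v hv
      rcases hv with hvc | ⟨L, hL, _⟩
      · subst hvc
        have hc0 : ({v} : Finset V) ∈ ({{v}} : Finset (Finset V)) := Finset.mem_singleton_self _
        exact ⟨_, hc0, Finset.mem_singleton_self _⟩
      · exact absurd hL (by simp)
    · refine ⟨∅, by simp, by simp, ?_, by simp, by simp, ?_⟩
      · intro u hu
        exact absurd hu (by simp)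
      · intro A hA hne
        rw [Finset.mem_singleton] at hA
        exact absurd (by rw [hA]; simp) hne
  | @insert I Ls hI ih =>
    have h1' : ∀ L ∈ Ls, (∀ v ∈ L, G.Adj c v) ∧ IndepF G L :=
      fun L hL => h1 L (Finset.mem_insert_of_mem hL)
    have h2' : ∀ L ∈ Ls, ∀ L' ∈ Ls, L ≠ L' → ∀ v ∈ L, v ∉ L' :=
      fun L hL L' hL' => h2 L (Finset.mem_insert_of_mem hL) L' (Finset.mem_insert_of_mem hL')
    obtain ⟨Q, hq1, hq2, hq3, hq4, hq5, L₀, hL₀Q, hL₀adj, hL₀ind, hcL₀, hL₀terr, hconly⟩ :=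
      ih h1' h2'
    obtain ⟨hIadj, hIind⟩ := h1 I (Finset.mem_insert_self I Ls)
    have hcI : c ∉ I := fun h => G.loopless.irrefl c (hIadj c h)
    have hIdisj : ∀ v ∈ I, ∀ L ∈ Ls, v ∉ L := by
      intro v hv L hL
      exact h2 I (Finset.mem_insert_self I Ls) L (Finset.mem_insert_of_mem hL)
        (fun hc' => hI (hc' ▸ hL)) v hv
    have hIL₀ : ∀ v ∈ I, v ∉ L₀ := by
      intro v hv hvL₀
      obtain ⟨L, hL, hvL⟩ := hL₀terr v hvL₀
      exact hIdisj v hv L hL hvL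
    set W := I.filter (fun w => ∃ u ∈ L₀, G.Adj u w) with hWdef
    set I₀ := I.filter (fun w => ¬ ∃ u ∈ L₀, G.Adj u w) with hI₀def
    have hWdom : ∀ w ∈ W, ∃ u ∈ L₀, G.Adj u w := fun w hw => (Finset.mem_filter.mp hw).2
    obtain ⟨U, hUL₀, hUcard, hUdom⟩ := dom_lemma G hKfree hSfree hTfree c L₀ W hL₀adj hL₀ind
      (fun hc' => hcI (Finset.mem_filter.mp hc').1) hWdom
    have hd : ∀ w : V, ∃ u : V, w ∈ W → u ∈ U ∧ G.Adj u w := by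
      intro w
      by_cases hw : w ∈ W
      · obtain ⟨u, hu, hadj⟩ := hUdom w hw
        exact ⟨u, fun _ => ⟨hu, hadj⟩⟩
      · exact ⟨c, fun h => absurd h hw⟩
    choose d hd' using hd
    set newL : Finset V := (L₀ \ U) ∪ I₀ with hnewL
    set newc : Finset V := insert c newL with hnewc
    set Pu : V → Finset V := fun u => insert u (W.filter (fun w => d w = u)) with hPu
    set Q' : Finset (Finset V) := insert newc ((Q.erase (insert c L₀)) ∪ U.image Pu) with hQ'
    -- basic membership facts
    have hUL₀' : ∀ u ∈ U, u ∈ L₀ := fun u hu => hUL₀ hu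
    have hWI : ∀ w ∈ W, w ∈ I := fun w hw => (Finset.mem_filter.mp hw).1
    have hI₀I : ∀ w ∈ I₀, w ∈ I := fun w hw => (Finset.mem_filter.mp hw).1
    have hWI₀ : ∀ w ∈ W, w ∉ I₀ := by
      intro w hw hw0
      exact (Finset.mem_filter.mp hw0).2 (Finset.mem_filter.mp hw).2
    have hsplit : ∀ w ∈ I, w ∈ W ∨ w ∈ I₀ := by
      intro w hw
      by_cases h : ∃ u ∈ L₀, G.Adj u w
      · exact Or.inl (Finset.mem_filter.mpr ⟨hw, h⟩)
      · exact Or.inr (Finset.mem_filter.mpr ⟨hw, h⟩)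
    have hcnew : c ∉ newL := by
      rw [hnewL]
      intro hc'
      rcases Finset.mem_union.mp hc' with h | h
      · exact hcL₀ (Finset.mem_sdiff.mp h).1
      · exact hcI (hI₀I c h)
    have hnewLadj : ∀ v ∈ newL, G.Adj c v := by
      intro v hv
      rcases Finset.mem_union.mp hv with h | h
      · exact hL₀adj v (Finset.mem_sdiff.mp h).1
      · exact hIadj v (hI₀I v h)
    have hnewLind : IndepF G newL := by
      intro u hu v hv
      rcases Finset.mem_union.mp hu with h | h <;> rcases Finset.mem_union.mp hv with h' | h'
      · exact hL₀ind u (Finset.mem_sdiff.mp h).1 v (Finset.mem_sdiff.mp h').1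
      · intro hadj
        exact (Finset.mem_filter.mp h').2 ⟨u, (Finset.mem_sdiff.mp h).1, hadj⟩
      · intro hadj
        exact (Finset.mem_filter.mp h).2 ⟨v, (Finset.mem_sdiff.mp h').1, hadj.symm⟩
      · exact hIind u (hI₀I u h) v (hI₀I v h')
    -- membership in parts of Q'
    have hmemQ' : ∀ A ∈ Q', A = newc ∨ (A ∈ Q ∧ A ≠ insert c L₀) ∨ ∃ u ∈ U, A = Pu u := by
      intro A hA
      rcases Finset.mem_insert.mp hA with h | h
      · exact Or.inl h
      · rcases Finset.mem_union.mp h with h' | h'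
        · exact Or.inr (Or.inl ⟨Finset.mem_of_mem_erase h', (Finset.mem_erase.mp h').1⟩)
        · obtain ⟨u, hu, rfl⟩ := Finset.mem_image.mp h'
          exact Or.inr (Or.inr ⟨u, hu, rfl⟩)
    -- territory of parts
    have hterrnew : ∀ v ∈ newc, v = c ∨ ∃ L ∈ insert I Ls, v ∈ L := by
      intro v hv
      rcases Finset.mem_insert.mp hv with h | h
      · exact Or.inl h
      · rcases Finset.mem_union.mp h with h' | h'
        · obtain ⟨L, hL, hvL⟩ := hL₀terr v (Finset.mem_sdiff.mp h').1
          exact Or.inr ⟨L, Finset.mem_insert_of_mem hL, hvL⟩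
        · exact Or.inr ⟨I, Finset.mem_insert_self I Ls, hI₀I v h'⟩
    have hterrPu : ∀ u ∈ U, ∀ v ∈ Pu u, (∃ L ∈ Ls, v ∈ L) ∨ v ∈ I := by
      intro u hu v hv
      rcases Finset.mem_insert.mp hv with h | h
      · subst h
        obtain ⟨L, hL, hvL⟩ := hL₀terr v (hUL₀' v hu)
        exact Or.inl ⟨L, hL, hvL⟩
      · exact Or.inr (hWI v (Finset.filter_subset _ _ h))
    have hterrold : ∀ A ∈ Q, A ≠ insert c L₀ → ∀ v ∈ A, (∃ L ∈ Ls, v ∈ L) ∧ v ≠ c := by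
      intro A hA hAne v hv
      have hvc : v ≠ c := fun h => (hconly A hA hAne) (h ▸ hv)
      rcases hq4 A hA v hv with h | h
      · exact absurd h hvc
      · exact ⟨h, hvc⟩
    -- elements of I are not in old parts nor L₀
    have hInotold : ∀ v ∈ I, ∀ A ∈ Q, v ∉ A := by
      intro v hv A hA hvA
      rcases hq4 A hA v hvA with h | ⟨L, hL, hvL⟩
      · exact hcI (h ▸ hv)
      · exact hIdisj v hv L hL hvL
    -- disjointness of new parts
    have hdisjnewPu : ∀ u ∈ U, ∀ v ∈ newc, v ∉ Pu u := by
      intro u hu v hv hvPu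
      rcases Finset.mem_insert.mp hvPu with h | h
      · subst h
        rcases Finset.mem_insert.mp hv with h' | h'
        · exact hcL₀ (h' ▸ hUL₀' v hu)
        · rcases Finset.mem_union.mp h' with h'' | h''
          · exact (Finset.mem_sdiff.mp h'').2 hu
          · exact hIL₀ v (hI₀I v h'') (hUL₀' v hu)
      · have hvW : v ∈ W := Finset.filter_subset _ _ h
        rcases Finset.mem_insert.mp hv with h' | h'
        · exact hcI (h' ▸ hWI v hvW)
        · rcases Finset.mem_union.mp h' with h'' | h''
          · exact hIL₀ v (hWI v hvW) (Finset.mem_sdiff.mp h'').1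
          · exact hWI₀ v hvW h''
    have hdisjPuPu : ∀ u ∈ U, ∀ u' ∈ U, u ≠ u' → ∀ v ∈ Pu u, v ∉ Pu u' := by
      intro u hu u' hu' huu' v hv hv'
      rcases Finset.mem_insert.mp hv with h | h <;> rcases Finset.mem_insert.mp hv' with h' | h'
      · exact huu' (h ▸ h')
      · subst h
        exact hIL₀ v (hWI v (Finset.filter_subset _ _ h')) (hUL₀' v hu)
      · subst h'
        exact hIL₀ v (hWI v (Finset.filter_subset _ _ h)) (hUL₀' v hu')
      · have e1 := (Finset.mem_filter.mp h).2
        have e2 := (Finset.mem_filter.mp h').2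
        exact huu' (e1 ▸ e2)
    have hdisjoldnew : ∀ A ∈ Q, A ≠ insert c L₀ → ∀ v ∈ A, v ∉ newc := by
      intro A hA hAne v hv hvnew
      obtain ⟨⟨L, hL, hvL⟩, hvc⟩ := hterrold A hA hAne v hv
      rcases Finset.mem_insert.mp hvnew with h | h
      · exact hvc h
      · rcases Finset.mem_union.mp h with h' | h'
        · have : v ∈ insert c L₀ := Finset.mem_insert_of_mem (Finset.mem_sdiff.mp h').1
          exact hq3 A hA (insert c L₀) hL₀Q hAne v hv this
        · exact hIdisj v (hI₀I v h') L hL hvL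
    have hdisjoldPu : ∀ A ∈ Q, A ≠ insert c L₀ → ∀ u ∈ U, ∀ v ∈ A, v ∉ Pu u := by
      intro A hA hAne u hu v hv hvPu
      rcases Finset.mem_insert.mp hvPu with h | h
      · subst h
        have : v ∈ insert c L₀ := Finset.mem_insert_of_mem (hUL₀' v hu)
        exact hq3 A hA (insert c L₀) hL₀Q hAne v hv this
      · exact hInotold v (hWI v (Finset.filter_subset _ _ h)) A hA hv
    refine ⟨Q', ?_, ?_, ?_, ?_, ?_, newL, ?_⟩
    · -- cardinality
      calc Q'.card ≤ ((Q.erase (insert c L₀)) ∪ U.image Pu).card + 1 := Finset.card_insert_le _ _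
        _ ≤ ((Q.erase (insert c L₀)).card + (U.image Pu).card) + 1 :=
            Nat.add_le_add_right (Finset.card_union_le _ _) 1
        _ ≤ ((Q.card - 1) + U.card) + 1 := by
            have e1 : (Q.erase (insert c L₀)).card = Q.card - 1 :=
              Finset.card_erase_of_mem hL₀Q
            have e2 : (U.image Pu).card ≤ U.card := Finset.card_image_le
            omega
        _ ≤ 1 + (insert I Ls).card * (2 * myRam n n + 1) := by
            have e3 : (insert I Ls).card = Ls.card + 1 := Finset.card_insert_of_notMem hI
            have e4 : 0 < Q.card := Finset.card_pos.mpr ⟨_, hL₀Q⟩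
            have e5 : (Ls.card + 1) * (2 * myRam n n + 1) =
                Ls.card * (2 * myRam n n + 1) + (2 * myRam n n + 1) := by ring
            rw [e3, e5]
            omega
    · -- shapes
      intro A hA
      rcases hmemQ' A hA with rfl | ⟨hAQ, _⟩ | ⟨u, hu, rfl⟩
      · refine ⟨⟨c, Finset.mem_insert_self _ _⟩, ?_⟩
        rcases Finset.eq_empty_or_nonempty newL with he | hne
        · exact Or.inl ⟨c, by rw [hnewc, he]; rfl⟩
        · exact Or.inr ⟨c, newL, rfl, hne, hcnew, hnewLadj, hnewLind⟩
      · exact hq2 A hAQ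
      · refine ⟨⟨u, Finset.mem_insert_self _ _⟩, ?_⟩
        have huW : u ∉ W.filter (fun w => d w = u) :=
          fun h => hIL₀ u (hWI u (Finset.filter_subset _ _ h)) (hUL₀' u hu)
        rcases Finset.eq_empty_or_nonempty (W.filter (fun w => d w = u)) with he | hne
        · exact Or.inl ⟨u, by rw [hPu]; simp only; rw [he]; rfl⟩
        · refine Or.inr ⟨u, W.filter (fun w => d w = u), rfl, hne, huW, ?_, ?_⟩
          · intro v hv
            have := (Finset.mem_filter.mp hv).2
            have hadj := (hd' v (Finset.filter_subset _ _ hv)).2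
            exact this ▸ hadj
          · intro x hx y hy
            exact hIind x (hWI x (Finset.filter_subset _ _ hx))
              y (hWI y (Finset.filter_subset _ _ hy))
    · -- pairwise disjoint
      intro A hA B hB hAB v hvA hvB
      rcases hmemQ' A hA with rfl | ⟨hAQ, hAne⟩ | ⟨u, hu, rfl⟩ <;>
        rcases hmemQ' B hB with hB' | ⟨hBQ, hBne⟩ | ⟨u', hu', hB'⟩
      · exact hAB hB'.symm
      · exact hdisjoldnew B hBQ hBne v hvB hvA
      · subst hB'
        exact hdisjnewPu u' hu' v hvA hvB
      · subst hB'
        exact hdisjoldnew A hAQ hAne v hvA hvB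
      · exact hq3 A hAQ B hBQ hAB v hvA hvB
      · subst hB'
        exact hdisjoldPu A hAQ hAne u' hu' v hvA hvB
      · subst hB'
        exact hdisjnewPu u hu v hvB hvA
      · exact hdisjoldPu B hBQ hBne u hu v hvB hvA
      · subst hB'
        have huu' : u ≠ u' := fun h => hAB (by rw [h])
        exact hdisjPuPu u hu u' hu' huu' v hvA hvB
    · -- territory
      intro A hA v hv
      rcases hmemQ' A hA with rfl | ⟨hAQ, _⟩ | ⟨u, hu, rfl⟩
      · exact hterrnew v hv
      · rcases hq4 A hAQ v hv with h | ⟨L, hL, hvL⟩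
        · exact Or.inl h
        · exact Or.inr ⟨L, Finset.mem_insert_of_mem hL, hvL⟩
      · rcases hterrPu u hu v hv with ⟨L, hL, hvL⟩ | h
        · exact Or.inr ⟨L, Finset.mem_insert_of_mem hL, hvL⟩
        · exact Or.inr ⟨I, Finset.mem_insert_self I Ls, h⟩
    · -- coverage
      intro v hv
      rcases hv with rfl | ⟨L, hL, hvL⟩
      · exact ⟨newc, Finset.mem_insert_self _ _, Finset.mem_insert_self _ _⟩
      · rcases Finset.mem_insert.mp hL with rfl | hL'
        · -- v ∈ I
          rcases hsplit v hvL with hvW | hvI₀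
          · refine ⟨Pu (d v), ?_, ?_⟩
            · refine Finset.mem_insert_of_mem (Finset.mem_union_right _
                (Finset.mem_image.mpr ⟨d v, (hd' v hvW).1, rfl⟩))
            · exact Finset.mem_insert_of_mem (Finset.mem_filter.mpr ⟨hvW, rfl⟩)
          · exact ⟨newc, Finset.mem_insert_self _ _,
              Finset.mem_insert_of_mem (Finset.mem_union_right _ hvI₀)⟩
        · obtain ⟨A, hAQ, hvA⟩ := hq5 v (Or.inr ⟨L, hL', hvL⟩)
          by_cases hAeq : A = insert c L₀
          · subst hAeq
            rcases Finset.mem_insert.mp hvA with rfl | hvL₀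
            · exact ⟨newc, Finset.mem_insert_self _ _, Finset.mem_insert_self _ _⟩
            · by_cases hvU : v ∈ U
              · refine ⟨Pu v, Finset.mem_insert_of_mem (Finset.mem_union_right _
                  (Finset.mem_image.mpr ⟨v, hvU, rfl⟩)), Finset.mem_insert_self _ _⟩
              · refine ⟨newc, Finset.mem_insert_self _ _, Finset.mem_insert_of_mem
                  (Finset.mem_union_left _ (Finset.mem_sdiff.mpr ⟨hvL₀, hvU⟩))⟩
          · exact ⟨A, Finset.mem_insert_of_mem (Finset.mem_union_left _
              (Finset.mem_erase.mpr ⟨hAeq, hAQ⟩)), hvA⟩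
    · -- invariant
      refine ⟨Finset.mem_insert_self _ _, hnewLadj, hnewLind, hcnew, ?_, ?_⟩
      · intro v hv
        rcases Finset.mem_union.mp hv with h | h
        · obtain ⟨L, hL, hvL⟩ := hL₀terr v (Finset.mem_sdiff.mp h).1
          exact ⟨L, Finset.mem_insert_of_mem hL, hvL⟩
        · exact ⟨I, Finset.mem_insert_self I Ls, hI₀I v h⟩
      · intro A hA hAne hcA
        rcases hmemQ' A hA with rfl | ⟨hAQ, hAne'⟩ | ⟨u, hu, rfl⟩
        · exact hAne rfl
        · exact hconly A hAQ hAne' hcA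
        · rcases Finset.mem_insert.mp hcA with h | h
          · exact hcL₀ (by rw [h]; exact hUL₀' u hu)
          · exact hcI (hWI c (Finset.filter_subset _ _ h))

end Part11

section Part12

variable {V : Type*}

theorem partition_from_cover [Fintype V] {n : ℕ} (G : SimpleGraph V)
    (hKfree : ¬ HasInducedCopy G (completeGraph (Fin n)))
    (hSfree : ¬ HasInducedCopy G (SStar n))
    (hTfree : ¬ HasInducedCopy G (STilde n))
    (F : Finset (V × Finset V)) (hgood : ∀ p ∈ F, GoodStar G p.1 p.2)
    (hcov : ∀ v : V, ∃ p ∈ F, v = p.1 ∨ v ∈ p.2) :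
    insp G ≤ F.card * (2 * myRam n n + 2) := by
  classical
  set C : Finset V := F.image Prod.fst with hC
  have hown : ∀ v : V, ∃ p : V × Finset V, v ∉ C → p ∈ F ∧ v ∈ p.2 := by
    intro v
    by_cases hv : v ∈ C
    · exact ⟨(v, ∅), fun h => absurd hv h⟩
    · obtain ⟨p, hp, hvp⟩ := hcov v
      rcases hvp with hvp | hvp
      · exact absurd (Finset.mem_image.mpr ⟨p, hp, hvp.symm⟩) hv
      · exact ⟨p, fun _ => ⟨hp, hvp⟩⟩
  choose own hown' using hown
  set J : (V × Finset V) → Finset V := fun p => p.2.filter (fun v => v ∉ C ∧ own v = p)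
    with hJ
  set Ls : V → Finset (Finset V) := fun c => (F.filter (fun p => p.1 = c)).image J with hLs
  have hLsprop : ∀ c ∈ C, ∀ L ∈ Ls c, (∀ v ∈ L, G.Adj c v) ∧ IndepF G L := by
    intro c _ L hL
    obtain ⟨p, hpF, rfl⟩ := Finset.mem_image.mp hL
    obtain ⟨hpF', hpc⟩ := Finset.mem_filter.mp hpF
    constructor
    · intro v hv
      have hv2 : v ∈ p.2 := Finset.filter_subset _ _ hv
      have := (hgood p hpF').1 v hv2
      rw [hpc] at this
      exact this
    · intro u hu v hv
      exact (hgood p hpF').2 u (Finset.filter_subset _ _ hu) v (Finset.filter_subset _ _ hv)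
  have hLsdisj : ∀ c ∈ C, ∀ L ∈ Ls c, ∀ L' ∈ Ls c, L ≠ L' → ∀ v ∈ L, v ∉ L' := by
    intro c _ L hL L' hL' hne v hv hv'
    obtain ⟨p, hpF, rfl⟩ := Finset.mem_image.mp hL
    obtain ⟨p', hpF', rfl⟩ := Finset.mem_image.mp hL'
    have e1 := (Finset.mem_filter.mp hv).2.2
    have e2 := (Finset.mem_filter.mp hv').2.2
    exact hne (by rw [← e1, e2])
  have hkey : ∀ c : V, c ∈ C → ∃ Q : Finset (Finset V),
      Q.card ≤ 1 + (Ls c).card * (2 * myRam n n + 1) ∧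
      (∀ A ∈ Q, A.Nonempty ∧ ((∃ v, A = {v}) ∨ ∃ (c' : V) (L : Finset V), A = insert c' L ∧
        L.Nonempty ∧ c' ∉ L ∧ (∀ v ∈ L, G.Adj c' v) ∧ IndepF G L)) ∧
      (∀ A ∈ Q, ∀ B ∈ Q, A ≠ B → ∀ v ∈ A, v ∉ B) ∧
      (∀ A ∈ Q, ∀ v ∈ A, v = c ∨ ∃ L ∈ Ls c, v ∈ L) ∧
      (∀ v : V, (v = c ∨ ∃ L ∈ Ls c, v ∈ L) → ∃ A ∈ Q, v ∈ A) := by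
    intro c hc
    exact star_group G hKfree hSfree hTfree c (Ls c) (hLsprop c hc) (hLsdisj c hc)
  choose Q hQ1 hQ2 hQ3 hQ4 hQ5 using hkey
  set QT : Finset (Finset V) := C.attach.biUnion (fun c => Q c.1 c.2) with hQT
  set P : Finset (Set V) := QT.image (fun (A : Finset V) => (A : Set V)) with hP
  -- facts about territories
  have hterr : ∀ c : V, ∀ hc : c ∈ C, ∀ A ∈ Q c hc, ∀ v ∈ A,
      (v = c ∧ v ∈ C) ∨ ∃ p ∈ F, v ∈ J p ∧ p.1 = c := by
    intro c hc A hA v hv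
    rcases hQ4 c hc A hA v hv with h | ⟨L, hL, hvL⟩
    · exact Or.inl ⟨h, h ▸ hc⟩
    · obtain ⟨p, hpF, rfl⟩ := Finset.mem_image.mp hL
      obtain ⟨hpF', hpc⟩ := Finset.mem_filter.mp hpF
      exact Or.inr ⟨p, hpF', hvL, hpc⟩
  have hJnotC : ∀ p : V × Finset V, ∀ v ∈ J p, v ∉ C := fun p v hv =>
    (Finset.mem_filter.mp hv).2.1
  have hJown : ∀ p : V × Finset V, ∀ v ∈ J p, own v = p := fun p v hv =>
    (Finset.mem_filter.mp hv).2.2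
  -- disjointness across groups
  have hcross : ∀ c : V, ∀ hc : c ∈ C, ∀ c' : V, ∀ hc' : c' ∈ C, c ≠ c' →
      ∀ A ∈ Q c hc, ∀ B ∈ Q c' hc', ∀ v ∈ A, v ∉ B := by
    intro c hc c' hc' hne A hA B hB v hvA hvB
    rcases hterr c hc A hA v hvA with ⟨rfl, hvC⟩ | ⟨p, hpF, hvJ, hpc⟩ <;>
      rcases hterr c' hc' B hB v hvB with h2 | ⟨p', hpF', hvJ', hpc'⟩
    · exact hne h2.1
    · exact hJnotC p' v hvJ' hvC
    · exact hJnotC p v hvJ (h2.2)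
    · have : p = p' := by rw [← hJown p v hvJ, hJown p' v hvJ']
      exact hne (by rw [← hpc, this, hpc'])
  -- the partition
  refine le_trans (insp_le G P ⟨⟨?_, ?_⟩, ?_⟩) ?_
  · -- pred
    intro S hS
    obtain ⟨A, hAQT, rfl⟩ := Finset.mem_image.mp hS
    obtain ⟨c, _, hAQ⟩ := Finset.mem_biUnion.mp hAQT
    obtain ⟨hAne, hshape⟩ := hQ2 c.1 c.2 A hAQ
    rcases hshape with ⟨v, rfl⟩ | ⟨c', L, rfl, hLne, hc'L, hadj, hind⟩
    · exact Or.inr ⟨v, by simp⟩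
    · exact Or.inl (star_set_of_finset G c' L hLne hc'L hadj hind)
  · -- cover
    intro v
    by_cases hv : v ∈ C
    · obtain ⟨A, hAQ, hvA⟩ := hQ5 v hv v (Or.inl rfl)
      exact ⟨↑A, Finset.mem_image.mpr ⟨A, Finset.mem_biUnion.mpr
        ⟨⟨v, hv⟩, Finset.mem_attach _ _, hAQ⟩, rfl⟩, hvA⟩
    · obtain ⟨hpF, hvp2⟩ := hown' v hv
      set p := own v with hpdef
      have hvJ : v ∈ J p := Finset.mem_filter.mpr ⟨hvp2, hv, rfl⟩
      have hp1C : p.1 ∈ C := Finset.mem_image.mpr ⟨p, hpF, rfl⟩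
      have hJL : J p ∈ Ls p.1 := Finset.mem_image.mpr
        ⟨p, Finset.mem_filter.mpr ⟨hpF, rfl⟩, rfl⟩
      obtain ⟨A, hAQ, hvA⟩ := hQ5 p.1 hp1C v (Or.inr ⟨J p, hJL, hvJ⟩)
      exact ⟨↑A, Finset.mem_image.mpr ⟨A, Finset.mem_biUnion.mpr
        ⟨⟨p.1, hp1C⟩, Finset.mem_attach _ _, hAQ⟩, rfl⟩, hvA⟩
  · -- disjoint
    intro S hS T hT hST v hvS hvT
    obtain ⟨A, hAQT, rfl⟩ := Finset.mem_image.mp hS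
    obtain ⟨B, hBQT, rfl⟩ := Finset.mem_image.mp hT
    have hAB : A ≠ B := fun h => hST (by rw [h])
    obtain ⟨c, _, hAQ⟩ := Finset.mem_biUnion.mp hAQT
    obtain ⟨c', _, hBQ⟩ := Finset.mem_biUnion.mp hBQT
    by_cases hcc : c.1 = c'.1
    · have hcc' : c = c' := Subtype.ext hcc
      subst hcc'
      exact hQ3 c.1 c.2 A hAQ B hBQ hAB v hvS hvT
    · exact hcross c.1 c.2 c'.1 c'.2 hcc A hAQ B hBQ v hvS hvT
  · -- cardinality
    have hc1 : P.card ≤ QT.card := Finset.card_image_le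
    have hc2 : QT.card ≤ ∑ c ∈ C.attach, (Q c.1 c.2).card := Finset.card_biUnion_le
    have hc3 : ∑ c ∈ C.attach, (Q c.1 c.2).card ≤
        ∑ c ∈ C.attach, (1 + (Ls c.1).card * (2 * myRam n n + 1)) :=
      Finset.sum_le_sum (fun c _ => hQ1 c.1 c.2)
    have hfib : ∑ c ∈ C, (F.filter (fun p => p.1 = c)).card = F.card := by
      rw [← Finset.card_eq_sum_card_fiberwise (f := Prod.fst) (s := F) (t := C)]
      intro p hp
      exact Finset.mem_image.mpr ⟨p, hp, rfl⟩
    have hLscard : ∀ c : V, (Ls c).card ≤ (F.filter (fun p => p.1 = c)).card :=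
      fun c => Finset.card_image_le
    have hc4 : ∑ c ∈ C.attach, (1 + (Ls c.1).card * (2 * myRam n n + 1)) ≤
        C.card + F.card * (2 * myRam n n + 1) := by
      rw [Finset.sum_add_distrib, Finset.sum_const, Finset.card_attach, smul_eq_mul, mul_one]
      refine Nat.add_le_add_left ?_ _
      calc ∑ c ∈ C.attach, (Ls c.1).card * (2 * myRam n n + 1)
          ≤ ∑ c ∈ C.attach, (F.filter (fun p => p.1 = c.1)).card * (2 * myRam n n + 1) :=
            Finset.sum_le_sum (fun c _ => Nat.mul_le_mul_right _ (hLscard c.1))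
        _ = (∑ c ∈ C.attach, (F.filter (fun p => p.1 = c.1)).card) * (2 * myRam n n + 1) := by
            rw [Finset.sum_mul]
        _ = (∑ c ∈ C, (F.filter (fun p => p.1 = c)).card) * (2 * myRam n n + 1) := by
            rw [← Finset.sum_attach C (fun c => (F.filter (fun p => p.1 = c)).card)]
        _ = F.card * (2 * myRam n n + 1) := by rw [hfib]
    have hCF : C.card ≤ F.card := Finset.card_image_le
    calc P.card ≤ C.card + F.card * (2 * myRam n n + 1) := by omega
      _ ≤ F.card + F.card * (2 * myRam n n + 1) := Nat.add_le_add_right hCF _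
      _ = F.card * (2 * myRam n n + 2) := by ring
  
theorem main_bound [Fintype V] {n : ℕ} (hn : 4 ≤ n) (G : SimpleGraph V) (hconn : G.Connected)
    (hKfree : ¬ HasInducedCopy G (completeGraph (Fin n)))
    (hSfree : ¬ HasInducedCopy G (SStar n))
    (hTfree : ¬ HasInducedCopy G (STilde n))
    (hPfree : ¬ HasInducedCopy G (pathGraph n)) :
    insp G ≤ covC n n * (2 * myRam n n + 2) := by
  obtain ⟨F, hF1, hF2, hF3⟩ := cover_univ G hconn hn hKfree hSfree hTfree hPfree
  calc insp G ≤ F.card * (2 * myRam n n + 2) :=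
        partition_from_cover G hKfree hSfree hTfree F hF2 hF3
    _ ≤ covC n n * (2 * myRam n n + 2) := Nat.mul_le_mul_right _ hF1

end Part12

section Part13pre

theorem copy_K1 {W : Type*} (X : SimpleGraph W) (w : W) :
    HasInducedCopy X (completeGraph (Fin 1)) := by
  refine ⟨⟨fun _ => w, fun a b _ => Subsingleton.elim a b⟩, ?_⟩
  intro a b
  have hab : a = b := Subsingleton.elim a b
  subst hab
  erw [Function.Embedding.coeFn_mk]
  constructor
  · intro h
    exact absurd h (X.loopless.irrefl w)
  · intro h
    exact absurd rfl h.ne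

end Part13pre


theorem statement_12 (N : ℕ) (k : Fin N → ℕ) (ℋ : ∀ i : Fin N, SimpleGraph (Fin (k i)))
    (hconn : ∀ i, (ℋ i).Connected) :
    (∃ c : ℕ, ∀ (V : Type) [Fintype V] (G : SimpleGraph V),
        G.Connected → (∀ i, ¬ HasInducedCopy G (ℋ i)) → insp G ≤ c) ↔
      ∃ n : ℕ, 4 ≤ n ∧
        (∃ i, HasInducedCopy (completeGraph (Fin n)) (ℋ i)) ∧
        (∃ i, HasInducedCopy (SStar n) (ℋ i)) ∧
        (∃ i, HasInducedCopy (STilde n) (ℋ i)) ∧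
        (∃ i, HasInducedCopy (pathGraph n) (ℋ i)) := by
  constructor
  · rintro ⟨c, hc⟩
    by_cases hc0 : c = 0
    · subst hc0
      have hK1 : ∃ i, HasInducedCopy (completeGraph (Fin 1)) (ℋ i) := by
        by_contra hno
        push_neg at hno
        have hb := hc (Fin 1) (completeGraph (Fin 1)) (complete_connected (by omega)) hno
        obtain ⟨P, hP, hPcard⟩ := exists_insp_partition (completeGraph (Fin 1))
        have := lb_complete P hP
        omega
      obtain ⟨i0, hi0⟩ := hK1
      refine ⟨4, le_refl 4, ⟨i0, hasInducedCopy_trans (copy_K1 _ 0) hi0⟩,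
        ⟨i0, hasInducedCopy_trans (copy_K1 _ (Sum.inl ())) hi0⟩,
        ⟨i0, hasInducedCopy_trans (copy_K1 _ (Sum.inl ())) hi0⟩,
        ⟨i0, hasInducedCopy_trans (copy_K1 _ 0) hi0⟩⟩
    · have hc1 : 1 ≤ c := by omega
      have hKclaim : ∃ i, HasInducedCopy (completeGraph (Fin (2 * c + 1))) (ℋ i) := by
        by_contra hno
        push_neg at hno
        have hb := hc (Fin (2 * c + 1)) (completeGraph (Fin (2 * c + 1)))
          (complete_connected (by omega)) hno
        obtain ⟨P, hP, hPcard⟩ := exists_insp_partition (completeGraph (Fin (2 * c + 1)))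
        have := lb_complete P hP
        omega
      have hPclaim : ∃ i, HasInducedCopy (pathGraph (3 * c + 1)) (ℋ i) := by
        by_contra hno
        push_neg at hno
        have hb := hc (Fin (3 * c + 1)) (pathGraph (3 * c + 1))
          (path_connected (by omega)) hno
        obtain ⟨P, hP, hPcard⟩ := exists_insp_partition (pathGraph (3 * c + 1))
        have := lb_path P hP
        omega
      have hSclaim : ∃ i, HasInducedCopy (SStar (c + 1)) (ℋ i) := by
        by_contra hno
        push_neg at hno
        have hb := hc (Unit ⊕ Fin (c + 1) ⊕ Fin (c + 1)) (SStar (c + 1))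
          (SStar_connected (c + 1)) hno
        obtain ⟨P, hP, hPcard⟩ := exists_insp_partition (SStar (c + 1))
        have := lb_SStar P hP
        omega
      have hTclaim : ∃ i, HasInducedCopy (STilde (2 * c)) (ℋ i) := by
        by_contra hno
        push_neg at hno
        have hb := hc (Unit ⊕ Fin (2 * c) ⊕ Fin (2 * c)) (STilde (2 * c))
          (STilde_connected (2 * c)) hno
        obtain ⟨P, hP, hPcard⟩ := exists_insp_partition (STilde (2 * c))
        have := lb_STilde (by omega) P hP
        omega
      obtain ⟨i1, hi1⟩ := hKclaim
      obtain ⟨i2, hi2⟩ := hSclaim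
      obtain ⟨i3, hi3⟩ := hTclaim
      obtain ⟨i4, hi4⟩ := hPclaim
      exact ⟨3 * c + 5, by omega,
        ⟨i1, hasInducedCopy_trans (lift_complete (by omega)) hi1⟩,
        ⟨i2, hasInducedCopy_trans (lift_SStar (by omega)) hi2⟩,
        ⟨i3, hasInducedCopy_trans (lift_STilde (by omega)) hi3⟩,
        ⟨i4, hasInducedCopy_trans (lift_path (by omega)) hi4⟩⟩
  · rintro ⟨n, hn4, ⟨i1, h1⟩, ⟨i2, h2⟩, ⟨i3, h3⟩, ⟨i4, h4⟩⟩
    refine ⟨covC n n * (2 * myRam n n + 2), ?_⟩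
    intro V _ G hGconn hfree
    refine main_bound hn4 G hGconn ?_ ?_ ?_ ?_
    · exact fun hcopy => hfree i1 (hasInducedCopy_trans hcopy h1)
    · exact fun hcopy => hfree i2 (hasInducedCopy_trans hcopy h2)
    · exact fun hcopy => hfree i3 (hasInducedCopy_trans hcopy h3)
    · exact fun hcopy => hfree i4 (hasInducedCopy_trans hcopy h4)
end
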